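/- arXiv:1201.3699 — 9 statements merged into one kernel-verified Lean document; each statement's English description precedes it below -/
import Mathlib

section
/- For every two integers n and k with 2 ≤ k ≤ n, the generalized k-edge-connectivity of the complete graph K_n equals n − ⌈k/2⌉. -/
open SimpleGraph

/-- An `S`-Steiner tree in `G`: a subgraph of `G` that is a tree whose
vertex set contains `S`. -/
def SimpleGraph.IsSteinerTree {V : Type*} (G : SimpleGraph V) (S : Set V)
    (T : G.Subgraph) : Prop :=
  S ⊆ T.verts ∧ T.coe.IsTree

/-- The generalized local edge-connectivity `λ(S)`: the maximum number of
pairwise edge-disjoint `S`-Steiner trees in `G`. -/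
noncomputable def SimpleGraph.steinerLambda {V : Type*} (G : SimpleGraph V)
    (S : Set V) : ℕ :=
  sSup {n | ∃ T : Fin n → G.Subgraph, (∀ i, G.IsSteinerTree S (T i)) ∧
    ∀ i j, i ≠ j → Disjoint (T i).edgeSet (T j).edgeSet}

/-- The generalized `k`-edge-connectivity `λ_k(G)`:
the minimum of `λ(S)` over all `k`-element vertex subsets `S`. -/
noncomputable def SimpleGraph.genEdgeConn {V : Type*} (G : SimpleGraph V)
    (k : ℕ) : ℕ :=
  sInf {m | ∃ S : Set V, S.ncard = k ∧ G.steinerLambda S = m}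


section Aux

section ParentTree
variable {W : Type*}

/-- A graph given by a parent map of height ≤ 2 toward a root is a tree. -/
lemma isTree_of_parent (G : SimpleGraph W) (r : W) (p : W → W)
    (hadj : ∀ x y, G.Adj x y ↔ ((x ≠ r ∧ y = p x) ∨ (y ≠ r ∧ x = p y)))
    (hpp : ∀ v, p (p v) = r) : G.IsTree := by
  have hne : ∀ v, v ≠ r → p v ≠ v := by
    intro v hv hpv
    apply hv
    have := hpp v
    rw [hpv, hpv] at this
    exact this
  constructor
  · -- connected
    have hur : ∀ u, G.Reachable u r := by
      intro u
      by_cases h : u = r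
      · exact h ▸ Reachable.refl u
      · have a1 : G.Adj u (p u) := (hadj u (p u)).2 (Or.inl ⟨h, rfl⟩)
        by_cases h2 : p u = r
        · exact ⟨Walk.cons (h2 ▸ a1) Walk.nil⟩
        · have a2 : G.Adj (p u) r := (hadj (p u) r).2 (Or.inl ⟨h2, (hpp u).symm⟩)
          exact ⟨Walk.cons a1 (Walk.cons a2 Walk.nil)⟩
    exact (connected_iff G).2 ⟨fun u v => (hur u).trans (hur v).symm, ⟨r⟩⟩
  · -- acyclic
    rw [isAcyclic_iff_forall_adj_isBridge]
    have key : ∀ (v : W), v ≠ r → ∀ (x y : W) (q : G.Walk x y),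
        (x = v ∨ p x = v) → ¬(y = v ∨ p y = v) → s(v, p v) ∈ q.edges := by
      intro v hv x y q
      induction q with
      | nil => intro hx hy; exact absurd hx hy
      | @cons a b c had q ih =>
        intro hx hy
        by_cases hb : b = v ∨ p b = v
        · exact List.mem_cons_of_mem _ (ih hb hy)
        · have : s(a, b) = s(v, p v) := by
            rcases hx with hx | hx
            · subst hx
              rcases (hadj a b).1 had with ⟨h1, h2⟩ | ⟨h1, h2⟩
              · rw [h2]
              · exact absurd (Or.inr h2.symm) hb
            · rcases (hadj a b).1 had with ⟨h1, h2⟩ | ⟨h1, h2⟩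
              · exact absurd (Or.inl (h2.trans hx)) hb
              · exfalso
                apply hv
                rw [← hx, h2, hpp b]
          rw [Walk.edges_cons, this]
          exact List.mem_cons_self
    intro v w hvw
    rw [isBridge_iff_adj_and_forall_walk_mem_edges]
    refine fun q => ?_
    rcases (hadj v w).1 hvw with ⟨hv, hw⟩ | ⟨hw, hv⟩
    · subst hw
      exact key v hv v (p v) q (Or.inl rfl)
        (by
          rintro (h | h)
          · exact hne v hv h
          · exact hv ((hpp v).symm.trans h).symm)
    · subst hv
      have := key w hw w (p w) q.reverse (Or.inl rfl)
        (by
          rintro (h | h)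
          · exact hne w hw h
          · exact hw ((hpp w).symm.trans h).symm)
      rw [Walk.edges_reverse, List.mem_reverse] at this
      rwa [Sym2.eq_swap]

end ParentTree


variable {n : ℕ}

/-- Subgraph of the complete graph defined by a parent map `p` on vertex set `Vs`. -/
def pSub (Vs : Set (Fin n)) (r : Fin n) (p : Fin n → Fin n) :
    (⊤ : SimpleGraph (Fin n)).Subgraph where
  verts := Vs
  Adj x y := x ∈ Vs ∧ y ∈ Vs ∧ x ≠ y ∧ ((x ≠ r ∧ y = p x) ∨ (y ≠ r ∧ x = p y))
  adj_sub := fun h => h.2.2.1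
  edge_vert := fun h => h.1
  symm := ⟨fun x y h => ⟨h.2.1, h.1, h.2.2.1.symm, h.2.2.2.symm⟩⟩

lemma pSub_adj {Vs : Set (Fin n)} {r : Fin n} {p : Fin n → Fin n} {x y : Fin n} :
    (pSub Vs r p).Adj x y ↔
      x ∈ Vs ∧ y ∈ Vs ∧ x ≠ y ∧ ((x ≠ r ∧ y = p x) ∨ (y ≠ r ∧ x = p y)) := Iff.rfl

lemma pSub_verts {Vs : Set (Fin n)} {r : Fin n} {p : Fin n → Fin n} :
    (pSub Vs r p).verts = Vs := rfl


lemma pSub_coe_isTree {Vs : Set (Fin n)} {r : Fin n} {p : Fin n → Fin n}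
    (hr : r ∈ Vs) (hcl : ∀ x ∈ Vs, p x ∈ Vs) (hpp : ∀ x ∈ Vs, p (p x) = r) :
    (pSub Vs r p).coe.IsTree := by
  have hne : ∀ x ∈ Vs, x ≠ r → p x ≠ x := by
    intro x hx hxr hpx
    apply hxr
    have := hpp x hx
    rw [hpx, hpx] at this
    exact this
  apply isTree_of_parent _ (⟨r, hr⟩ : (pSub Vs r p).verts)
    (fun x => ⟨p x.val, hcl _ x.2⟩)
  · rintro ⟨x, hx⟩ ⟨y, hy⟩
    rw [Subgraph.coe_adj]
    show (pSub Vs r p).Adj x y ↔ _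
    constructor
    · rintro ⟨-, -, hxy, (⟨h1, h2⟩ | ⟨h1, h2⟩)⟩
      · exact Or.inl ⟨fun hc => h1 (congrArg Subtype.val hc), Subtype.ext h2⟩
      · exact Or.inr ⟨fun hc => h1 (congrArg Subtype.val hc), Subtype.ext h2⟩
    · rintro (⟨h1, h2⟩ | ⟨h1, h2⟩)
      · have h1' : x ≠ r := fun hc => h1 (Subtype.ext hc)
        have h2' : y = p x := congrArg Subtype.val h2
        exact ⟨hx, hy, fun hc => hne x hx h1' (h2' ▸ hc ▸ rfl), Or.inl ⟨h1', h2'⟩⟩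
      · have h1' : y ≠ r := fun hc => h1 (Subtype.ext hc)
        have h2' : x = p y := congrArg Subtype.val h2
        exact ⟨hx, hy, fun hc => hne y hy h1' (h2' ▸ hc ▸ rfl), Or.inr ⟨h1', h2'⟩⟩
  · rintro ⟨x, hx⟩
    exact Subtype.ext (hpp x hx)


/-- Parent function on indices for the `i`-th double star. -/
def Pfn (i a : ℕ) : ℕ :=
  if a = 2*i+1 then 2*i+1
  else if a = 2*i then 2*i+1
  else if a < 2*i then (if a % 2 = 0 then 2*i else 2*i+1)
  else (if a % 2 = 0 then 2*i+1 else 2*i)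

lemma Pfn_mem (i a : ℕ) : Pfn i a = 2*i ∨ Pfn i a = 2*i+1 := by
  unfold Pfn; split_ifs <;> omega

lemma Pfn_lt {k i a : ℕ} (hi : 2*i+1 < k) : Pfn i a < k := by
  rcases Pfn_mem i a with h | h <;> omega

lemma Pfn_pp (i a : ℕ) : Pfn i (Pfn i a) = 2*i+1 := by
  rcases Pfn_mem i a with h | h <;> rw [h] <;> unfold Pfn <;> split_ifs <;> omega

lemma Pfn_disj {i j a b : ℕ} (hij : i ≠ j) (hab : a ≠ b)
    (h1 : (a ≠ 2*i+1 ∧ b = Pfn i a) ∨ (b ≠ 2*i+1 ∧ a = Pfn i b))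
    (h2 : (a ≠ 2*j+1 ∧ b = Pfn j a) ∨ (b ≠ 2*j+1 ∧ a = Pfn j b)) : False := by
  unfold Pfn at h1 h2
  rcases h1 with ⟨h1a, h1b⟩ | ⟨h1a, h1b⟩ <;> rcases h2 with ⟨h2a, h2b⟩ | ⟨h2a, h2b⟩ <;>
    split_ifs at h1b h2b <;> omega


lemma tree_firstEdge_inj {G : SimpleGraph W} (hG : G.IsTree) (r : W)
    {u v : W} (hu : u ≠ r) (hv : v ≠ r)
    (pu : G.Walk u r) (pv : G.Walk v r) (hpu : pu.IsPath) (hpv : pv.IsPath)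
    (he : s(u, pu.getVert 1) = s(v, pv.getVert 1)) : u = v := by
  by_contra huv
  obtain ⟨x, hxadj, q, hq⟩ := (Walk.not_nil_iff).1 (Walk.not_nil_of_ne (p := pu) hu)
  subst hq
  obtain ⟨y, hyadj, q', hq'⟩ := (Walk.not_nil_iff).1 (Walk.not_nil_of_ne (p := pv) hv)
  subst hq'
  rw [Walk.getVert_cons_succ, Walk.getVert_cons_succ, Walk.getVert_zero, Walk.getVert_zero] at he
  rw [Sym2.eq_iff] at he
  rcases he with ⟨h1, h2⟩ | ⟨h1, h2⟩
  · exact huv h1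
  · -- u = y, x = v : q : Walk v r, q' : Walk u r
    subst h1
    subst h2
    rw [Walk.cons_isPath_iff] at hpu
    have : q = Walk.cons hyadj q' := (hG.existsUnique_path _ r).unique hpu.1 hpv
    apply hpu.2
    rw [this, Walk.support_cons]
    exact List.mem_cons_of_mem _ (Walk.start_mem_support q')


lemma lower_mem (n k : ℕ) (h2 : 2 ≤ k) (hk : k ≤ n) (S : Set (Fin n)) (hS : S.ncard = k) :
    ∃ T : Fin ((n-k) + k/2) → (⊤ : SimpleGraph (Fin n)).Subgraph,
      (∀ i, (⊤ : SimpleGraph (Fin n)).IsSteinerTree S (T i)) ∧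
      ∀ i j, i ≠ j → Disjoint (T i).edgeSet (T j).edgeSet := by
  classical
  have hkpos : 0 < k := by omega
  have hnpos : 0 < n := by omega
  haveI : Fintype ↥S := Fintype.ofFinite _
  haveI : Fintype ↥(Sᶜ) := Fintype.ofFinite _
  have hcard : Fintype.card ↥S = k := by
    rw [← Nat.card_eq_fintype_card, Nat.card_coe_set_eq, hS]
  have hcardc : Fintype.card ↥(Sᶜ) = n - k := by
    have := Set.ncard_add_ncard_compl S (Set.toFinite S) (Set.toFinite Sᶜ)
    rw [hS, Nat.card_eq_fintype_card, Fintype.card_fin] at this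
    rw [← Nat.card_eq_fintype_card, Nat.card_coe_set_eq]
    omega
  obtain e1 := (Fintype.equivFinOfCardEq hcard).symm
  obtain e2 := (Fintype.equivFinOfCardEq hcardc).symm
  set f : ℕ → Fin n := fun a => ↑(e1 ⟨a % k, Nat.mod_lt _ hkpos⟩) with hf
  set g : ℕ → Fin n := fun b => if h : b < n - k then ↑(e2 ⟨b, h⟩) else ⟨0, hnpos⟩ with hg
  set ι : Fin n → ℕ := fun x => if h : x ∈ S then ↑(e1.symm ⟨x, h⟩) else 0 with hι
  have hfS : ∀ a, f a ∈ S := fun a => (e1 _).2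
  have hιlt : ∀ x, ι x < k := by
    intro x; simp only [hι]; split
    · exact (e1.symm _).isLt
    · exact hkpos
  have hfι : ∀ x ∈ S, f (ι x) = x := by
    intro x hx
    simp only [hι, hf, dif_pos hx]
    have : (⟨↑(e1.symm ⟨x, hx⟩) % k, Nat.mod_lt _ hkpos⟩ : Fin k) = e1.symm ⟨x, hx⟩ :=
      Fin.ext (Nat.mod_eq_of_lt (e1.symm ⟨x, hx⟩).isLt)
    rw [this, Equiv.apply_symm_apply]
  have hιf : ∀ a, a < k → ι (f a) = a := by
    intro a ha
    simp only [hι, hf, dif_pos (hfS a)]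
    have : (⟨↑(e1 ⟨a % k, Nat.mod_lt _ hkpos⟩), hfS a⟩ : ↥S) = e1 ⟨a % k, Nat.mod_lt _ hkpos⟩ :=
      Subtype.ext rfl
    rw [dif_pos (e1 ⟨a % k, Nat.mod_lt _ hkpos⟩).2]
    rw [this, Equiv.symm_apply_apply]
    simp [Nat.mod_eq_of_lt ha]
  have hgS : ∀ b, b < n - k → g b ∉ S := by
    intro b hb
    simp only [hg, dif_pos hb]
    exact (e2 ⟨b, hb⟩).2
  have hg_inj : ∀ b b', b < n - k → b' < n - k → g b = g b' → b = b' := by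
    intro b b' hb hb' hbb
    simp only [hg, dif_pos hb, dif_pos hb'] at hbb
    have := e2.injective (Subtype.coe_injective hbb)
    simpa using congrArg Fin.val this
  refine ⟨fun m => if (m : ℕ) < n - k
      then pSub (S ∪ {g (m : ℕ)}) (g (m : ℕ)) (fun _ => g (m : ℕ))
      else pSub S (f (2*((m:ℕ)-(n-k))+1)) (fun x => f (Pfn ((m:ℕ)-(n-k)) (ι x))), ?_, ?_⟩
  · intro m
    by_cases hm : (m : ℕ) < n - k
    · simp only [if_pos hm]
      constructor
      · intro x hx; exact Or.inl hx
      · exact pSub_coe_isTree (Or.inr rfl) (fun x _ => Or.inr rfl) (fun x _ => rfl)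
    · simp only [if_neg hm]
      have hi : (m:ℕ) - (n-k) < k/2 := by have := m.isLt; omega
      have h2i : 2*((m:ℕ)-(n-k))+1 < k := by omega
      constructor
      · exact fun x hx => hx
      · exact pSub_coe_isTree (hfS _) (fun x _ => hfS _)
          (fun x hx => by rw [hιf _ (Pfn_lt h2i), Pfn_pp])
  · intro m m' hmm
    have hvals : (m:ℕ) ≠ ((m':Fin _):ℕ) := fun h => hmm (Fin.ext h)
    rw [Set.disjoint_left]
    intro e he he'
    induction e using Sym2.ind with
    | _ x y =>
    -- helper to decode star adjacency
    have star_decode : ∀ (b : ℕ), b < n - k →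
        (pSub (S ∪ {g b}) (g b) (fun _ => g b)).Adj x y →
        (x = g b ∧ y ∈ S) ∨ (y = g b ∧ x ∈ S) := by
      intro b hb ⟨hx1, hy1, hxy, hor⟩
      rcases hor with ⟨ha, hbb⟩ | ⟨ha, hbb⟩
      · right
        refine ⟨hbb, ?_⟩
        rcases hx1 with h | h
        · exact h
        · exact absurd (Set.mem_singleton_iff.1 h) ha
      · left
        refine ⟨hbb, ?_⟩
        rcases hy1 with h | h
        · exact h
        · exact absurd (Set.mem_singleton_iff.1 h) ha
    have dstar_decode : ∀ (i : ℕ), 2*i+1 < k →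
        (pSub S (f (2*i+1)) (fun z => f (Pfn i (ι z)))).Adj x y →
        x ∈ S ∧ y ∈ S ∧ ι x ≠ ι y ∧
          ((ι x ≠ 2*i+1 ∧ ι y = Pfn i (ι x)) ∨ (ι y ≠ 2*i+1 ∧ ι x = Pfn i (ι y))) := by
      intro i hi ⟨hx1, hy1, hxy, hor⟩
      refine ⟨hx1, hy1, fun h => hxy ?_, ?_⟩
      · rw [← hfι x hx1, ← hfι y hy1, h]
      · rcases hor with ⟨ha, hbb⟩ | ⟨ha, hbb⟩
        · left
          refine ⟨fun h => ha ?_, ?_⟩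
          · rw [← hfι x hx1, h]
          · rw [hbb, hιf _ (Pfn_lt hi)]
        · right
          refine ⟨fun h => ha ?_, ?_⟩
          · rw [← hfι y hy1, h]
          · rw [hbb, hιf _ (Pfn_lt hi)]
    rw [Subgraph.mem_edgeSet] at he he'
    by_cases hm : (m:ℕ) < n - k <;> by_cases hm' : ((m':Fin _):ℕ) < n - k
    · simp only [if_pos hm] at he; simp only [if_pos hm'] at he'
      rcases star_decode _ hm he with ⟨h1, h2⟩ | ⟨h1, h2⟩ <;>
        rcases star_decode _ hm' he' with ⟨h3, h4⟩ | ⟨h3, h4⟩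
      · exact hvals (hg_inj _ _ hm hm' (h1.symm.trans h3))
      · exact hgS _ hm (h1 ▸ h4)
      · exact hgS _ hm (h1 ▸ h4)
      · exact hvals (hg_inj _ _ hm hm' (h1.symm.trans h3))
    · simp only [if_pos hm] at he; simp only [if_neg hm'] at he'
      have h2i : 2*(((m':Fin _):ℕ)-(n-k))+1 < k := by have := (m' : Fin _).isLt; omega
      obtain ⟨hxS, hyS, -, -⟩ := dstar_decode _ h2i he'
      rcases star_decode _ hm he with ⟨h1, h2⟩ | ⟨h1, h2⟩
      · exact hgS _ hm (h1 ▸ hxS)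
      · exact hgS _ hm (h1 ▸ hyS)
    · simp only [if_neg hm] at he; simp only [if_pos hm'] at he'
      have h2i : 2*((m:ℕ)-(n-k))+1 < k := by have := m.isLt; omega
      obtain ⟨hxS, hyS, -, -⟩ := dstar_decode _ h2i he
      rcases star_decode _ hm' he' with ⟨h1, h2⟩ | ⟨h1, h2⟩
      · exact hgS _ hm' (h1 ▸ hxS)
      · exact hgS _ hm' (h1 ▸ hyS)
    · simp only [if_neg hm] at he; simp only [if_neg hm'] at he'
      have h2i : 2*((m:ℕ)-(n-k))+1 < k := by have := m.isLt; omega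
      have h2i' : 2*(((m':Fin _):ℕ)-(n-k))+1 < k := by have := (m' : Fin _).isLt; omega
      obtain ⟨-, -, hab, hcond⟩ := dstar_decode _ h2i he
      obtain ⟨-, -, -, hcond'⟩ := dstar_decode _ h2i' he'
      exact Pfn_disj (i := (m:ℕ)-(n-k)) (j := ((m':Fin _):ℕ)-(n-k))
        (by omega) hab hcond hcond'


lemma subgraph_tree_card (T : (⊤ : SimpleGraph (Fin n)).Subgraph)
    (ht : T.coe.IsTree) : T.edgeSet.ncard + 1 = T.verts.ncard := by
  classical
  haveI : Fintype ↥T.verts := Fintype.ofFinite _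
  haveI : Fintype ↥(T.coe.edgeSet) := Fintype.ofFinite _
  have h1 := ht.card_edgeFinset
  have h2 : T.coe.edgeFinset.card = T.coe.edgeSet.ncard :=
    (Set.ncard_eq_toFinset_card' _).symm
  have h3 : T.coe.edgeSet.ncard = T.edgeSet.ncard := by
    rw [← Subgraph.image_coe_edgeSet_coe,
      Set.ncard_image_of_injective _ (Sym2.map.injective Subtype.coe_injective)]
  have h4 : Fintype.card ↥T.verts = T.verts.ncard := by
    rw [← Nat.card_eq_fintype_card, Nat.card_coe_set_eq]
  omega


lemma subgraph_incident_ge (S : Set (Fin n)) (T : (⊤ : SimpleGraph (Fin n)).Subgraph)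
    (ht : T.coe.IsTree) (hsub : S ⊆ T.verts) {w : Fin n} (hw : w ∈ T.verts) (hwS : w ∉ S) :
    S.ncard ≤ {e | e ∈ T.edgeSet ∧ ∃ v ∈ e, v ∈ S}.ncard := by
  classical
  set r : ↥T.verts := ⟨w, hw⟩ with hr
  choose pth hpth using fun u : ↥T.verts => (ht.existsUnique_path u r).exists
  set SV : Set ↥T.verts := {u | u.val ∈ S} with hSV
  have hS_eq : S = Subtype.val '' SV := by
    ext x
    constructor
    · intro hx; exact ⟨⟨x, hsub hx⟩, hx, rfl⟩
    · rintro ⟨u, hu, rfl⟩; exact hu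
  have hcard : S.ncard = SV.ncard := by
    rw [hS_eq, Set.ncard_image_of_injective _ Subtype.coe_injective]
  rw [hcard]
  have hner : ∀ u ∈ SV, u ≠ r := by
    rintro u hu rfl; exact hwS hu
  refine Set.ncard_le_ncard_of_injOn
    (fun u => s(u.val, ((pth u).getVert 1).val)) ?_ ?_ (Set.toFinite _)
  · intro u hu
    have hadj : T.coe.Adj u ((pth u).getVert 1) :=
      Walk.adj_snd (Walk.not_nil_of_ne (p := pth u) (hner u hu))
    rw [Subgraph.coe_adj] at hadj
    exact ⟨Subgraph.mem_edgeSet.2 hadj, u.val, Sym2.mem_mk_left _ _, hu⟩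
  · intro u hu u' hu' heq
    have : Sym2.map Subtype.val s(u, (pth u).getVert 1)
        = Sym2.map Subtype.val s(u', (pth u').getVert 1) := by
      simpa using heq
    have := Sym2.map.injective Subtype.coe_injective this
    exact tree_firstEdge_inj ht r (hner u hu) (hner u' hu')
      (pth u) (pth u') (hpth u) (hpth u') this


lemma ES_card (S : Set (Fin n)) :
    {e : Sym2 (Fin n) | ¬e.IsDiag ∧ ∀ v ∈ e, v ∈ S}.ncard ≤ S.ncard.choose 2 := by
  classical
  set t : Finset (Sym2 (Fin n)) := S.toFinset.offDiag.image Sym2.mk.uncurry with ht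
  have hsub : {e : Sym2 (Fin n) | ¬e.IsDiag ∧ ∀ v ∈ e, v ∈ S} ⊆ ↑t := by
    intro e
    induction e using Sym2.ind with
    | _ x y =>
      rintro ⟨hd, hall⟩
      rw [Sym2.mk_isDiag_iff] at hd
      refine Finset.mem_coe.2 (Finset.mem_image.2 ⟨(x, y), ?_, rfl⟩)
      exact Finset.mem_offDiag.2 ⟨Set.mem_toFinset.2 (hall x (Sym2.mem_mk_left _ _)),
        Set.mem_toFinset.2 (hall y (Sym2.mem_mk_right _ _)), hd⟩
  calc {e : Sym2 (Fin n) | ¬e.IsDiag ∧ ∀ v ∈ e, v ∈ S}.ncard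
      ≤ (↑t : Set (Sym2 (Fin n))).ncard := Set.ncard_le_ncard hsub (Set.toFinite _)
    _ = t.card := Set.ncard_coe_finset t
    _ = S.toFinset.card.choose 2 := Sym2.card_image_offDiag _
    _ = S.ncard.choose 2 := by rw [← Set.ncard_eq_toFinset_card']

lemma DS_card (S : Set (Fin n)) :
    {e : Sym2 (Fin n) | ¬e.IsDiag ∧ ∃ v ∈ e, v ∈ S}.ncard ≤
      S.ncard.choose 2 + S.ncard * (n - S.ncard) := by
  classical
  set CR : Finset (Sym2 (Fin n)) :=
    (S.toFinset ×ˢ Sᶜ.toFinset).image (fun p => s(p.1, p.2)) with hCR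
  have hsub : {e : Sym2 (Fin n) | ¬e.IsDiag ∧ ∃ v ∈ e, v ∈ S} ⊆
      {e : Sym2 (Fin n) | ¬e.IsDiag ∧ ∀ v ∈ e, v ∈ S} ∪ ↑CR := by
    intro e
    induction e using Sym2.ind with
    | _ x y =>
      rintro ⟨hd, hex⟩
      by_cases hall : ∀ v ∈ s(x, y), v ∈ S
      · exact Or.inl ⟨hd, hall⟩
      · right
        rw [Sym2.mk_isDiag_iff] at hd
        obtain ⟨v, hv, hvS⟩ := hex
        push_neg at hall
        obtain ⟨u, hu, huS⟩ := hall
        rw [Sym2.mem_iff] at hv hu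
        have hxy : (x ∈ S ∧ y ∉ S) ∨ (y ∈ S ∧ x ∉ S) := by
          rcases hv with rfl | rfl <;> rcases hu with rfl | rfl <;> tauto
        rcases hxy with ⟨hx1, hy1⟩ | ⟨hy1, hx1⟩
        · exact Finset.mem_coe.2 (Finset.mem_image.2 ⟨(x, y),
            Finset.mem_product.2 ⟨Set.mem_toFinset.2 hx1, Set.mem_toFinset.2 hy1⟩, rfl⟩)
        · refine Finset.mem_coe.2 (Finset.mem_image.2 ⟨(y, x),
            Finset.mem_product.2 ⟨Set.mem_toFinset.2 hy1, Set.mem_toFinset.2 hx1⟩, ?_⟩)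
          exact Sym2.eq_swap
  have hCRcard : CR.card ≤ S.ncard * (n - S.ncard) := by
    calc CR.card ≤ (S.toFinset ×ˢ Sᶜ.toFinset).card := Finset.card_image_le
      _ = S.toFinset.card * Sᶜ.toFinset.card := Finset.card_product _ _
      _ = S.ncard * Sᶜ.ncard := by rw [← Set.ncard_eq_toFinset_card', ← Set.ncard_eq_toFinset_card']
      _ = S.ncard * (n - S.ncard) := by
          have := Set.ncard_add_ncard_compl S (Set.toFinite S) (Set.toFinite Sᶜ)
          rw [Nat.card_eq_fintype_card, Fintype.card_fin] at this
          congr 1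
          omega
  calc {e : Sym2 (Fin n) | ¬e.IsDiag ∧ ∃ v ∈ e, v ∈ S}.ncard
      ≤ ({e : Sym2 (Fin n) | ¬e.IsDiag ∧ ∀ v ∈ e, v ∈ S} ∪ ↑CR).ncard :=
        Set.ncard_le_ncard hsub (Set.Finite.union (Set.toFinite _) (Set.toFinite _))
    _ ≤ {e : Sym2 (Fin n) | ¬e.IsDiag ∧ ∀ v ∈ e, v ∈ S}.ncard + (↑CR : Set (Sym2 (Fin n))).ncard :=
        Set.ncard_union_le _ _
    _ ≤ S.ncard.choose 2 + S.ncard * (n - S.ncard) := by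
        have h1 := ES_card S
        have h2 : (↑CR : Set (Sym2 (Fin n))).ncard = CR.card := Set.ncard_coe_finset CR
        omega


lemma final_arith (n k t p : ℕ) (h2 : 2 ≤ k) (hk : k ≤ n) (hpt : p ≤ t)
    (h1 : p * (k-1) ≤ k.choose 2)
    (h3 : p * (k-1) + (t-p) * k ≤ k.choose 2 + k * (n-k)) :
    t ≤ n - (k+1)/2 := by
  rw [Nat.choose_two_right] at h1 h3
  obtain ⟨m, hm | hm⟩ := Nat.even_or_odd' k
  · -- k = 2m
    subst hm
    have hm1 : 1 ≤ m := by omega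
    have hch : 2*m*(2*m-1)/2 = m*(2*m-1) := by
      have : 2*m*(2*m-1) = 2*(m*(2*m-1)) := by ring
      rw [this, Nat.mul_div_cancel_left _ (by norm_num)]
    rw [hch] at h1 h3
    have hk1 : 2*m - 1 = 2*m-1 := rfl
    have hp : p ≤ m := Nat.le_of_mul_le_mul_right h1 (by omega)
    have e1 : (t-p)*(2*m) + p*(2*m) = t*(2*m) := by
      rw [← Nat.add_mul]; congr 1; omega
    have e2 : p*(2*m-1) + p = p*(2*m) := by
      rw [← Nat.mul_succ]; congr 1; omega
    have e3 : m*(2*m-1) + m = m*(2*m) := by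
      rw [← Nat.mul_succ]; congr 1; omega
    have h4 : t*(2*m) ≤ (m + (n-2*m))*(2*m) := by
      calc t*(2*m) = p*(2*m-1) + p + (t-p)*(2*m) := by omega
        _ ≤ m*(2*m-1) + m + 2*m*(n-2*m) := by omega
        _ = m*(2*m) + 2*m*(n-2*m) := by omega
        _ = (m + (n-2*m))*(2*m) := by ring
    have := Nat.le_of_mul_le_mul_right h4 (by omega : 0 < 2*m)
    omega
  · -- k = 2m+1
    subst hm
    have hm1 : 1 ≤ m := by omega
    have hch : (2*m+1)*(2*m+1-1)/2 = (2*m+1)*m := by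
      have h' : 2*m+1-1 = 2*m := by omega
      rw [h']
      have : (2*m+1)*(2*m) = 2*((2*m+1)*m) := by ring
      rw [this, Nat.mul_div_cancel_left _ (by norm_num)]
    rw [hch] at h1 h3
    have hk1 : 2*m+1-1 = 2*m := by omega
    rw [hk1] at h1 h3
    have hp : p ≤ m := by
      by_contra hc
      have : (m+1)*(2*m) ≤ p*(2*m) := Nat.mul_le_mul_right _ (by omega)
      nlinarith
    have h4 : t*(2*m+1) < (m + (n-(2*m+1)) + 1)*(2*m+1) := by
      calc t*(2*m+1) = p*(2*m) + p + (t-p)*(2*m+1) := by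
            have : p*(2*m) + p = p*(2*m+1) := by ring
            have e1 : (t-p)*(2*m+1) + p*(2*m+1) = t*(2*m+1) := by
              rw [← Nat.add_mul]; congr 1; omega
            omega
        _ ≤ (2*m+1)*m + m + (2*m+1)*(n-(2*m+1)) := by omega
        _ < (m + (n-(2*m+1)) + 1)*(2*m+1) := by nlinarith
    have := Nat.lt_of_mul_lt_mul_right h4
    omega


lemma count_le (n k t : ℕ) (h2 : 2 ≤ k) (hk : k ≤ n) (S : Set (Fin n)) (hS : S.ncard = k)
    (T : Fin t → (⊤ : SimpleGraph (Fin n)).Subgraph)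
    (hT : ∀ i, (⊤ : SimpleGraph (Fin n)).IsSteinerTree S (T i))
    (hdisj : ∀ i j, i ≠ j → Disjoint (T i).edgeSet (T j).edgeSet) :
    t ≤ n - (k+1)/2 := by
  classical
  have hnd : ∀ i : Fin t, ∀ e ∈ (T i).edgeSet, ¬e.IsDiag := by
    intro i e
    induction e using Sym2.ind with
    | _ x y =>
      intro he
      rw [Subgraph.mem_edgeSet] at he
      have := (T i).adj_sub he
      rw [top_adj] at this
      rw [Sym2.mk_isDiag_iff]
      exact this
  set E : Fin t → Finset (Sym2 (Fin n)) := fun i => (T i).edgeSet.toFinite.toFinset with hE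
  set A : Fin t → Finset (Sym2 (Fin n)) := fun i =>
    (E i).filter (fun e => ∀ v ∈ e, v ∈ S) with hA
  set D : Fin t → Finset (Sym2 (Fin n)) := fun i =>
    (E i).filter (fun e => ∃ v ∈ e, v ∈ S) with hD
  set P : Finset (Fin t) := Finset.univ.filter (fun i => (T i).verts ⊆ S) with hP
  have hEdisj : ∀ i j : Fin t, i ≠ j → Disjoint (E i) (E j) := by
    intro i j hij
    rw [Finset.disjoint_left]
    intro e he he'
    rw [hE, Set.Finite.mem_toFinset] at he he'
    exact Set.disjoint_left.1 (hdisj i j hij) he he'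
  -- for i ∈ P : A i = E i and card = k - 1
  have hAP : ∀ i ∈ P, (A i).card = k - 1 := by
    intro i hi
    rw [hP, Finset.mem_filter] at hi
    have hveq : (T i).verts = S := Set.Subset.antisymm hi.2 (hT i).1
    have hcard := subgraph_tree_card (T i) (hT i).2
    rw [hveq, hS] at hcard
    have hfull : A i = E i := by
      rw [hA]
      apply Finset.filter_true_of_mem
      intro e he
      rw [hE, Set.Finite.mem_toFinset] at he
      intro v hv
      rw [← hveq]
      exact Subgraph.mem_verts_of_mem_edge he hv
    rw [hfull, hE]
    rw [← Set.ncard_eq_toFinset_card _ ((T i).edgeSet.toFinite)]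
    omega
  have hEcard : ∀ i : Fin t, (E i).card = (T i).edgeSet.ncard := by
    intro i
    rw [hE, ← Set.ncard_eq_toFinset_card _ ((T i).edgeSet.toFinite)]
  -- D i contains A i
  have hADsub : ∀ i : Fin t, A i ⊆ D i := by
    intro i e
    induction e using Sym2.ind with
    | _ x y =>
      intro he
      rw [hA, Finset.mem_filter] at he
      rw [hD, Finset.mem_filter]
      exact ⟨he.1, x, Sym2.mem_mk_left _ _, he.2 x (Sym2.mem_mk_left _ _)⟩
  -- for i ∉ P : k ≤ card (D i)
  have hDP : ∀ i ∈ Finset.univ \ P, k ≤ (D i).card := by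
    intro i hi
    rw [Finset.mem_sdiff, hP, Finset.mem_filter] at hi
    have : ¬(T i).verts ⊆ S := fun h => hi.2 ⟨Finset.mem_univ _, h⟩
    rw [Set.not_subset] at this
    obtain ⟨w, hw, hwS⟩ := this
    have hle := subgraph_incident_ge S (T i) (hT i).2 (hT i).1 hw hwS
    rw [hS] at hle
    have hseq : {e | e ∈ (T i).edgeSet ∧ ∃ v ∈ e, v ∈ S} = ↑(D i) := by
      rw [hD, hE]
      ext e
      simp only [Set.mem_setOf_eq, Finset.coe_filter, Set.Finite.mem_toFinset]
    rw [hseq, Set.ncard_coe_finset] at hle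
    exact hle
  -- sum bounds
  have hsum1 : P.card * (k-1) ≤ ∑ i ∈ P, (A i).card := by
    rw [← smul_eq_mul]
    apply Finset.card_nsmul_le_sum
    intro i hi
    rw [hAP i hi]
  have hsumA : ∑ i ∈ P, (A i).card ≤ k.choose 2 := by
    have hbi : (P.biUnion A).card = ∑ i ∈ P, (A i).card := by
      apply Finset.card_biUnion
      intro i hi j hj hij
      exact Finset.disjoint_filter_filter (hEdisj i j hij)
    rw [← hbi]
    have hsub : P.biUnion A ⊆ ({e : Sym2 (Fin n) | ¬e.IsDiag ∧ ∀ v ∈ e, v ∈ S}).toFinite.toFinset := by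
      intro e he
      rw [Finset.mem_biUnion] at he
      obtain ⟨i, hi, hei⟩ := he
      rw [hA, Finset.mem_filter, hE, Set.Finite.mem_toFinset] at hei
      rw [Set.Finite.mem_toFinset]
      exact ⟨hnd i e hei.1, hei.2⟩
    calc (P.biUnion A).card ≤ _ := Finset.card_le_card hsub
      _ = {e : Sym2 (Fin n) | ¬e.IsDiag ∧ ∀ v ∈ e, v ∈ S}.ncard :=
          (Set.ncard_eq_toFinset_card _ _).symm
      _ ≤ S.ncard.choose 2 := ES_card S
      _ = k.choose 2 := by rw [hS]
  have hsumD : ∑ i ∈ Finset.univ, (D i).card ≤ k.choose 2 + k * (n-k) := by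
    have hbi : ((Finset.univ : Finset (Fin t)).biUnion D).card = ∑ i ∈ Finset.univ, (D i).card := by
      apply Finset.card_biUnion
      intro i hi j hj hij
      exact Finset.disjoint_filter_filter (hEdisj i j hij)
    rw [← hbi]
    have hsub : (Finset.univ : Finset (Fin t)).biUnion D ⊆
        ({e : Sym2 (Fin n) | ¬e.IsDiag ∧ ∃ v ∈ e, v ∈ S}).toFinite.toFinset := by
      intro e he
      rw [Finset.mem_biUnion] at he
      obtain ⟨i, hi, hei⟩ := he
      rw [hD, Finset.mem_filter, hE, Set.Finite.mem_toFinset] at hei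
      rw [Set.Finite.mem_toFinset]
      exact ⟨hnd i e hei.1, hei.2⟩
    calc ((Finset.univ : Finset (Fin t)).biUnion D).card ≤ _ := Finset.card_le_card hsub
      _ = {e : Sym2 (Fin n) | ¬e.IsDiag ∧ ∃ v ∈ e, v ∈ S}.ncard :=
          (Set.ncard_eq_toFinset_card _ _).symm
      _ ≤ S.ncard.choose 2 + S.ncard * (n - S.ncard) := DS_card S
      _ = k.choose 2 + k * (n-k) := by rw [hS]
  have hsplit : ∑ i ∈ P, (D i).card + ∑ i ∈ Finset.univ \ P, (D i).card
      = ∑ i ∈ Finset.univ, (D i).card := by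
    rw [add_comm]
    exact Finset.sum_sdiff (Finset.subset_univ P)
  have hlow1 : P.card * (k-1) ≤ ∑ i ∈ P, (D i).card := by
    refine hsum1.trans (Finset.sum_le_sum ?_)
    intro i hi
    exact Finset.card_le_card (hADsub i)
  have hlow2 : (t - P.card) * k ≤ ∑ i ∈ Finset.univ \ P, (D i).card := by
    have hcards : (Finset.univ \ P).card = t - P.card := by
      rw [Finset.card_sdiff_of_subset (Finset.subset_univ P), Finset.card_univ, Fintype.card_fin]
    rw [← hcards, ← smul_eq_mul]
    exact Finset.card_nsmul_le_sum _ _ _ hDP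
  have hpt : P.card ≤ t := by
    calc P.card ≤ Finset.univ.card := Finset.card_le_card (Finset.subset_univ P)
      _ = t := by rw [Finset.card_univ, Fintype.card_fin]
  apply final_arith n k t P.card h2 hk hpt
  · calc P.card * (k-1) ≤ ∑ i ∈ P, (A i).card := hsum1
      _ ≤ k.choose 2 := hsumA
  · calc P.card * (k-1) + (t - P.card) * k
        ≤ ∑ i ∈ P, (D i).card + ∑ i ∈ Finset.univ \ P, (D i).card := by
          exact Nat.add_le_add hlow1 hlow2
      _ = ∑ i ∈ Finset.univ, (D i).card := hsplit
      _ ≤ k.choose 2 + k * (n-k) := hsumD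


lemma lambda_bdd (S : Set (Fin n)) (hS : 2 ≤ S.ncard) :
    ∀ t ∈ {t | ∃ T : Fin t → (⊤ : SimpleGraph (Fin n)).Subgraph,
      (∀ i, (⊤ : SimpleGraph (Fin n)).IsSteinerTree S (T i)) ∧
      ∀ i j, i ≠ j → Disjoint (T i).edgeSet (T j).edgeSet},
      t ≤ Fintype.card (Sym2 (Fin n)) := by
  classical
  rintro t ⟨T, hT, hdisj⟩
  obtain ⟨s1, hs1, s2, hs2, hne⟩ := (Set.one_lt_ncard (Set.toFinite S)).1 hS
  have hedge : ∀ i : Fin t, ∃ e, e ∈ (T i).edgeSet := by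
    intro i
    obtain ⟨hsub, htree⟩ := hT i
    set r1 : ↥(T i).verts := ⟨s1, hsub hs1⟩
    set r2 : ↥(T i).verts := ⟨s2, hsub hs2⟩
    have hr : r1 ≠ r2 := fun h => hne (congrArg Subtype.val h)
    obtain ⟨w⟩ := htree.isConnected.preconnected r1 r2
    obtain ⟨x, hadj, q, -⟩ := Walk.not_nil_iff.1 (Walk.not_nil_of_ne (p := w) hr)
    rw [Subgraph.coe_adj] at hadj
    exact ⟨s(r1.val, x.val), Subgraph.mem_edgeSet.2 hadj⟩
  choose F hF using hedge
  have Finj : Function.Injective F := by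
    intro i j hij
    by_contra hc
    exact Set.disjoint_left.1 (hdisj i j hc) (hF i) (hij ▸ hF j)
  calc t = Fintype.card (Fin t) := (Fintype.card_fin t).symm
    _ ≤ Fintype.card (Sym2 (Fin n)) := Fintype.card_le_of_injective F Finj


end Aux

theorem lambda_k_complete (n k : ℕ) (h2 : 2 ≤ k) (hk : k ≤ n) :
    (⊤ : SimpleGraph (Fin n)).genEdgeConn k = n - (k + 1) / 2 := by
  classical
  have hall : ∀ S : Set (Fin n), S.ncard = k →
      (⊤ : SimpleGraph (Fin n)).steinerLambda S = n - (k + 1) / 2 := by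
    intro S hS
    have hS2 : 2 ≤ S.ncard := by omega
    apply le_antisymm
    · apply csSup_le
      · exact ⟨0, Fin.elim0, fun i => i.elim0, fun i => i.elim0⟩
      · rintro t ⟨T, hT, hdisj⟩
        exact count_le n k t h2 hk S hS T hT hdisj
    · have heq : n - (k + 1) / 2 = (n - k) + k / 2 := by omega
      rw [SimpleGraph.steinerLambda, heq]
      exact le_csSup ⟨Fintype.card (Sym2 (Fin n)), fun t ht => lambda_bdd S hS2 t ht⟩
        (lower_mem n k h2 hk S hS)
  have hex : ∃ S : Set (Fin n), S.ncard = k := by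
    refine ⟨Set.range (Fin.castLE hk), ?_⟩
    rw [← Set.image_univ, Set.ncard_image_of_injective _ (Fin.castLE_injective hk),
      Set.ncard_univ, Nat.card_eq_fintype_card, Fintype.card_fin]
  have hseteq : {m | ∃ S : Set (Fin n), S.ncard = k ∧
      (⊤ : SimpleGraph (Fin n)).steinerLambda S = m} = {n - (k + 1) / 2} := by
    ext m
    constructor
    · rintro ⟨S, h1, h2'⟩
      rw [← h2', hall S h1]
      rfl
    · rintro rfl
      obtain ⟨S, hSk⟩ := hex
      exact ⟨S, hSk, hall S hSk⟩
  rw [SimpleGraph.genEdgeConn, hseteq, csInf_singleton]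
end

section
/- For any connected graph G and any integer k with 2 ≤ k ≤ |V(G)|, λ_k(G) ≤ δ(G), where δ(G) is the minimum degree of G. -/
open SimpleGraph

theorem lambda_k_le_minDegree {V : Type*} [Fintype V] (G : SimpleGraph V)
    [DecidableRel G.Adj] (hG : G.Connected) (k : ℕ) (h2 : 2 ≤ k)
    (hk : k ≤ Fintype.card V) :
    G.genEdgeConn k ≤ G.minDegree := by
  have hne : Nonempty V := Fintype.card_pos_iff.mp (by omega)
  obtain ⟨v, hv⟩ := G.exists_minimal_degree_vertex
  -- find S of size k containing v
  have hvcard : ({v} : Set V).ncard = 1 := Set.ncard_singleton v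
  obtain ⟨S, hvS, -, hScard⟩ := Set.exists_subsuperset_card_eq (n := k)
      (Set.subset_univ {v}) (by rw [hvcard]; omega)
      (by rw [Set.ncard_univ, Nat.card_eq_fintype_card]; exact hk)
  have hvmem : v ∈ S := hvS rfl
  have hle : G.genEdgeConn k ≤ G.steinerLambda S :=
    Nat.sInf_le ⟨S, hScard, rfl⟩
  refine hle.trans ?_
  rw [hv]
  -- pick u ∈ S, u ≠ v
  obtain ⟨u, huS, huv⟩ := Set.exists_ne_of_one_lt_ncard (s := S) (by omega) v
  refine csSup_le' ?_
  rintro n ⟨T, hT, hdisj⟩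
  have key : ∀ i : Fin n, ∃ w : V, (T i).Adj v w := by
    intro i
    obtain ⟨hS, htree⟩ := hT i
    have hvv : v ∈ (T i).verts := hS hvmem
    have huu : u ∈ (T i).verts := hS huS
    obtain ⟨p⟩ := htree.isConnected.preconnected ⟨v, hvv⟩ ⟨u, huu⟩
    have hpn : ¬ p.Nil := SimpleGraph.Walk.not_nil_of_ne
      (by simp [Subtype.ext_iff, Ne.symm huv, huv])
    have hadj := p.adj_snd hpn
    exact ⟨((p.getVert 1 : (T i).verts) : V), hadj⟩
  choose w hw using key
  have hwinj : Function.Injective w := by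
    intro i j hij
    by_contra hne'
    have h1 : s(v, w i) ∈ (T i).edgeSet := hw i
    have h2 : s(v, w i) ∈ (T j).edgeSet := by rw [hij]; exact hw j
    exact (Set.disjoint_left.mp (hdisj i j hne') h1) h2
  have : Function.Injective (fun i : Fin n => (⟨w i, (T i).adj_sub (hw i)⟩ :
      G.neighborSet v)) := by
    intro i j hij
    exact hwinj (by simpa [Subtype.ext_iff] using hij)
  have hcn := Fintype.card_le_of_injective _ this
  have hcard : Fintype.card (G.neighborSet v) = G.degree v :=
    G.card_neighborSet_eq_degree v
  have : Fintype.card (Fin n) ≤ Fintype.card (G.neighborSet v) := by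
    convert hcn using 2
  simpa [hcard] using this
end

section
/- Let G be a connected graph of order n and k an integer with 2 ≤ k ≤ n. Then 1 ≤ λ_k(G) ≤ n − ⌈k/2⌉. -/
open SimpleGraph

/-- Every finite connected graph contains a spanning tree (auxiliary induction). -/
lemma exists_spanning_tree_aux {V : Type*} [Fintype V] :
    ∀ (m : ℕ) (G : SimpleGraph V), G.edgeSet.ncard ≤ m → G.Connected → ∃ H ≤ G, H.IsTree := by
  intro m
  induction m with
  | zero =>
    intro G hm hc
    refine ⟨G, le_rfl, hc, ?_⟩
    intro v c hcyc
    have hnil : ¬c.Nil := hcyc.not_nil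
    have : s(v, c.getVert 1) ∈ G.edgeSet := (G.mem_edgeSet).mpr (c.adj_snd hnil)
    have hemp : G.edgeSet = ∅ := by
      have := Set.ncard_eq_zero (Set.toFinite G.edgeSet) |>.mp (Nat.le_zero.mp hm)
      exact this
    simp [hemp] at this
  | succ m ih =>
    intro G hm hc
    by_cases ha : G.IsAcyclic
    · exact ⟨G, le_rfl, hc, ha⟩
    · simp only [IsAcyclic, not_forall, not_not] at ha
      obtain ⟨v, c, hcyc⟩ := ha
      have hnil : ¬c.Nil := hcyc.not_nil
      obtain ⟨u, hadj, q, rfl⟩ := Walk.not_nil_iff.mp hnil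
      set e : Sym2 V := s(v, u) with he
      have hmem : e ∈ G.edgeSet := (G.mem_edgeSet).mpr hadj
      set G' := G \ fromEdgeSet {e} with hG'
      have hle : G' ≤ G := sdiff_le
      have hre : G'.Reachable v u := by
        by_contra hcon
        have hb : G.IsBridge e := isBridge_iff.mpr hcon
        rw [isBridge_iff_mem_and_forall_cycle_notMem hmem] at hb
        exact hb (Walk.cons hadj q) hcyc (by simp [he])
      have hstep : ∀ {x y : V}, G.Adj x y → G'.Reachable x y := by
        intro x y hxy
        by_cases hexy : s(x, y) = e
        · rw [he, Sym2.eq_iff] at hexy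
          rcases hexy with ⟨rfl, rfl⟩ | ⟨rfl, rfl⟩
          · exact hre
          · exact hre.symm
        · exact Adj.reachable (by simp [hG', hxy, hexy])
      have hconn' : G'.Connected := by
        have : Nonempty V := hc.nonempty
        refine ⟨fun a b => ?_⟩
        obtain ⟨p⟩ := hc.preconnected a b
        induction p with
        | nil => exact Reachable.refl _
        | cons h p ih' => exact (hstep h).trans ih'
      have hcard : G'.edgeSet.ncard ≤ m := by
        have hes : G'.edgeSet = G.edgeSet \ {e} := by
          rw [hG']
          simp [edgeSet_sdiff, edgeSet_fromEdgeSet, edgeSet_sdiff_sdiff_isDiag]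
        rw [hes, Set.ncard_diff_singleton_of_mem hmem]
        omega
      obtain ⟨H, hH, ht⟩ := ih G' hcard hconn'
      exact ⟨H, hH.trans hle, ht⟩

lemma exists_spanning_tree {V : Type*} [Fintype V] (G : SimpleGraph V) (hc : G.Connected) :
    ∃ H ≤ G, H.IsTree :=
  exists_spanning_tree_aux G.edgeSet.ncard G le_rfl hc

/-- In a tree, if `A` is a set of vertices containing `r` and not containing some vertex,
then there are at least `|A|` edges incident to `A`. -/
lemma tree_parent_count {W : Type*} [Fintype W] {Γ : SimpleGraph W}
    (hΓ : Γ.IsTree) (A : Set W) (r : W) (hr : r ∈ A)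
    (hout : ∃ u, u ∉ A) :
    A.ncard ≤ (Γ.edgeSet ∩ {e | ∃ v ∈ e, v ∈ A}).ncard := by
  classical
  choose f hf hf' using (hΓ.existsUnique_path · r)
  set nxt : W → W := fun w => (f w).getVert 1 with hnxt
  have hadj : ∀ w, w ≠ r → Γ.Adj w (nxt w) := fun w hw =>
    (f w).adj_snd (Walk.not_nil_of_ne hw)
  have hlen : ∀ w, w ≠ r → (f (nxt w)).length + 1 = (f w).length := by
    intro w hw
    have hn : ¬(f w).Nil := Walk.not_nil_of_ne hw
    have htp : (f w).tail.IsPath := (hf w).tail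
    have heq : (f w).tail = f (nxt w) := hf' (nxt w) (f w).tail htp
    rw [← heq, Walk.length_tail_add_one hn]
  set g : W → Sym2 W := fun w => s(w, nxt w) with hg
  have hinj : Set.InjOn g {w | w ≠ r} := by
    intro a ha b hb hab
    simp only [hg, Sym2.eq_iff] at hab
    rcases hab with ⟨h1, _⟩ | ⟨h1, h2⟩
    · exact h1
    · exfalso
      have la := hlen a ha
      have lb := hlen b hb
      rw [h2] at la
      rw [← h1] at lb
      omega
  have hp : ∃ p, p ∉ A ∧ nxt p ∈ A := by
    obtain ⟨u, hu⟩ := hout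
    have : ∀ (m : ℕ) (w : W), w ∉ A → (f w).length ≤ m → ∃ p, p ∉ A ∧ nxt p ∈ A := by
      intro m
      induction m with
      | zero =>
        intro w hw hlw
        exfalso
        exact hw (Walk.eq_of_length_eq_zero (Nat.le_zero.mp hlw) ▸ hr)
      | succ m ihm =>
        intro w hw hlw
        have hwr : w ≠ r := fun h => hw (h ▸ hr)
        by_cases hnw : nxt w ∈ A
        · exact ⟨w, hw, hnw⟩
        · refine ihm (nxt w) hnw ?_
          have := hlen w hwr
          omega
    exact this (f u).length u hu le_rfl
  obtain ⟨p, hpA, hpn⟩ := hp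
  have hpr : p ≠ r := fun h => hpA (h ▸ hr)
  have hAfin : A.Finite := Set.toFinite A
  rw [Set.ncard_eq_toFinset_card _ hAfin,
    Set.ncard_eq_toFinset_card _ (Set.toFinite (Γ.edgeSet ∩ {e | ∃ v ∈ e, v ∈ A}))]
  have hcard : (insert p (hAfin.toFinset.erase r)).card = hAfin.toFinset.card := by
    rw [Finset.card_insert_of_notMem
        (fun h => hpA (hAfin.mem_toFinset.mp (Finset.mem_of_mem_erase h))),
      Finset.card_erase_of_mem (hAfin.mem_toFinset.mpr hr)]
    have : 0 < hAfin.toFinset.card := Finset.card_pos.mpr ⟨r, hAfin.mem_toFinset.mpr hr⟩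
    omega
  rw [← hcard]
  refine Finset.card_le_card_of_injOn g ?_ ?_
  · intro w hw
    rcases Finset.mem_insert.mp hw with rfl | hw'
    · refine (Set.Finite.mem_toFinset _).mpr ⟨(Γ.mem_edgeSet).mpr (hadj w hpr), ?_⟩
      exact ⟨nxt w, Sym2.mem_mk_right _ _, hpn⟩
    · have hwr : w ≠ r := Finset.ne_of_mem_erase hw'
      refine (Set.Finite.mem_toFinset _).mpr ⟨(Γ.mem_edgeSet).mpr (hadj w hwr), ?_⟩
      exact ⟨w, Sym2.mem_mk_left _ _, hAfin.mem_toFinset.mp (Finset.mem_of_mem_erase hw')⟩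
  · intro a ha b hb hab
    apply hinj ?_ ?_ hab
    · rcases Finset.mem_insert.mp ha with rfl | h
      · exact hpr
      · exact Finset.ne_of_mem_erase h
    · rcases Finset.mem_insert.mp hb with rfl | h
      · exact hpr
      · exact Finset.ne_of_mem_erase h

/-- The key inequality for a single Steiner tree. -/
lemma per_tree {V : Type*} [Fintype V] {G : SimpleGraph V} {S : Set V} {k : ℕ}
    (hk : 2 ≤ k) (hS : S.ncard = k) {T : G.Subgraph} (hT : G.IsSteinerTree S T) :
    k * (k - 1) ≤ k * (T.edgeSet ∩ {e | ∀ v ∈ e, v ∈ S}).ncard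
      + (k - 1) * (T.edgeSet ∩ {e | (∃ v ∈ e, v ∈ S) ∧ ¬ ∀ v ∈ e, v ∈ S}).ncard := by
  classical
  obtain ⟨hSsub, htree⟩ := hT
  letI : Fintype ↥T.verts := (Set.toFinite T.verts).fintype
  set Γ := T.coe with hΓdef
  have hmapinj : Function.Injective (Sym2.map (Subtype.val : ↥T.verts → V)) :=
    Sym2.map.injective Subtype.val_injective
  have hncard : ∀ (P : Sym2 V → Prop),
      (T.edgeSet ∩ {e | P e}).ncard
        = (Γ.edgeSet ∩ {ee | P (Sym2.map (↑) ee)}).ncard := by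
    intro P
    have himg : T.edgeSet ∩ {e | P e}
        = Sym2.map (↑) '' (Γ.edgeSet ∩ {ee | P (Sym2.map (↑) ee)}) := by
      ext e
      constructor
      · rintro ⟨he, hP⟩
        rw [← SimpleGraph.Subgraph.image_coe_edgeSet_coe T] at he
        obtain ⟨ee, hee, rfl⟩ := he
        exact ⟨ee, ⟨hee, hP⟩, rfl⟩
      · rintro ⟨ee, ⟨hee, hP⟩, rfl⟩
        refine ⟨?_, hP⟩
        rw [← SimpleGraph.Subgraph.image_coe_edgeSet_coe T]
        exact ⟨ee, hee, rfl⟩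
    rw [himg, Set.ncard_image_of_injective _ hmapinj]
  rw [hncard, hncard]
  have hedgecard : Γ.edgeSet.ncard = Fintype.card ↥T.verts - 1 := by
    have h1 : Γ.edgeSet.ncard = Γ.edgeFinset.card := by
      rw [Set.ncard_eq_toFinset_card _ (Set.toFinite Γ.edgeSet)]
      congr 1
      ext ee
      rw [Set.Finite.mem_toFinset, mem_edgeFinset]
    have h2 := htree.card_edgeFinset
    omega
  by_cases hcase : ∀ x : ↥T.verts, (x : V) ∈ S
  · have hveq : T.verts = S := subset_antisymm (fun x hx => hcase ⟨x, hx⟩) hSsub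
    have hW : Fintype.card ↥T.verts = k := by
      rw [← Set.toFinset_card, ← Set.ncard_eq_toFinset_card' T.verts, hveq, hS]
    have haset : Γ.edgeSet ∩ {ee | ∀ v ∈ Sym2.map (↑) ee, v ∈ S} = Γ.edgeSet := by
      apply Set.inter_eq_left.mpr
      intro ee _ v hv
      obtain ⟨x, _, rfl⟩ := Sym2.mem_map.mp hv
      exact hcase x
    rw [haset, hedgecard, hW]
    exact Nat.le_add_right _ _
  · push_neg at hcase
    obtain ⟨x₀, hx₀⟩ := hcase
    have hSne : S.Nonempty := by
      apply Set.nonempty_of_ncard_ne_zero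
      omega
    obtain ⟨s₀, hs₀⟩ := hSne
    set A : Set ↥T.verts := {x | (x : V) ∈ S} with hA
    have hAcard : A.ncard = k := by
      have himg : Subtype.val '' A = S := by
        ext y
        constructor
        · rintro ⟨x, hx, rfl⟩
          exact hx
        · intro hy
          exact ⟨⟨y, hSsub hy⟩, hy, rfl⟩
      rw [← hS, ← himg, Set.ncard_image_of_injective _ Subtype.val_injective]
    have hkey := tree_parent_count htree A ⟨s₀, hSsub hs₀⟩ hs₀ ⟨x₀, hx₀⟩
    rw [hAcard] at hkey
    set Ta := Γ.edgeSet ∩ {ee | ∀ v ∈ Sym2.map (↑) ee, v ∈ S} with hTa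
    set Tb := Γ.edgeSet ∩ {ee | (∃ v ∈ Sym2.map (↑) ee, v ∈ S)
      ∧ ¬ ∀ v ∈ Sym2.map (↑) ee, v ∈ S} with hTb
    have huni : Γ.edgeSet ∩ {e | ∃ v ∈ e, v ∈ A} = Ta ∪ Tb := by
      ext ee
      induction ee using Sym2.ind with
      | _ x y =>
        simp only [hTa, hTb, hA, Set.mem_inter_iff, Set.mem_union, Set.mem_setOf_eq,
          Sym2.mem_iff, Sym2.map_pair_eq, forall_eq_or_imp, forall_eq,
          exists_eq_or_imp, exists_eq_left]
        tauto
    have hdisj : Disjoint Ta Tb := by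
      rw [Set.disjoint_left]
      rintro ee ⟨_, hall⟩ ⟨_, _, hnall⟩
      exact hnall hall
    rw [huni, Set.ncard_union_eq hdisj (Set.toFinite Ta) (Set.toFinite Tb)] at hkey
    obtain ⟨k', rfl⟩ : ∃ k', k = k' + 1 := ⟨k - 1, by omega⟩
    simp only [Nat.add_sub_cancel]
    nlinarith [hkey]

/-- The global counting bound: at most `n - ⌈k/2⌉` pairwise edge-disjoint Steiner trees. -/
lemma count_bound {V : Type*} [Fintype V] {G : SimpleGraph V} {S : Set V} {n k t : ℕ}
    (hn : Fintype.card V = n) (h2 : 2 ≤ k) (hk : k ≤ n) (hS : S.ncard = k)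
    (T : Fin t → G.Subgraph) (hT : ∀ i, G.IsSteinerTree S (T i))
    (hd : ∀ i j, i ≠ j → Disjoint (T i).edgeSet (T j).edgeSet) :
    t ≤ n - (k + 1) / 2 := by
  classical
  obtain ⟨m, rfl⟩ : ∃ m, k = m + 2 := ⟨k - 2, by omega⟩
  obtain ⟨q, rfl⟩ : ∃ q, n = (m + 2) + q := ⟨n - (m + 2), by omega⟩
  have hk1 : (m + 2) - 1 = m + 1 := by omega
  set Pb : Sym2 V → Prop := fun e => (∃ v ∈ e, v ∈ S) ∧ ¬ ∀ v ∈ e, v ∈ S with hPb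
  set Fa : Fin t → Finset (Sym2 V) :=
    fun i => (Set.toFinite ((T i).edgeSet ∩ {e | ∀ v ∈ e, v ∈ S})).toFinset with hFa
  set Fb : Fin t → Finset (Sym2 V) :=
    fun i => (Set.toFinite ((T i).edgeSet ∩ {e | Pb e})).toFinset with hFb
  have hpt : ∀ i, (m + 2) * (m + 1) ≤ (m + 2) * (Fa i).card + (m + 1) * (Fb i).card := by
    intro i
    have h := per_tree h2 hS (hT i)
    rw [hk1] at h
    rwa [Set.ncard_eq_toFinset_card _ (Set.toFinite _),
      Set.ncard_eq_toFinset_card _ (Set.toFinite _)] at h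
  have hdFa : ∀ i ∈ Finset.univ (α := Fin t), ∀ j ∈ Finset.univ (α := Fin t),
      i ≠ j → Disjoint (Fa i) (Fa j) := by
    intro i _ j _ hij
    rw [hFa]
    rw [Set.Finite.disjoint_toFinset]
    exact ((hd i j hij).mono Set.inter_subset_left Set.inter_subset_left)
  have hdFb : ∀ i ∈ Finset.univ (α := Fin t), ∀ j ∈ Finset.univ (α := Fin t),
      i ≠ j → Disjoint (Fb i) (Fb j) := by
    intro i _ j _ hij
    rw [hFb]
    rw [Set.Finite.disjoint_toFinset]
    exact ((hd i j hij).mono Set.inter_subset_left Set.inter_subset_left)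
  letI : Fintype ↥S := (Set.toFinite S).fintype
  have hScard : Fintype.card ↥S = m + 2 := by
    rw [← Set.toFinset_card, ← Set.ncard_eq_toFinset_card' S, hS]
  have hCA : (Finset.univ.biUnion Fa).card * 2 ≤ (m + 2) * (m + 1) := by
    have hsub : Finset.univ.biUnion Fa ⊆
        ((⊤ : SimpleGraph ↥S).edgeFinset).image (Sym2.map (↑)) := by
      intro e he
      obtain ⟨i, _, hei⟩ := Finset.mem_biUnion.mp he
      rw [hFa, Set.Finite.mem_toFinset] at hei
      obtain ⟨hedge, hall⟩ := hei
      induction e using Sym2.ind with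
      | _ x y =>
        have hadj : (T i).Adj x y := (Subgraph.mem_edgeSet).mp hedge
        have hxy : x ≠ y := (hadj.adj_sub).ne
        have hxS : x ∈ S := hall x (Sym2.mem_mk_left _ _)
        have hyS : y ∈ S := hall y (Sym2.mem_mk_right _ _)
        refine Finset.mem_image.mpr ⟨s(⟨x, hxS⟩, ⟨y, hyS⟩), ?_, by simp⟩
        rw [mem_edgeFinset]
        exact fun h => hxy (congrArg Subtype.val h)
    have h1 : (Finset.univ.biUnion Fa).card ≤ (m + 2).choose 2 := by
      calc (Finset.univ.biUnion Fa).card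
          ≤ (((⊤ : SimpleGraph ↥S).edgeFinset).image (Sym2.map (↑))).card :=
            Finset.card_le_card hsub
        _ ≤ ((⊤ : SimpleGraph ↥S).edgeFinset).card := Finset.card_image_le
        _ = (Fintype.card ↥S).choose 2 := card_edgeFinset_top_eq_card_choose_two
        _ = (m + 2).choose 2 := by rw [hScard]
    have h2' : (m + 2).choose 2 * 2 = (m + 2) * (m + 1) := by
      rw [Nat.choose_two_right]
      have hdvd : 2 ∣ (m + 2) * (m + 1) := by
        have hev := Nat.even_mul_succ_self (m + 1)
        rw [mul_comm] at hev
        exact hev.two_dvd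
      exact Nat.div_mul_cancel hdvd
    calc (Finset.univ.biUnion Fa).card * 2 ≤ (m + 2).choose 2 * 2 :=
        Nat.mul_le_mul_right _ h1
      _ = (m + 2) * (m + 1) := h2'
  have hV : Nonempty V := by
    rw [← Fintype.card_pos_iff]
    omega
  have hCB : (Finset.univ.biUnion Fb).card ≤ (m + 2) * q := by
    set φ : Sym2 V → V × V := fun e =>
      if h : ∃ p : V × V, p.1 ∈ S ∧ p.2 ∉ S ∧ e = s(p.1, p.2) then h.choose
      else (Classical.arbitrary V, Classical.arbitrary V) with hφ
    have hφspec : ∀ e, Pb e → (φ e).1 ∈ S ∧ (φ e).2 ∉ S ∧ e = s((φ e).1, (φ e).2) := by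
      intro e hPbe
      have hex : ∃ p : V × V, p.1 ∈ S ∧ p.2 ∉ S ∧ e = s(p.1, p.2) := by
        induction e using Sym2.ind with
        | _ x y =>
          obtain ⟨⟨v, hv, hvS⟩, hnall⟩ := hPbe
          have hxy : x ∈ S ∨ y ∈ S := by
            rcases Sym2.mem_iff.mp hv with rfl | rfl
            · exact Or.inl hvS
            · exact Or.inr hvS
          have hnand : ¬ (x ∈ S ∧ y ∈ S) := by
            rintro ⟨hx1, hy1⟩
            exact hnall (fun w hw => by rcases Sym2.mem_iff.mp hw with rfl | rfl <;> assumption)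
          by_cases hx : x ∈ S
          · exact ⟨(x, y), hx, fun h => hnand ⟨hx, h⟩, rfl⟩
          · exact ⟨(y, x), hxy.resolve_left hx, hx, Sym2.eq_swap.symm⟩
      rw [hφ]
      simp only [dif_pos hex]
      exact hex.choose_spec
    have hPbmem : ∀ e ∈ Finset.univ.biUnion Fb, Pb e := by
      intro e he
      obtain ⟨i, _, hei⟩ := Finset.mem_biUnion.mp he
      rw [hFb, Set.Finite.mem_toFinset] at hei
      exact hei.2
    have hmain : (Finset.univ.biUnion Fb).card ≤
        ((Set.toFinite S).toFinset ×ˢ ((Set.toFinite S).toFinset)ᶜ).card := by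
      apply Finset.card_le_card_of_injOn φ
      · intro e he
        obtain ⟨h1, h2, _⟩ := hφspec e (hPbmem e he)
        rw [Finset.mem_coe, Finset.mem_product]
        exact ⟨(Set.Finite.mem_toFinset _).mpr h1,
          Finset.mem_compl.mpr (fun h => h2 ((Set.Finite.mem_toFinset _).mp h))⟩
      · intro e1 he1 e2 he2 heq
        have s1 := (hφspec e1 (hPbmem e1 he1)).2.2
        have s2 := (hφspec e2 (hPbmem e2 he2)).2.2
        rw [s1, s2, heq]
    calc (Finset.univ.biUnion Fb).card
        ≤ ((Set.toFinite S).toFinset ×ˢ ((Set.toFinite S).toFinset)ᶜ).card := hmain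
      _ = (m + 2) * q := by
          rw [Finset.card_product, Finset.card_compl]
          have e1 : (Set.toFinite S).toFinset.card = m + 2 := by
            rw [← Set.ncard_eq_toFinset_card _ (Set.toFinite S), hS]
          rw [e1, hn]
          congr 1
          omega
  have hsum : t * ((m + 2) * (m + 1)) ≤
      (m + 2) * (Finset.univ.biUnion Fa).card + (m + 1) * (Finset.univ.biUnion Fb).card := by
    have h1 : ∑ _i : Fin t, ((m + 2) * (m + 1)) ≤
        ∑ i : Fin t, ((m + 2) * (Fa i).card + (m + 1) * (Fb i).card) :=
      Finset.sum_le_sum (fun i _ => hpt i)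
    rw [Finset.sum_const, Finset.card_univ, Fintype.card_fin, smul_eq_mul] at h1
    rwa [Finset.sum_add_distrib, ← Finset.mul_sum, ← Finset.mul_sum,
      ← Finset.card_biUnion hdFa, ← Finset.card_biUnion hdFb] at h1
  set CA := (Finset.univ.biUnion Fa).card
  set CB := (Finset.univ.biUnion Fb).card
  have key : 2 * t ≤ (m + 2) + 2 * q := by
    have hmul : (2 * t) * ((m + 2) * (m + 1)) ≤ ((m + 2) + 2 * q) * ((m + 2) * (m + 1)) := by
      calc (2 * t) * ((m + 2) * (m + 1)) = 2 * (t * ((m + 2) * (m + 1))) := by ring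
        _ ≤ 2 * ((m + 2) * CA + (m + 1) * CB) := Nat.mul_le_mul_left _ hsum
        _ = (m + 2) * (CA * 2) + 2 * ((m + 1) * CB) := by ring
        _ ≤ (m + 2) * ((m + 2) * (m + 1)) + 2 * ((m + 1) * ((m + 2) * q)) := by
            gcongr
        _ = ((m + 2) + 2 * q) * ((m + 2) * (m + 1)) := by ring
    exact Nat.le_of_mul_le_mul_right hmul (by positivity)
  omega

theorem lambda_k_bounds {V : Type*} [Fintype V] (G : SimpleGraph V)
    (hG : G.Connected) (n k : ℕ) (hn : Fintype.card V = n)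
    (h2 : 2 ≤ k) (hk : k ≤ n) :
    1 ≤ G.genEdgeConn k ∧ G.genEdgeConn k ≤ n - (k + 1) / 2 := by
  classical
  set b := n - (k + 1) / 2 with hb
  set A : Set V → Set ℕ := fun S => {t | ∃ T : Fin t → G.Subgraph,
    (∀ i, G.IsSteinerTree S (T i)) ∧
    ∀ i j, i ≠ j → Disjoint (T i).edgeSet (T j).edgeSet} with hA
  have hmem0 : ∀ S, 0 ∈ A S :=
    fun S => ⟨fun i => i.elim0, fun i => i.elim0, fun i j _ => i.elim0⟩
  have hub : ∀ S, S.ncard = k → ∀ t ∈ A S, t ≤ b := by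
    rintro S hSk t ⟨T, hT, hd⟩
    exact count_bound hn h2 hk hSk T hT hd
  have hsup_le : ∀ S, S.ncard = k → G.steinerLambda S ≤ b := by
    intro S hSk
    exact csSup_le ⟨0, hmem0 S⟩ (hub S hSk)
  have hbddA : ∀ S, S.ncard = k → BddAbove (A S) := by
    intro S hSk
    exact ⟨b, fun t ht => hub S hSk t ht⟩
  -- 1 is achieved: a spanning tree
  have hone : ∀ S : Set V, 1 ∈ A S := by
    intro S
    obtain ⟨H, hle, htree⟩ := exists_spanning_tree G hG
    set Tsub : G.Subgraph := SimpleGraph.toSubgraph H hle with hTsub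
    have hverts : Tsub.verts = Set.univ := rfl
    let φ : Tsub.coe ≃g H :=
      { toEquiv := Equiv.Set.univ V
        map_rel_iff' := Iff.rfl }
    have hcoe : Tsub.coe.IsTree := by
      constructor
      · exact (φ.connected_iff).mpr htree.isConnected
      · intro v c hc
        exact htree.IsAcyclic (c.map φ.toHom) (hc.map φ.toEquiv.injective)
    refine ⟨fun _ => Tsub, fun _ => ⟨?_, hcoe⟩, fun i j hij => absurd (Subsingleton.elim i j) hij⟩
    rw [hverts]
    exact Set.subset_univ S
  have hge1 : ∀ S, S.ncard = k → 1 ≤ G.steinerLambda S := by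
    intro S hSk
    exact le_csSup (hbddA S hSk) (hone S)
  -- a set of size k exists
  obtain ⟨F, _, hF⟩ := Finset.exists_subset_card_eq (s := (Finset.univ : Finset V)) (n := k) (by
    rw [Finset.card_univ, hn]; exact hk)
  have hS₀ : (↑F : Set V).ncard = k := by rw [Set.ncard_coe_finset, hF]
  have hnonemptyM : {m | ∃ S : Set V, S.ncard = k ∧ G.steinerLambda S = m}.Nonempty :=
    ⟨G.steinerLambda ↑F, ↑F, hS₀, rfl⟩
  constructor
  · obtain ⟨S₁, hS₁, heq⟩ := Nat.sInf_mem hnonemptyM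
    show 1 ≤ sInf {m | ∃ S : Set V, S.ncard = k ∧ G.steinerLambda S = m}
    calc 1 ≤ G.steinerLambda S₁ := hge1 S₁ hS₁
      _ = sInf {m | ∃ S : Set V, S.ncard = k ∧ G.steinerLambda S = m} := heq
  · calc G.genEdgeConn k ≤ G.steinerLambda ↑F := Nat.sInf_le ⟨↑F, hS₀, rfl⟩
      _ ≤ b := hsup_le ↑F hS₀
end

section
/- Let G be a connected graph of order n and k an even integer with 2 ≤ k ≤ n. Then λ_k(G) = n − k/2 if and only if G = K_n. -/
open SimpleGraph

set_option linter.unusedSectionVars false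
set_option linter.unusedVariables false
set_option maxHeartbeats 1000000

-- edges of a tree with both endpoints in A number at most |A| - 1
lemma tree_edges_subset_bound {W : Type*} [Fintype W] {H : SimpleGraph W}
    (hH : H.IsTree) (A : Set W) (hA : A.Nonempty) :
    {e ∈ H.edgeSet | ∀ v ∈ e, v ∈ A}.ncard + 1 ≤ A.ncard := by
  classical
  obtain ⟨a0', ha0'⟩ := hA
  -- root
  let r : W := a0'
  let p : ∀ v : W, H.Walk v r := fun v => (hH.existsUnique_path v r).choose
  have hp : ∀ v, (p v).IsPath := fun v => (hH.existsUnique_path v r).choose_spec.1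
  have hup : ∀ v (q : H.Walk v r), q.IsPath → q = p v :=
    fun v q hq => (hH.existsUnique_path v r).choose_spec.2 q hq
  -- parent relation
  have key : ∀ x y (h : H.Adj x y),
      (p x = Walk.cons h (p y)) ∨ (p y = Walk.cons h.symm (p x)) := by
    intro x y h
    by_cases hy : y ∈ (p x).support
    · left
      have ht : ((p x).takeUntil y hy).IsPath := (hp x).takeUntil hy
      have hsingle : (Walk.cons h (Walk.nil : H.Walk y y)).IsPath := by
        simp [Walk.isPath_def, h.ne]
      have hEq : ((p x).takeUntil y hy) = Walk.cons h Walk.nil :=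
        Subtype.ext_iff.mp (hH.IsAcyclic.path_unique ⟨_, ht⟩ ⟨_, hsingle⟩)
      have hdrop : ((p x).dropUntil y hy).IsPath := (hp x).dropUntil hy
      have hdrop' : (p x).dropUntil y hy = p y := hup y _ hdrop
      have := (p x).take_spec hy
      rw [hEq, hdrop'] at this
      simpa using this.symm
    · right
      exact (hup y (Walk.cons h.symm (p x)) ((hp x).cons hy)).symm
  -- second vertex & length facts
  have keylen : ∀ x y (h : H.Adj x y), p x = Walk.cons h (p y) →
      (p x).getVert 1 = y ∧ (p x).length = (p y).length + 1 := by
    intro x y h hxy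
    constructor
    · rw [hxy]; simp [Walk.getVert_cons_succ]
    · rw [hxy]; simp
  -- minimal element of A
  obtain ⟨a0, ha0A, ha0min⟩ := Finset.exists_min_image A.toFinset (fun a => (p a).length)
    ⟨a0', by simpa using ha0'⟩
  rw [Set.mem_toFinset] at ha0A
  -- the "child" map
  set EA : Set (Sym2 W) := {e ∈ H.edgeSet | ∀ v ∈ e, v ∈ A} with hEA
  have exP : ∀ e ∈ EA, ∃ c : W, c ∈ A ∧ (p c).getVert 1 ∈ A ∧
      e = s(c, (p c).getVert 1) ∧ (p ((p c).getVert 1)).length + 1 = (p c).length := by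
    rintro e ⟨he, hins⟩
    induction e with
    | _ x y =>
      rw [SimpleGraph.mem_edgeSet] at he
      have hx : x ∈ A := hins x (by simp)
      have hyA : y ∈ A := hins y (by simp)
      rcases key x y he with hc | hc
      · obtain ⟨h1, h2⟩ := keylen x y he hc
        exact ⟨x, hx, by rw [h1]; exact hyA, by rw [h1], by rw [h1]; omega⟩
      · obtain ⟨h1, h2⟩ := keylen y x he.symm hc
        refine ⟨y, hyA, by rw [h1]; exact hx, ?_, by rw [h1]; omega⟩
        rw [h1, Sym2.eq_swap]
  let F : Sym2 W → W := fun e =>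
    if hh : ∃ c : W, c ∈ A ∧ (p c).getVert 1 ∈ A ∧
      e = s(c, (p c).getVert 1) ∧ (p ((p c).getVert 1)).length + 1 = (p c).length
    then hh.choose else a0
  have hFspec : ∀ e ∈ EA, F e ∈ A ∧ (p (F e)).getVert 1 ∈ A ∧
      e = s(F e, (p (F e)).getVert 1) ∧ (p ((p (F e)).getVert 1)).length + 1 = (p (F e)).length := by
    intro e he
    have hh := exP e he
    rw [show F e = hh.choose from dif_pos hh]
    exact hh.choose_spec
  have : EA.ncard ≤ (A \ {a0}).ncard := by
    apply Set.ncard_le_ncard_of_injOn F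
    · intro e he
      obtain ⟨h1, h2, h3, h4⟩ := hFspec e he
      refine ⟨h1, ?_⟩
      simp only [Set.mem_singleton_iff]
      intro hcon
      rw [hcon] at h4 h2
      have := ha0min ((p a0).getVert 1) (by rw [Set.mem_toFinset]; exact h2)
      omega
    · intro e1 h1 e2 h2 hF
      obtain ⟨_, _, h13, _⟩ := hFspec e1 h1
      obtain ⟨_, _, h23, _⟩ := hFspec e2 h2
      rw [h13, h23, hF]
  have h2 : (A \ {a0}).ncard + 1 = A.ncard := Set.ncard_diff_singleton_add_one ha0A
  omega

section PerTree
variable {V : Type*} [Fintype V] {G : SimpleGraph V} {S : Set V} {T : G.Subgraph}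

lemma sym2_val_inj : Function.Injective (Sym2.map (Subtype.val : {x : V // x ∈ T.verts} → V)) :=
  Sym2.map.injective Subtype.val_injective

lemma edgeSet_ncard_coe (T : G.Subgraph) : T.coe.edgeSet.ncard = T.edgeSet.ncard := by
  rw [← T.image_coe_edgeSet_coe]
  exact (Set.ncard_image_of_injective _ (Sym2.map.injective Subtype.val_injective)).symm

-- type A tree: vertex set exactly S
lemma typeA_facts (h : G.IsSteinerTree S T) (hv : T.verts = S) :
    T.edgeSet.ncard + 1 = S.ncard ∧ T.edgeSet ⊆ {e ∈ G.edgeSet | ∀ v ∈ e, v ∈ S} := by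
  classical
  haveI : Fintype ↥T.verts := Fintype.ofFinite _
  haveI : Fintype ↥T.coe.edgeSet := Fintype.ofFinite _
  have hcard := h.2.card_edgeFinset
  have h1 : T.coe.edgeSet.ncard = T.coe.edgeFinset.card := by
    rw [Set.ncard_eq_toFinset_card', edgeFinset]
  have h2 : Fintype.card ↥T.verts = S.ncard := by
    rw [← hv, Set.ncard_eq_toFinset_card', Set.toFinset_card]
  constructor
  · rw [← edgeSet_ncard_coe, h1, hcard, h2]
  · intro e he
    refine ⟨T.edgeSet_subset he, fun v hv' => ?_⟩
    rw [← hv]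
    exact T.mem_verts_of_mem_edge he hv'
end PerTree

section PerTreeB
variable {V : Type*} [Fintype V] {G : SimpleGraph V} {S : Set V} {T : G.Subgraph}

lemma typeB_facts (h : G.IsSteinerTree S T) (hv : T.verts ≠ S) :
    S.ncard ≤ {e ∈ T.edgeSet | ∃ v ∈ e, v ∈ S}.ncard := by
  classical
  haveI : Fintype ↥T.verts := Fintype.ofFinite _
  haveI : Fintype ↥T.coe.edgeSet := Fintype.ofFinite _
  set W := ↥T.verts
  set H := T.coe with hH
  set A : Set W := {v | (v : V) ∉ S} with hA
  have hAne : A.Nonempty := by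
    obtain ⟨w, hw1, hw2⟩ := Set.exists_of_ssubset (ssubset_of_subset_of_ne h.1 (Ne.symm hv))
    exact ⟨⟨w, hw1⟩, hw2⟩
  have hforest := tree_edges_subset_bound h.2 A hAne
  -- tree edge count
  have htree : H.edgeSet.ncard + 1 = Fintype.card W := by
    have := h.2.card_edgeFinset (G := H)
    rw [Set.ncard_eq_toFinset_card', edgeFinset] at *
    exact this
  -- vertex count split
  have hsplit : Fintype.card W = S.ncard + A.ncard := by
    have h1 : {v : W | (v : V) ∈ S}.ncard + A.ncard = Fintype.card W := by
      have : A = {v : W | (v : V) ∈ S}ᶜ := by ext v; simp [hA]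
      rw [this]
      rw [← Nat.card_eq_fintype_card]
      exact Set.ncard_add_ncard_compl _
    have h2 : {v : W | (v : V) ∈ S}.ncard = S.ncard := by
      have himg : Subtype.val '' {v : W | (v : V) ∈ S} = S := by
        apply Set.eq_of_subset_of_subset
        · rintro x ⟨v, hv1, rfl⟩; exact hv1
        · intro x hx; exact ⟨⟨x, h.1 hx⟩, hx, rfl⟩
      conv_rhs => rw [← himg]
      rw [Set.ncard_image_of_injective _ Subtype.val_injective]
    omega
  -- edge split
  set Enon : Set (Sym2 W) := {e ∈ H.edgeSet | ∀ v ∈ e, v ∈ A} with hEnon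
  set Etouch : Set (Sym2 W) := {e ∈ H.edgeSet | ¬ ∀ v ∈ e, v ∈ A} with hEtouch
  have hsplitE : Etouch.ncard + Enon.ncard = H.edgeSet.ncard := by
    have h1 : Etouch = H.edgeSet \ Enon := by
      ext e; simp only [hEtouch, hEnon, Set.mem_setOf_eq, Set.mem_diff]; tauto
    have h2 : Enon ⊆ H.edgeSet := fun e he => he.1
    rw [h1]
    exact Set.ncard_diff_add_ncard_of_subset h2
  have hge : S.ncard ≤ Etouch.ncard := by
    have hAcard : 0 < A.ncard := (Set.ncard_pos A.toFinite).mpr hAne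
    omega
  -- transfer to V
  have himg : Sym2.map (Subtype.val : W → V) '' Etouch = {e ∈ T.edgeSet | ∃ v ∈ e, v ∈ S} := by
    apply Set.eq_of_subset_of_subset
    · rintro e' ⟨e, ⟨he1, he2⟩, rfl⟩
      induction e with
      | _ x y =>
        rw [SimpleGraph.mem_edgeSet] at he1
        push_neg at he2
        obtain ⟨v, hv1, hv2⟩ := he2
        rw [hA] at hv2
        simp only [Set.mem_setOf_eq, not_not] at hv2
        constructor
        · rw [Sym2.map_pair_eq, Subgraph.mem_edgeSet]
          exact (Subgraph.coe_adj _ _ _).mp he1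
        · rw [Sym2.map_pair_eq]
          rcases Sym2.mem_iff.mp hv1 with rfl | rfl
          · exact ⟨(v : V), Sym2.mem_mk_left _ _, hv2⟩
          · exact ⟨(v : V), Sym2.mem_mk_right _ _, hv2⟩
    · rintro e' ⟨he1, hv, hv1, hv2⟩
      induction e' with
      | _ a b =>
        rw [Subgraph.mem_edgeSet] at he1
        have ha : a ∈ T.verts := T.edge_vert he1
        have hb : b ∈ T.verts := T.edge_vert he1.symm
        refine ⟨s(⟨a, ha⟩, ⟨b, hb⟩), ⟨?_, ?_⟩, by rw [Sym2.map_pair_eq]⟩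
        · rw [SimpleGraph.mem_edgeSet]
          exact (Subgraph.coe_adj _ _ _).mpr he1
        · intro hall
          rcases Sym2.mem_iff.mp hv1 with rfl | rfl
          · exact (hall ⟨hv, ha⟩ (Sym2.mem_mk_left _ _)) hv2
          · exact (hall ⟨hv, hb⟩ (Sym2.mem_mk_right _ _)) hv2
  calc S.ncard ≤ Etouch.ncard := hge
    _ = _ := by
      rw [← himg, Set.ncard_image_of_injective _ (Sym2.map.injective Subtype.val_injective)]
end PerTreeB

lemma core_count {V : Type*} [Fintype V] (G : SimpleGraph V) (S : Set V) (m t : ℕ)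
    (hm : 1 ≤ m) (hS : S.ncard = 2*m)
    (T : Fin t → G.Subgraph) (hT : ∀ i, G.IsSteinerTree S (T i))
    (hd : ∀ i j, i ≠ j → Disjoint (T i).edgeSet (T j).edgeSet) :
    ∃ x B : ℕ, B = {e ∈ G.edgeSet | ∀ v ∈ e, v ∈ S}.ncard ∧
      x * (2*m - 1) ≤ B ∧
      t * (2*m) ≤ x + B + 2*m*(Fintype.card V - 2*m) := by
  classical
  set n := Fintype.card V with hn
  set TBs : Set (Sym2 V) := {e ∈ G.edgeSet | ∀ v ∈ e, v ∈ S} with hTBs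
  set TCs : Set (Sym2 V) := {e ∈ G.edgeSet | (∃ v ∈ e, v ∈ S) ∧ ¬ ∀ v ∈ e, v ∈ S} with hTCs
  set TBF := TBs.toFinset with hTBF
  set TCF := TCs.toFinset with hTCF
  set Ei : Fin t → Finset (Sym2 V) := fun i => ((T i).edgeSet).toFinset with hEi
  set X : Finset (Fin t) := Finset.univ.filter (fun i => (T i).verts = S) with hX
  set x := X.card with hx
  have hEd : ∀ i j, i ≠ j → Disjoint (Ei i) (Ei j) := by
    intro i j hij
    rw [hEi]
    simpa [Set.disjoint_toFinset] using hd i j hij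
  have hEcardA : ∀ i ∈ X, (Ei i).card = 2*m - 1 := by
    intro i hi
    rw [hX, Finset.mem_filter] at hi
    have := (typeA_facts (hT i) hi.2).1
    rw [hS] at this
    rw [hEi, ← Set.ncard_eq_toFinset_card']
    omega
  have hEsubA : ∀ i ∈ X, Ei i ⊆ TBF := by
    intro i hi
    rw [hX, Finset.mem_filter] at hi
    have := (typeA_facts (hT i) hi.2).2
    intro e he
    rw [hTBF, Set.mem_toFinset]
    rw [hEi, Set.mem_toFinset] at he
    exact this he
  -- step 1 : x * (2m-1) ≤ TBF.card
  have step1 : x * (2*m - 1) ≤ TBF.card := by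
    have hbi : (X.biUnion Ei).card = ∑ i ∈ X, (Ei i).card :=
      Finset.card_biUnion (fun i _ j _ hij => hEd i j hij)
    have hsub : X.biUnion Ei ⊆ TBF := by
      intro e he
      obtain ⟨i, hi, hei⟩ := Finset.mem_biUnion.mp he
      exact hEsubA i hi hei
    have := Finset.card_le_card hsub
    rw [hbi, Finset.sum_congr rfl hEcardA, Finset.sum_const, smul_eq_mul] at this
    exact this
  -- step 2+3 : sum over all trees
  have step2 : x * (2*m - 1) + (t - x) * (2*m) ≤ TBF.card + TCF.card := by
    have hbi : (Finset.univ.biUnion (fun i => Ei i ∩ (TBF ∪ TCF))).card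
        = ∑ i, (Ei i ∩ (TBF ∪ TCF)).card :=
      Finset.card_biUnion (fun i _ j _ hij =>
        Finset.disjoint_of_subset_left Finset.inter_subset_left
          (Finset.disjoint_of_subset_right Finset.inter_subset_left (hEd i j hij)))
    have hsub : Finset.univ.biUnion (fun i => Ei i ∩ (TBF ∪ TCF)) ⊆ TBF ∪ TCF := by
      intro e he
      obtain ⟨i, _, hei⟩ := Finset.mem_biUnion.mp he
      exact Finset.mem_of_mem_inter_right hei
    have hcardTU : (TBF ∪ TCF).card ≤ TBF.card + TCF.card := Finset.card_union_le _ _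
    have hlow : ∀ i, (if i ∈ X then 2*m - 1 else 2*m) ≤ (Ei i ∩ (TBF ∪ TCF)).card := by
      intro i
      by_cases hi : i ∈ X
      · rw [if_pos hi]
        have : Ei i ∩ (TBF ∪ TCF) = Ei i := by
          apply Finset.inter_eq_left.mpr
          exact (hEsubA i hi).trans Finset.subset_union_left
        rw [this, hEcardA i hi]
      · rw [if_neg hi]
        rw [hX, Finset.mem_filter] at hi
        push_neg at hi
        have hB := typeB_facts (hT i) (hi (Finset.mem_univ i))
        rw [hS] at hB
        refine le_trans hB ?_
        rw [Set.ncard_eq_toFinset_card']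
        apply Finset.card_le_card
        intro e he
        rw [Set.mem_toFinset] at he
        obtain ⟨he1, he2⟩ := he
        rw [Finset.mem_inter]
        constructor
        · rw [hEi, Set.mem_toFinset]; exact he1
        · rw [Finset.mem_union, hTBF, hTCF, Set.mem_toFinset, Set.mem_toFinset]
          by_cases hall : ∀ v ∈ e, v ∈ S
          · exact Or.inl ⟨(T i).edgeSet_subset he1, hall⟩
          · exact Or.inr ⟨(T i).edgeSet_subset he1, he2, hall⟩
    have hsum : ∑ i, (if i ∈ X then 2*m - 1 else 2*m) ≤ ∑ i, (Ei i ∩ (TBF ∪ TCF)).card :=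
      Finset.sum_le_sum (fun i _ => hlow i)
    have hsplit : ∑ i : Fin t, (if i ∈ X then 2*m - 1 else 2*m)
        = x * (2*m-1) + (t - x) * (2*m) := by
      rw [Finset.sum_ite, Finset.sum_const, Finset.sum_const, smul_eq_mul, smul_eq_mul]
      have h1 : Finset.univ.filter (fun i => i ∈ X) = X := by
        ext i; simp
      have h2 : (Finset.univ.filter (fun i => ¬ i ∈ X)).card = t - x := by
        rw [Finset.filter_not, Finset.card_sdiff_of_subset (by intro i hi; simp [h1 ▸ hi])]
        simp [h1, hx]
      rw [h1, h2]
    have := le_trans (le_trans hsum (le_of_eq hbi.symm)) (le_trans (Finset.card_le_card hsub) hcardTU)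
    omega
  -- step 4 : TCF.card ≤ 2m(n-2m)
  have hSne : S.Nonempty := by
    rw [← Set.ncard_pos S.toFinite, hS]; omega
  obtain ⟨v0, _⟩ := hSne
  have step4 : TCF.card ≤ 2*m * (n - 2*m) := by
    set g : Sym2 V → V × V := fun e =>
      if h : ∃ p : V × V, e = s(p.1, p.2) ∧ p.1 ∈ S ∧ p.2 ∉ S then h.choose else (v0, v0)
      with hg
    have hspec : ∀ e ∈ TCF, e = s((g e).1, (g e).2) ∧ (g e).1 ∈ S ∧ (g e).2 ∉ S := by
      intro e he
      rw [hTCF, Set.mem_toFinset, hTCs] at he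
      obtain ⟨he1, ⟨w, hw1, hw2⟩, he3⟩ := he
      have hex : ∃ p : V × V, e = s(p.1, p.2) ∧ p.1 ∈ S ∧ p.2 ∉ S := by
        induction e with
        | _ a b =>
          push_neg at he3
          obtain ⟨u, hu1, hu2⟩ := he3
          rcases Sym2.mem_iff.mp hw1 with rfl | rfl
          · rcases Sym2.mem_iff.mp hu1 with rfl | rfl
            · exact absurd hw2 hu2
            · exact ⟨(w, u), rfl, hw2, hu2⟩
          · rcases Sym2.mem_iff.mp hu1 with rfl | rfl
            · exact ⟨(w, u), Sym2.eq_swap, hw2, hu2⟩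
            · exact absurd hw2 hu2
      rw [hg]
      simp only [dif_pos hex]
      exact hex.choose_spec
    calc TCF.card ≤ (S.toFinset ×ˢ Sᶜ.toFinset).card := by
          apply Finset.card_le_card_of_injOn g
          · intro e he
            obtain ⟨h1, h2, h3⟩ := hspec e he
            rw [Finset.mem_coe, Finset.mem_product, Set.mem_toFinset, Set.mem_toFinset]
            exact ⟨h2, h3⟩
          · intro e1 h1 e2 h2 hgeq
            rw [(hspec e1 h1).1, (hspec e2 h2).1, hgeq]
      _ = 2*m * (n - 2*m) := by
          rw [Finset.card_product]
          have h1 : S.toFinset.card = 2*m := by rw [← Set.ncard_eq_toFinset_card', hS]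
          have h2 : (Sᶜ).toFinset.card = n - 2*m := by
            rw [← Set.ncard_eq_toFinset_card']
            have := Set.ncard_add_ncard_compl S
            rw [hS, Nat.card_eq_fintype_card] at this
            omega
          rw [h1, h2]
  refine ⟨x, TBF.card, ?_, step1, ?_⟩
  · rw [hTBF, ← Set.ncard_eq_toFinset_card']
  · have hxt : x ≤ t := by
      rw [hx, hX]
      exact le_trans (Finset.card_le_card (Finset.filter_subset _ _)) (by simp)
    obtain ⟨q, hq⟩ : ∃ q, 2*m = q+1 := ⟨2*m-1, by omega⟩
    have e1 : t * (2*m) = x * (2*m) + (t-x) * (2*m) := by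
      rw [← Nat.add_mul]; congr 1; omega
    have e2 : x * (2*m) = x + x * (2*m - 1) := by
      rw [hq, Nat.mul_succ]
      simp only [Nat.add_sub_cancel]
      omega
    omega

-- bound on number of internal edges
lemma TB_bound {V : Type*} [Fintype V] (G : SimpleGraph V) (S : Set V) :
    {e ∈ G.edgeSet | ∀ v ∈ e, v ∈ S}.ncard ≤ S.ncard.choose 2 := by
  classical
  set HS : SimpleGraph ↥S := SimpleGraph.induce S G with hHS
  have himg : Sym2.map (Subtype.val : ↥S → V) '' HS.edgeSet = {e ∈ G.edgeSet | ∀ v ∈ e, v ∈ S} := by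
    apply Set.eq_of_subset_of_subset
    · rintro e' ⟨e, he, rfl⟩
      induction e with
      | _ a b =>
        rw [SimpleGraph.mem_edgeSet] at he
        rw [Sym2.map_pair_eq]
        refine ⟨he, ?_⟩
        intro v hv
        rcases Sym2.mem_iff.mp hv with rfl | rfl
        · exact a.2
        · exact b.2
    · rintro e ⟨he, hall⟩
      induction e with
      | _ a b =>
        rw [SimpleGraph.mem_edgeSet] at he
        have ha : a ∈ S := hall a (Sym2.mem_mk_left _ _)
        have hb : b ∈ S := hall b (Sym2.mem_mk_right _ _)
        exact ⟨s(⟨a, ha⟩, ⟨b, hb⟩), he, by rw [Sym2.map_pair_eq]⟩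
  rw [← himg, Set.ncard_image_of_injective _ (Sym2.map.injective Subtype.val_injective)]
  have h1 : HS.edgeSet.ncard = HS.edgeFinset.card := by
    rw [Set.ncard_eq_toFinset_card', edgeFinset]
  rw [h1]
  have := HS.card_edgeFinset_le_card_choose_two
  have h2 : Fintype.card ↥S = S.ncard := by
    rw [Set.ncard_eq_toFinset_card', Set.toFinset_card]
  rwa [h2] at this

lemma TB_bound_strict {V : Type*} [Fintype V] (G : SimpleGraph V) (S : Set V)
    {u v : V} (hu : u ∈ S) (hv : v ∈ S) (huv : u ≠ v) (hnadj : ¬ G.Adj u v) :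
    {e ∈ G.edgeSet | ∀ v ∈ e, v ∈ S}.ncard + 1 ≤ S.ncard.choose 2 := by
  classical
  set HS : SimpleGraph ↥S := SimpleGraph.induce S G with hHS
  have himg : Sym2.map (Subtype.val : ↥S → V) '' HS.edgeSet = {e ∈ G.edgeSet | ∀ v ∈ e, v ∈ S} := by
    apply Set.eq_of_subset_of_subset
    · rintro e' ⟨e, he, rfl⟩
      induction e with
      | _ a b =>
        rw [SimpleGraph.mem_edgeSet] at he
        rw [Sym2.map_pair_eq]
        refine ⟨he, ?_⟩
        intro w hw
        rcases Sym2.mem_iff.mp hw with rfl | rfl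
        · exact a.2
        · exact b.2
    · rintro e ⟨he, hall⟩
      induction e with
      | _ a b =>
        rw [SimpleGraph.mem_edgeSet] at he
        have ha : a ∈ S := hall a (Sym2.mem_mk_left _ _)
        have hb : b ∈ S := hall b (Sym2.mem_mk_right _ _)
        exact ⟨s(⟨a, ha⟩, ⟨b, hb⟩), he, by rw [Sym2.map_pair_eq]⟩
  rw [← himg, Set.ncard_image_of_injective _ (Sym2.map.injective Subtype.val_injective)]
  have h1 : HS.edgeSet.ncard = HS.edgeFinset.card := by
    rw [Set.ncard_eq_toFinset_card', edgeFinset]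
  rw [h1]
  have hssub : HS.edgeFinset ⊂ (⊤ : SimpleGraph ↥S).edgeFinset := by
    constructor
    · intro e he
      rw [mem_edgeFinset] at he ⊢
      revert he
      induction e with
      | _ a b =>
        intro he
        rw [SimpleGraph.mem_edgeSet] at he ⊢
        exact he.ne
    · intro hsub
      have : s((⟨u, hu⟩ : ↥S), ⟨v, hv⟩) ∈ (⊤ : SimpleGraph ↥S).edgeFinset := by
        rw [mem_edgeFinset, SimpleGraph.mem_edgeSet]
        exact fun h => huv (congrArg Subtype.val h)
      have := hsub this
      rw [mem_edgeFinset, SimpleGraph.mem_edgeSet] at this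
      exact hnadj this
  have hlt := Finset.card_lt_card hssub
  have h2 : Fintype.card ↥S = S.ncard := by
    rw [Set.ncard_eq_toFinset_card', Set.toFinset_card]
  rw [card_edgeFinset_top_eq_card_choose_two, h2] at hlt
  omega

-- closure lemma for reachability
lemma walk_closed {W : Type*} {H : SimpleGraph W} {A : Set W}
    (hcl : ∀ ⦃a b : W⦄, a ∈ A → H.Adj a b → b ∈ A) {u v : W} (p : H.Walk u v) :
    u ∈ A → v ∈ A := by
  induction p with
  | nil => exact id
  | cons hadj p ih => exact fun hu => ih (hcl hu hadj)

def zig (m j : ℕ) : ZMod (2*m) :=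
  if j % 2 = 0 then -((j/2 : ℕ) : ZMod (2*m)) else (((j+1)/2 : ℕ) : ZMod (2*m))

lemma natCast_inj_of_lt {N a b : ℕ} (ha : a < N) (hb : b < N)
    (h : (a : ZMod N) = (b : ZMod N)) : a = b := by
  haveI : NeZero N := ⟨by omega⟩
  have := congrArg ZMod.val h
  rwa [ZMod.val_cast_of_lt ha, ZMod.val_cast_of_lt hb] at this

lemma natCast_ne_neg {N a b : ℕ} (hab : 0 < a + b) (hN : a + b < N) :
    ((a : ZMod N) ≠ -(b : ZMod N)) := by
  intro h
  have : ((a + b : ℕ) : ZMod N) = 0 := by push_cast; rw [h]; ring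
  rw [ZMod.natCast_eq_zero_iff] at this
  have := Nat.le_of_dvd hab this
  omega

lemma zig_inj {m : ℕ} (hm : 1 ≤ m) : ∀ j1 j2, j1 < 2*m → j2 < 2*m →
    zig m j1 = zig m j2 → j1 = j2 := by
  intro j1 j2 h1 h2 heq
  unfold zig at heq
  rcases Nat.even_or_odd j1 with he1 | ho1 <;> rcases Nat.even_or_odd j2 with he2 | ho2
  · have e1 := Nat.even_iff.mp he1
    have e2 := Nat.even_iff.mp he2
    rw [if_pos e1, if_pos e2] at heq
    have := natCast_inj_of_lt (N := 2*m) (a := j1/2) (b := j2/2) (by omega) (by omega)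
      (neg_injective heq)
    omega
  · have e1 := Nat.even_iff.mp he1
    have o2 := Nat.odd_iff.mp ho2
    rw [if_pos e1, if_neg (by omega : ¬ j2 % 2 = 0)] at heq
    exact absurd heq.symm (natCast_ne_neg (N := 2*m) (a := (j2+1)/2) (b := j1/2)
      (by omega) (by omega))
  · have o1 := Nat.odd_iff.mp ho1
    have e2 := Nat.even_iff.mp he2
    rw [if_neg (by omega : ¬ j1 % 2 = 0), if_pos e2] at heq
    exact absurd heq (natCast_ne_neg (N := 2*m) (a := (j1+1)/2) (b := j2/2)
      (by omega) (by omega))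
  · have o1 := Nat.odd_iff.mp ho1
    have o2 := Nat.odd_iff.mp ho2
    rw [if_neg (by omega : ¬ j1 % 2 = 0), if_neg (by omega : ¬ j2 % 2 = 0)] at heq
    have := natCast_inj_of_lt (N := 2*m) (a := (j1+1)/2) (b := (j2+1)/2)
      (by omega) (by omega) heq
    omega

lemma zig_sum {m : ℕ} (j : ℕ) :
    zig m j + zig m (j+1) = if j % 2 = 0 then 1 else 0 := by
  unfold zig
  rcases Nat.even_or_odd j with he | ho
  · have h0 := Nat.even_iff.mp he
    rw [if_pos h0, if_neg (by omega), if_pos h0]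
    have : (j+1+1)/2 = j/2 + 1 := by omega
    rw [this]
    push_cast
    ring
  · have h1 := Nat.odd_iff.mp ho
    rw [if_neg (by omega), if_pos (by omega), if_neg (by omega)]
    ring

lemma reach_closed {W : Type*} {H : SimpleGraph W} {A : Set W}
    (hcl : ∀ ⦃a b : W⦄, a ∈ A → H.Adj a b → b ∈ A) {u v : W} (h : H.Reachable u v)
    (hu : u ∈ A) : v ∈ A := by
  obtain ⟨p⟩ := h
  exact walk_closed hcl p hu

section Construction
variable {V : Type*} [Fintype V]

def starSub (S : Set V) (w : V) (hw : w ∉ S) : (⊤ : SimpleGraph V).Subgraph where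
  verts := insert w S
  Adj x y := (x = w ∧ y ∈ S) ∨ (y = w ∧ x ∈ S)
  adj_sub := by
    rintro x y (⟨rfl, hy⟩ | ⟨rfl, hx⟩) <;> rw [top_adj]
    · rintro rfl; contradiction
    · rintro rfl; contradiction
  edge_vert := by
    rintro x y (⟨rfl, hy⟩ | ⟨rfl, hx⟩)
    · exact Set.mem_insert _ _
    · exact Set.mem_insert_of_mem _ hx
  symm := by constructor; rintro x y (⟨rfl, h⟩ | ⟨rfl, h⟩); exacts [Or.inr ⟨rfl, h⟩, Or.inl ⟨rfl, h⟩]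

lemma starSub_adj {S : Set V} {w : V} {hw : w ∉ S} {x y : V} :
    (starSub S w hw).Adj x y ↔ (x = w ∧ y ∈ S) ∨ (y = w ∧ x ∈ S) := Iff.rfl

lemma starSub_isSteiner (S : Set V) (w : V) (hw : w ∉ S) :
    (⊤ : SimpleGraph V).IsSteinerTree S (starSub S w hw) := by
  classical
  set T := starSub S w hw with hT
  have hwv : w ∈ T.verts := Set.mem_insert _ _
  refine ⟨Set.subset_insert _ _, ?_, ?_⟩
  · -- connected
    have hreach : ∀ c : ↥T.verts, T.coe.Reachable c ⟨w, hwv⟩ := by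
      intro c
      rcases Set.mem_insert_iff.mp c.2 with hc | hc
      · rw [show c = ⟨w, hwv⟩ from Subtype.ext hc]
      · exact Adj.reachable (by exact Or.inr ⟨rfl, hc⟩)
    haveI : Nonempty ↥T.verts := ⟨⟨w, hwv⟩⟩
    exact Connected.mk (fun a b => (hreach a).trans (hreach b).symm)
  · -- acyclic
    have aux : ∀ (x y : ↥T.verts), x.val ∈ S → y.val = w →
        ¬ (T.coe \ fromEdgeSet {s(x, y)}).Reachable x y := by
      intro x y hxS hyw hre
      have hclosed : ∀ ⦃u v : ↥T.verts⦄, u ∈ ({x} : Set ↥T.verts) →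
          (T.coe \ fromEdgeSet {s(x, y)}).Adj u v → v ∈ ({x} : Set ↥T.verts) := by
        intro u v hu huv
        rw [Set.mem_singleton_iff] at hu
        subst hu
        exfalso
        obtain ⟨hadj2, hne⟩ := huv
        rcases (by exact hadj2 : T.Adj u.val v.val) with ⟨h1, _⟩ | ⟨h1, _⟩
        · exact hw (h1 ▸ hxS)
        · have hveq : v = y := Subtype.ext (h1.trans hyw.symm)
          subst hveq
          exact hne ⟨rfl, (hadj2.ne)⟩
      have hyx := reach_closed hclosed hre (Set.mem_singleton x)
      rw [Set.mem_singleton_iff] at hyx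
      apply hw
      rw [← hyw, hyx]
      exact hxS
    rw [isAcyclic_iff_forall_adj_isBridge]
    intro a b hadj
    rw [isBridge_iff]
    rcases (by exact hadj : T.Adj a.val b.val) with ⟨h1, h2⟩ | ⟨h1, h2⟩
    · -- a = w, b ∈ S
      intro hre
      have hab : s(a, b) = s(b, a) := Sym2.eq_swap
      rw [hab] at hre
      exact aux b a h2 h1 hre.symm
    · -- b = w, a ∈ S
      exact fun hre => aux a b h2 h1 hre
end Construction

section PathCons
variable {V : Type*} [Fintype V]

def pathSub (S : Set V) (m : ℕ) (f : ZMod (2*m) → V) (hfr : Set.range f = S) (i : ℕ) : (⊤ : SimpleGraph V).Subgraph where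
  verts := S
  Adj x y := x ≠ y ∧ ∃ j : ℕ, j + 2 ≤ 2*m ∧
    ((x = f ((i : ZMod (2*m)) + zig m j) ∧ y = f ((i : ZMod (2*m)) + zig m (j+1))) ∨
     (y = f ((i : ZMod (2*m)) + zig m j) ∧ x = f ((i : ZMod (2*m)) + zig m (j+1))))
  adj_sub := by
    rintro x y ⟨hne, _⟩
    rwa [top_adj]
  edge_vert := by
    rintro x y ⟨hne, j, hj, (⟨rfl, _⟩ | ⟨_, rfl⟩)⟩ <;> · rw [← hfr]; exact Set.mem_range_self _
  symm := by
    constructor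
    rintro x y ⟨hne, j, hj, h⟩
    exact ⟨hne.symm, j, hj, h.symm⟩

-- injectivity of the zigzag vertex sequence
lemma pv_inj (m : ℕ) (f : ZMod (2*m) → V) (hm : 1 ≤ m) (hfi : Function.Injective f)
    {i : ℕ} {j1 j2 : ℕ} (h1 : j1 < 2*m) (h2 : j2 < 2*m)
    (h : f ((i : ZMod (2*m)) + zig m j1) = f ((i : ZMod (2*m)) + zig m j2)) : j1 = j2 :=
  zig_inj hm j1 j2 h1 h2 (add_left_cancel (hfi h))

-- adjacency of consecutive path vertices
lemma pathSub_adj_consec (S : Set V) (m : ℕ) (f : ZMod (2*m) → V) (hm : 1 ≤ m)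
    (hfi : Function.Injective f) (hfr : Set.range f = S) (i : ℕ) {j : ℕ} (hj : j + 2 ≤ 2*m) :
    (pathSub S m f hfr i).Adj (f ((i : ZMod (2*m)) + zig m j))
      (f ((i : ZMod (2*m)) + zig m (j+1))) := by
  refine ⟨?_, j, hj, Or.inl ⟨rfl, rfl⟩⟩
  intro h
  exact absurd (pv_inj m f hm hfi (by omega) (by omega) h) (by omega)

lemma pathSub_isSteiner (S : Set V) (m : ℕ) (f : ZMod (2*m) → V) (hm : 1 ≤ m)
    (hfi : Function.Injective f) (hfr : Set.range f = S) (i : ℕ) :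
    (⊤ : SimpleGraph V).IsSteinerTree S (pathSub S m f hfr i) := by
  classical
  set T := pathSub S m f hfr i with hT
  have hvS : T.verts = S := rfl
  have hmem : ∀ j : ℕ, f ((i : ZMod (2*m)) + zig m j) ∈ T.verts := by
    intro j
    rw [hvS, ← hfr]
    exact Set.mem_range_self _
  -- surjectivity of the vertex sequence
  have hsurj : ∀ z : ZMod (2*m), ∃ j : ℕ, j < 2*m ∧ (i : ZMod (2*m)) + zig m j = z := by
    haveI : NeZero (2*m) := ⟨by omega⟩
    intro z
    have hcard : ((Finset.range (2*m)).image (fun j => (i : ZMod (2*m)) + zig m j)).card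
        = 2*m := by
      rw [Finset.card_image_of_injOn, Finset.card_range]
      intro a ha b hb hab
      rw [Finset.mem_coe, Finset.mem_range] at ha hb
      exact zig_inj hm a b ha hb (add_left_cancel hab)
    have huniv : ((Finset.range (2*m)).image (fun j => (i : ZMod (2*m)) + zig m j))
        = Finset.univ := by
      apply Finset.eq_univ_of_card
      rw [hcard, ZMod.card]
    have : z ∈ ((Finset.range (2*m)).image (fun j => (i : ZMod (2*m)) + zig m j)) := by
      rw [huniv]; exact Finset.mem_univ _
    obtain ⟨j, hj, hjz⟩ := Finset.mem_image.mp this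
    exact ⟨j, Finset.mem_range.mp hj, hjz⟩
  refine ⟨le_of_eq hvS.symm, ?_, ?_⟩
  · -- connected
    have hreach : ∀ j : ℕ, j < 2*m → T.coe.Reachable ⟨_, hmem 0⟩ ⟨_, hmem j⟩ := by
      intro j
      induction j with
      | zero => intro _; rfl
      | succ j ih =>
        intro hj
        refine (ih (by omega)).trans (Adj.reachable ?_)
        exact pathSub_adj_consec S m f hm hfi hfr i (by omega)
    haveI : Nonempty ↥T.verts := ⟨⟨_, hmem 0⟩⟩
    refine Connected.mk (fun a b => ?_)
    have key : ∀ c : ↥T.verts, T.coe.Reachable ⟨_, hmem 0⟩ c := by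
      intro c
      have hc : c.val ∈ Set.range f := by rw [hfr]; exact c.2
      obtain ⟨z, hz⟩ := hc
      obtain ⟨j, hj, hjz⟩ := hsurj z
      have : c = ⟨_, hmem j⟩ :=
        Subtype.ext (show (c : V) = f ((i : ZMod (2*m)) + zig m j) from by rw [← hz, hjz])
      rw [this]
      exact hreach j hj
    exact (key a).symm.trans (key b)
  · -- acyclic
    have aux : ∀ (j : ℕ), j + 2 ≤ 2*m → ∀ (u v : ↥T.verts),
        u.val = f ((i : ZMod (2*m)) + zig m j) → v.val = f ((i : ZMod (2*m)) + zig m (j+1)) →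
        ¬ (T.coe \ fromEdgeSet {s(u, v)}).Reachable u v := by
      intro j hj u v hu hv hre
      set A : Set ↥T.verts := {x | ∃ l, l ≤ j ∧ x.val = f ((i : ZMod (2*m)) + zig m l)} with hA
      have hclosed : ∀ ⦃x y : ↥T.verts⦄, x ∈ A →
          (T.coe \ fromEdgeSet {s(u, v)}).Adj x y → y ∈ A := by
        intro x y hx hxy
        obtain ⟨l, hlj, hxl⟩ := hx
        obtain ⟨hadj2, hnd⟩ := hxy
        obtain ⟨hne, j', hj', hor⟩ := (by exact hadj2 : T.Adj x.val y.val)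
        rcases hor with ⟨hx', hy'⟩ | ⟨hy', hx'⟩
        · -- x = c j', y = c (j'+1)
          have hlj' : j' = l :=
            pv_inj m f hm hfi (by omega) (by omega) (hx'.symm.trans hxl)
          subst hlj'
          by_cases hcase : j' = j
          · exfalso
            subst hcase
            apply hnd
            refine ⟨?_, Subtype.coe_ne_coe.mp hne⟩
            have hxu : x = u := Subtype.ext (hxl.trans hu.symm)
            have hyv : y = v := Subtype.ext (hy'.trans hv.symm)
            rw [hxu, hyv]
            rfl
          · exact ⟨j' + 1, by omega, hy'⟩
        · -- y = c j', x = c (j'+1)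
          have hlj' : j' + 1 = l :=
            pv_inj m f hm hfi (by omega) (by omega) (hx'.symm.trans hxl)
          exact ⟨j', by omega, hy'⟩
      have hvA := reach_closed hclosed hre ⟨j, le_refl j, hu⟩
      obtain ⟨l, hlj, hvl⟩ := hvA
      have := pv_inj m f hm hfi (by omega) (by omega : l < 2*m) (hv.symm.trans hvl)
      omega
    rw [isAcyclic_iff_forall_adj_isBridge]
    intro a b hadj
    rw [isBridge_iff]
    obtain ⟨hne, j, hj, hor⟩ := (by exact hadj : T.Adj a.val b.val)
    rcases hor with ⟨ha, hb⟩ | ⟨hb, ha⟩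
    · exact aux j hj a b ha hb
    · intro hre
      have hab : s(a, b) = s(b, a) := Sym2.eq_swap
      rw [hab] at hre
      exact aux j hj b a hb ha hre.symm
end PathCons

section Disj
variable {V : Type*} [Fintype V]

lemma disj_star_star (S : Set V) {w w' : V} (hw : w ∉ S) (hw' : w' ∉ S) (hne : w ≠ w') :
    Disjoint (starSub S w hw).edgeSet (starSub S w' hw').edgeSet := by
  rw [Set.disjoint_left]
  intro e he1 he2
  induction e with
  | _ x y =>
    rw [Subgraph.mem_edgeSet] at he1 he2
    rcases he1 with ⟨rfl, h1⟩ | ⟨rfl, h1⟩ <;> rcases he2 with ⟨h2, h3⟩ | ⟨h2, h3⟩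
    · exact hne h2
    · exact hw' (h2 ▸ h1)
    · exact hw' (h2 ▸ h1)
    · exact hne h2

lemma disj_star_path (S : Set V) {w : V} (hw : w ∉ S) (m : ℕ) (f : ZMod (2*m) → V)
    (hfr : Set.range f = S) (i : ℕ) :
    Disjoint (starSub S w hw).edgeSet (pathSub S m f hfr i).edgeSet := by
  rw [Set.disjoint_left]
  intro e he1 he2
  induction e with
  | _ x y =>
    rw [Subgraph.mem_edgeSet] at he1 he2
    obtain ⟨_, j, hj, hor⟩ := he2
    have hxS : x ∈ S ∧ y ∈ S := by
      rcases hor with ⟨rfl, rfl⟩ | ⟨rfl, rfl⟩ <;>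
        exact ⟨by rw [← hfr]; exact Set.mem_range_self _, by rw [← hfr]; exact Set.mem_range_self _⟩
    rcases he1 with ⟨rfl, _⟩ | ⟨rfl, _⟩
    · exact hw hxS.1
    · exact hw hxS.2

lemma pv_sum (m i j : ℕ) : (i : ZMod (2*m)) + zig m j + ((i : ZMod (2*m)) + zig m (j+1))
    = ((2*i + (if j % 2 = 0 then 1 else 0) : ℕ) : ZMod (2*m)) := by
  have hz : zig m j + zig m (j+1) = (((if j % 2 = 0 then 1 else 0) : ℕ) : ZMod (2*m)) := by
    rw [zig_sum]; split <;> simp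
  calc (i : ZMod (2*m)) + zig m j + ((i : ZMod (2*m)) + zig m (j+1))
      = ((i : ZMod (2*m)) + (i : ZMod (2*m))) + (zig m j + zig m (j+1)) := by ring
    _ = _ := by rw [hz]; push_cast; ring

lemma disj_path_path (S : Set V) (m : ℕ) (f : ZMod (2*m) → V) (hm : 1 ≤ m)
    (hfi : Function.Injective f) (hfr : Set.range f = S) {i i' : ℕ}
    (hi : i < m) (hi' : i' < m) (hne : i ≠ i') :
    Disjoint (pathSub S m f hfr i).edgeSet (pathSub S m f hfr i').edgeSet := by
  rw [Set.disjoint_left]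
  intro e he1 he2
  induction e with
  | _ x y =>
    rw [Subgraph.mem_edgeSet] at he1 he2
    obtain ⟨hxy, j, hj, hor⟩ := he1
    obtain ⟨_, j', hj', hor'⟩ := he2
    have hsum : (i : ZMod (2*m)) + zig m j + ((i : ZMod (2*m)) + zig m (j+1))
        = (i' : ZMod (2*m)) + zig m j' + ((i' : ZMod (2*m)) + zig m (j'+1)) := by
      rcases hor with ⟨hx, hy⟩ | ⟨hy, hx⟩ <;> rcases hor' with ⟨hx', hy'⟩ | ⟨hy', hx'⟩
      · rw [hfi (hx.symm.trans hx'), hfi (hy.symm.trans hy')]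
      · rw [hfi (hx.symm.trans hx'), hfi (hy.symm.trans hy')]; ring
      · rw [hfi (hx.symm.trans hx'), hfi (hy.symm.trans hy')]; ring
      · rw [hfi (hx.symm.trans hx'), hfi (hy.symm.trans hy')]
    rw [pv_sum, pv_sum] at hsum
    set e1 : ℕ := if j % 2 = 0 then 1 else 0 with he1d
    set e2 : ℕ := if j' % 2 = 0 then 1 else 0 with he2d
    have hb1 : e1 ≤ 1 := by rw [he1d]; split <;> omega
    have hb2 : e2 ≤ 1 := by rw [he2d]; split <;> omega
    have := natCast_inj_of_lt (N := 2*m) (a := 2*i + e1) (b := 2*i' + e2)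
      (by omega) (by omega) hsum
    omega
end Disj

section Assemble
variable {V : Type*} [Fintype V]

lemma top_family (S : Set V) (m : ℕ) (hm : 1 ≤ m) (hS : S.ncard = 2*m)
    (hk : 2*m ≤ Fintype.card V) :
    ∃ T : Fin (Fintype.card V - m) → (⊤ : SimpleGraph V).Subgraph,
      (∀ i, (⊤ : SimpleGraph V).IsSteinerTree S (T i)) ∧
      ∀ i j, i ≠ j → Disjoint (T i).edgeSet (T j).edgeSet := by
  classical
  haveI : NeZero (2*m) := ⟨by omega⟩
  have hcardS : Fintype.card ↥S = 2*m := by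
    rw [← hS, Set.ncard_eq_toFinset_card', Set.toFinset_card]
  have hcards : Fintype.card (ZMod (2*m)) = Fintype.card ↥S := by
    rw [ZMod.card, hcardS]
  set eqv0 : ZMod (2*m) ≃ ↥S := Fintype.equivOfCardEq hcards with heqv0
  set f : ZMod (2*m) → V := fun z => (eqv0 z : V) with hf
  have hfi : Function.Injective f := fun a b h => eqv0.injective (Subtype.ext h)
  have hfr : Set.range f = S := by
    rw [hf]
    have : Set.range (fun z => (eqv0 z : V)) = Subtype.val '' Set.range eqv0 :=
      (Set.range_comp _ _)
    rw [this, Equiv.range_eq_univ, Set.image_univ, Subtype.range_coe]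
  have hcardC : Fintype.card ↥(Sᶜ) = Fintype.card V - 2*m := by
    rw [Fintype.card_compl_set, hcardS]
  have hcardI : Fintype.card (↥(Sᶜ) ⊕ Fin m) = Fintype.card V - m := by
    rw [Fintype.card_sum, hcardC, Fintype.card_fin]
    omega
  set F : (↥(Sᶜ) ⊕ Fin m) → (⊤ : SimpleGraph V).Subgraph :=
    Sum.elim (fun w => starSub S w.val w.2) (fun i => pathSub S m f hfr i.val) with hF
  have hFs : ∀ i, (⊤ : SimpleGraph V).IsSteinerTree S (F i) := by
    rintro (w | i)
    · exact starSub_isSteiner S w.val w.2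
    · exact pathSub_isSteiner S m f hm hfi hfr i.val
  have hFd : ∀ i j, i ≠ j → Disjoint (F i).edgeSet (F j).edgeSet := by
    rintro (w | i) (w' | i') hne
    · exact disj_star_star S w.2 w'.2 (fun h => hne (by rw [Subtype.ext h]))
    · exact disj_star_path S w.2 m f hfr _
    · exact (disj_star_path S w'.2 m f hfr _).symm
    · refine disj_path_path S m f hm hfi hfr i.2 i'.2 (fun h => hne ?_)
      rw [Fin.ext h]
  set eqv : Fin (Fintype.card V - m) ≃ (↥(Sᶜ) ⊕ Fin m) :=
    Fintype.equivOfCardEq (by rw [Fintype.card_fin, hcardI]) with heqv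
  refine ⟨F ∘ eqv, fun i => hFs _, fun i j hij => hFd _ _ (fun h => hij (eqv.injective h))⟩
end Assemble

section Glue
variable {V : Type*} [Fintype V]

lemma choose2_eq (m : ℕ) : (2*m).choose 2 = m * (2*m - 1) := by
  rw [Nat.choose_two_right]
  have h1 : 2*m*(2*m-1) = 2*(m*(2*m-1)) := by
    obtain ⟨q, hq⟩ : ∃ q, 2*m - 1 = q := ⟨_, rfl⟩
    rw [hq]; ring
  rw [h1, Nat.mul_div_cancel_left _ (by omega : 0 < 2)]

lemma arith_eq (m d : ℕ) : m + m*(2*m-1) + 2*m*d = (m+d)*(2*m) := by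
  rcases Nat.eq_zero_or_pos m with rfl | hm
  · simp
  · obtain ⟨q, hq⟩ : ∃ q, 2*m = q + 1 := ⟨2*m - 1, by omega⟩
    have h1 : 2*m - 1 = q := by omega
    rw [h1, hq]
    ring

lemma mem_le (G : SimpleGraph V) (S : Set V) (m : ℕ) (hm : 1 ≤ m) (hS : S.ncard = 2*m)
    (hk : 2*m ≤ Fintype.card V) {t : ℕ}
    (ht : t ∈ {n | ∃ T : Fin n → G.Subgraph, (∀ i, G.IsSteinerTree S (T i)) ∧
      ∀ i j, i ≠ j → Disjoint (T i).edgeSet (T j).edgeSet}) :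
    t ≤ Fintype.card V - m := by
  obtain ⟨T, hT, hd⟩ := ht
  obtain ⟨x, B, hB, hxB, htot⟩ := core_count G S m t hm hS T hT hd
  have hBle : B ≤ m * (2*m - 1) := by
    rw [hB, ← choose2_eq, ← hS]; exact TB_bound G S
  have hx : x ≤ m :=
    Nat.le_of_mul_le_mul_right (le_trans hxB hBle) (by omega : 0 < 2*m - 1)
  set n := Fintype.card V with hn
  obtain ⟨d, hd'⟩ : ∃ d, n = 2*m + d := ⟨n - 2*m, by omega⟩
  have key : t * (2*m) ≤ (n - m) * (2*m) := by
    calc t * (2*m) ≤ x + B + 2*m*(n - 2*m) := htot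
      _ ≤ m + m*(2*m-1) + 2*m*(n-2*m) := by omega
      _ = (n - m)*(2*m) := by
          rw [show n - 2*m = d from by omega, show n - m = m + d from by omega]
          exact arith_eq m d
  exact Nat.le_of_mul_le_mul_right key (by omega : 0 < 2*m)

lemma mem_lt (G : SimpleGraph V) (S : Set V) (m : ℕ) (hm : 1 ≤ m) (hS : S.ncard = 2*m)
    (hk : 2*m ≤ Fintype.card V) {u v : V} (hu : u ∈ S) (hv : v ∈ S) (huv : u ≠ v)
    (hnadj : ¬ G.Adj u v) {t : ℕ}
    (ht : t ∈ {n | ∃ T : Fin n → G.Subgraph, (∀ i, G.IsSteinerTree S (T i)) ∧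
      ∀ i j, i ≠ j → Disjoint (T i).edgeSet (T j).edgeSet}) :
    t + 1 ≤ Fintype.card V - m := by
  obtain ⟨T, hT, hd⟩ := ht
  obtain ⟨x, B, hB, hxB, htot⟩ := core_count G S m t hm hS T hT hd
  have hBle : B + 1 ≤ m * (2*m - 1) := by
    rw [hB, ← choose2_eq, ← hS]; exact TB_bound_strict G S hu hv huv hnadj
  have hx : x + 1 ≤ m := by
    by_contra hcon
    have hxm : m ≤ x := by omega
    have := Nat.mul_le_mul_right (2*m-1) hxm
    omega
  set n := Fintype.card V with hn
  obtain ⟨d, hd'⟩ : ∃ d, n = 2*m + d := ⟨n - 2*m, by omega⟩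
  have key : t * (2*m) + 2 ≤ (n - m) * (2*m) := by
    calc t * (2*m) + 2 ≤ x + B + 2*m*(n - 2*m) + 2 := by omega
      _ ≤ m + m*(2*m-1) + 2*m*(n-2*m) := by omega
      _ = (n - m)*(2*m) := by
          rw [show n - 2*m = d from by omega, show n - m = m + d from by omega]
          exact arith_eq m d
  have hlt : (2*m) * t < (2*m) * (n - m) := by
    have h1 : t * (2*m) < (n-m) * (2*m) := by omega
    calc (2*m) * t = t * (2*m) := Nat.mul_comm _ _
      _ < (n-m) * (2*m) := h1
      _ = (2*m) * (n-m) := Nat.mul_comm _ _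
  have := Nat.lt_of_mul_lt_mul_left hlt
  omega

lemma zero_mem (G : SimpleGraph V) (S : Set V) :
    0 ∈ {n | ∃ T : Fin n → G.Subgraph, (∀ i, G.IsSteinerTree S (T i)) ∧
      ∀ i j, i ≠ j → Disjoint (T i).edgeSet (T j).edgeSet} :=
  ⟨Fin.elim0, fun i => i.elim0, fun i => i.elim0⟩

lemma lambda_le (G : SimpleGraph V) (S : Set V) (m : ℕ) (hm : 1 ≤ m) (hS : S.ncard = 2*m)
    (hk : 2*m ≤ Fintype.card V) :
    G.steinerLambda S ≤ Fintype.card V - m :=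
  csSup_le ⟨0, zero_mem G S⟩ (fun _ ht => mem_le G S m hm hS hk ht)

lemma lambda_lt (G : SimpleGraph V) (S : Set V) (m : ℕ) (hm : 1 ≤ m) (hS : S.ncard = 2*m)
    (hk : 2*m ≤ Fintype.card V) {u v : V} (hu : u ∈ S) (hv : v ∈ S) (huv : u ≠ v)
    (hnadj : ¬ G.Adj u v) :
    G.steinerLambda S + 1 ≤ Fintype.card V - m := by
  have h1 : G.steinerLambda S ≤ Fintype.card V - m - 1 :=
    csSup_le ⟨0, zero_mem G S⟩ (fun t ht => by
      have := mem_lt G S m hm hS hk hu hv huv hnadj ht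
      omega)
  have h2 : 1 ≤ Fintype.card V - m := by
    have := mem_lt G S m hm hS hk hu hv huv hnadj (zero_mem G S)
    omega
  omega

lemma lambda_top (S : Set V) (m : ℕ) (hm : 1 ≤ m) (hS : S.ncard = 2*m)
    (hk : 2*m ≤ Fintype.card V) :
    (⊤ : SimpleGraph V).steinerLambda S = Fintype.card V - m := by
  apply le_antisymm (lambda_le ⊤ S m hm hS hk)
  apply le_csSup
  · exact ⟨Fintype.card V - m, fun t ht => mem_le ⊤ S m hm hS hk ht⟩
  · obtain ⟨T, h1, h2⟩ := top_family S m hm hS hk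
    exact ⟨T, h1, h2⟩

lemma genEdgeConn_top (m : ℕ) (hm : 1 ≤ m) (hk : 2*m ≤ Fintype.card V) :
    (⊤ : SimpleGraph V).genEdgeConn (2*m) = Fintype.card V - m := by
  have hex : ∃ S : Set V, S.ncard = 2*m := by
    obtain ⟨F, _, hF⟩ := Finset.exists_subset_card_eq (by simpa using hk :
      2*m ≤ Finset.univ (α := V).card)
    exact ⟨↑F, by rw [Set.ncard_coe_finset, hF]⟩
  obtain ⟨S0, hS0⟩ := hex
  apply le_antisymm
  · apply Nat.sInf_le
    exact ⟨S0, hS0, lambda_top S0 m hm hS0 hk⟩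
  · refine le_csInf ⟨(⊤ : SimpleGraph V).steinerLambda S0, ⟨S0, hS0, rfl⟩⟩ ?_
    rintro b ⟨S, hS, rfl⟩
    rw [lambda_top S m hm hS hk]
end Glue


theorem lambda_k_eq_max_iff_complete_even {V : Type*} [Fintype V]
    (G : SimpleGraph V) (hG : G.Connected) (n k : ℕ) (hn : Fintype.card V = n)
    (h2 : 2 ≤ k) (hk : k ≤ n) (hke : Even k) :
    G.genEdgeConn k = n - k / 2 ↔ G = ⊤ := by
  classical
  obtain ⟨m, hm⟩ := hke
  have hm2 : k = 2*m := by omega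
  have hm1 : 1 ≤ m := by omega
  have hdiv : k / 2 = m := by omega
  subst hn
  have hkc : 2*m ≤ Fintype.card V := by omega
  constructor
  · intro heq
    by_contra hne
    have hex : ∃ u v : V, u ≠ v ∧ ¬ G.Adj u v := by
      by_contra hc
      push_neg at hc
      apply hne
      ext u v
      rw [top_adj]
      exact ⟨fun h => h.ne, fun h => hc u v h⟩
    obtain ⟨u, v, huv, hnadj⟩ := hex
    have hsub : ({u, v} : Finset V) ⊆ Finset.univ := Finset.subset_univ _
    have hc2 : ({u, v} : Finset V).card = 2 := Finset.card_pair huv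
    obtain ⟨F, hF1, _, hF3⟩ := Finset.exists_subsuperset_card_eq hsub
      (by omega : ({u, v} : Finset V).card ≤ 2*m) (by simpa using hkc)
    set S : Set V := ↑F with hSdef
    have hS : S.ncard = 2*m := by rw [hSdef, Set.ncard_coe_finset, hF3]
    have hu : u ∈ S := hF1 (by simp)
    have hv : v ∈ S := hF1 (by simp)
    have hlt := lambda_lt G S m hm1 hS hkc hu hv huv hnadj
    have hinf : G.genEdgeConn k ≤ G.steinerLambda S := by
      apply Nat.sInf_le
      exact ⟨S, by rw [hS, hm2], rfl⟩
    rw [heq, hdiv] at hinf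
    omega
  · intro h
    subst h
    rw [hdiv, hm2]
    exact genEdgeConn_top m hm1 hkc
end

section
/- Let G be a graph, S ⊆ V(G) with |S| = k, and T a tree in G containing all vertices of S. If every edge of T lies in the induced subgraph G[S], then T uses exactly k−1 edges of E(G[S]) ∪ E_G[S, S̄]. If T contains at least one edge joining S to its complement S̄, then T uses at least k edges of E(G[S]) ∪ E_G[S, S̄]. -/
open SimpleGraph

theorem steiner_tree_edge_count {V : Type*} [Fintype V] (G : SimpleGraph V)
    (S : Set V) (k : ℕ) (hS : S.ncard = k) (T : G.Subgraph)
    (hT : G.IsSteinerTree S T) :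
    ((∀ e ∈ T.edgeSet, ∀ v ∈ e, v ∈ S) →
      {e ∈ T.edgeSet | ∃ v ∈ e, v ∈ S}.ncard = k - 1) ∧
    ((∃ e ∈ T.edgeSet, ∃ v ∈ e, ∃ w ∈ e, v ∈ S ∧ w ∉ S) →
      k ≤ {e ∈ T.edgeSet | ∃ v ∈ e, v ∈ S}.ncard) := by
  classical
  obtain ⟨hSsub, htree⟩ := hT
  constructor
  · intro h
    have hset : {e ∈ T.edgeSet | ∃ v ∈ e, v ∈ S} = T.edgeSet := by
      ext e
      refine ⟨fun he => he.1, fun he => ⟨he, ?_⟩⟩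
      induction e with
      | h a b => exact ⟨a, Sym2.mem_mk_left a b, h _ he a (Sym2.mem_mk_left a b)⟩
    rw [hset]
    rcases S.eq_empty_or_nonempty with hSe | ⟨s, hs⟩
    · have hempty : T.edgeSet = ∅ := by
        ext e
        simp only [Set.mem_empty_iff_false, iff_false]
        intro he
        induction e with
        | h a b =>
          have := h _ he a (Sym2.mem_mk_left a b)
          rw [hSe] at this
          exact this
      rw [hempty]
      have : k = 0 := by rw [← hS, hSe, Set.ncard_empty]
      simp [this]
    · have hverts : T.verts = S := by
        apply Set.Subset.antisymm _ hSsub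
        intro x hx
        by_contra hxS
        have hxs : x ≠ s := fun hh => hxS (hh ▸ hs)
        obtain ⟨p⟩ := htree.isConnected ⟨x, hx⟩ ⟨s, hSsub hs⟩
        have hnn : ¬ p.Nil :=
          SimpleGraph.Walk.not_nil_of_ne (fun hh => hxs (congrArg Subtype.val hh))
        obtain ⟨u, hadj, q, rfl⟩ := SimpleGraph.Walk.not_nil_iff.mp hnn
        have hadj' : T.Adj x u.val := hadj
        have hxS' : x ∈ S :=
          h _ (SimpleGraph.Subgraph.mem_edgeSet.mpr hadj') x (Sym2.mem_mk_left _ _)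
        exact hxS hxS'
      haveI : Fintype T.verts := Fintype.ofFinite _
      haveI : Fintype T.coe.edgeSet := Fintype.ofFinite _
      have hcard := htree.card_edgeFinset
      have h1 : T.edgeSet.ncard = T.coe.edgeSet.ncard := by
        rw [← T.image_coe_edgeSet_coe,
          Set.ncard_image_of_injective _ (Sym2.map.injective Subtype.val_injective)]
      have h2 : T.coe.edgeSet.ncard = T.coe.edgeFinset.card := by
        rw [Set.ncard_eq_toFinset_card']
        congr 1
      have h3 : Fintype.card T.verts = k := by
        rw [← hS, ← hverts, Set.ncard_eq_toFinset_card', Set.toFinset_card]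
      rw [h1, h2]
      omega
  · intro hyp
    obtain ⟨e0, he0, v0, hv0e, w, hwe, hv0S, hwS⟩ := hyp
    have hwT : w ∈ T.verts := T.mem_verts_of_mem_edge he0 hwe
    haveI : Nonempty V := ⟨w⟩
    set W : T.verts := ⟨w, hwT⟩ with hW
    have step : ∀ (v : V) (hv : v ∈ S), ∃ u : V, T.Adj v u ∧ ∃ hu : u ∈ T.verts,
        T.coe.dist ⟨u, hu⟩ W < T.coe.dist ⟨v, hSsub hv⟩ W := by
      intro v hv
      have hvw : (⟨v, hSsub hv⟩ : T.verts) ≠ W := by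
        intro hh
        have hvw' : v = w := congrArg Subtype.val hh
        exact hwS (hvw' ▸ hv)
      have hpos : 0 < T.coe.dist ⟨v, hSsub hv⟩ W :=
        htree.isConnected.pos_dist_of_ne hvw
      obtain ⟨p, hp⟩ := htree.isConnected.exists_walk_length_eq_dist ⟨v, hSsub hv⟩ W
      have hnn : ¬ p.Nil := by
        rw [SimpleGraph.Walk.not_nil_iff_lt_length, hp]
        exact hpos
      obtain ⟨u, hadj, q, rfl⟩ := SimpleGraph.Walk.not_nil_iff.mp hnn
      refine ⟨u.val, hadj, u.2, ?_⟩
      have hq : T.coe.dist u W ≤ q.length := SimpleGraph.dist_le q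
      have hlen : q.length + 1 = T.coe.dist ⟨v, hSsub hv⟩ W := by
        simpa using hp
      have : T.coe.dist (⟨u.val, u.2⟩ : T.verts) W = T.coe.dist u W := by
        congr
      omega
    choose! f hadj hmem hdist using step
    have hinj : Set.InjOn (fun v => s(v, f v)) S := by
      intro a ha b hb hab
      simp only [Sym2.eq, Sym2.rel_iff', Prod.mk.injEq, Prod.swap_prod_mk] at hab
      rcases hab with ⟨rfl, -⟩ | ⟨h1, h2⟩
      · rfl
      · exfalso
        have da := hdist a ha
        have db := hdist b hb
        have e1 : (⟨f a, hmem a ha⟩ : T.verts) = ⟨b, hSsub hb⟩ := Subtype.ext h2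
        have e2 : (⟨f b, hmem b hb⟩ : T.verts) = ⟨a, hSsub ha⟩ := Subtype.ext h1.symm
        rw [e1] at da
        rw [e2] at db
        exact absurd db (not_lt.mpr da.le)
    have himg : (fun v => s(v, f v)) '' S ⊆ {e ∈ T.edgeSet | ∃ v ∈ e, v ∈ S} := by
      rintro e ⟨v, hv, rfl⟩
      exact ⟨SimpleGraph.Subgraph.mem_edgeSet.mpr (hadj v hv), v, Sym2.mem_mk_left _ _, hv⟩
    calc k = S.ncard := hS.symm
      _ = ((fun v => s(v, f v)) '' S).ncard := (Set.ncard_image_of_injOn hinj).symm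
      _ ≤ {e ∈ T.edgeSet | ∃ v ∈ e, v ∈ S}.ncard :=
          Set.ncard_le_ncard himg (Set.toFinite _)
end

section
/- Let G be a connected graph of order n ≥ 3 and ℓ a positive integer. If there exists S ⊆ V(G) with |S| = 3 such that the complement G̅ restricted to S induces no edges (i.e., G[S] = K_3) and the number of edges of G̅ with at least one endpoint in S is at least 3ℓ − 7, then λ_3(G) ≤ n − ℓ. -/
open SimpleGraph

namespace ThreeConnAux

variable {V : Type*}

lemma walk_closed {H : SimpleGraph V} {p q : V}
    (hp : ∀ y, H.Adj p y → y = q) (hq : ∀ y, H.Adj q y → y = p)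
    {a b : V} (W : H.Walk a b) (ha : a = p ∨ a = q) : b = p ∨ b = q := by
  induction W with
  | nil => exact ha
  | cons h w ih =>
      rcases ha with rfl | rfl
      · exact ih (Or.inr (hp _ h))
      · exact ih (Or.inl (hq _ h))

lemma core [Finite V] {G : SimpleGraph V} {T : G.Subgraph} (htree : T.coe.IsTree)
    {S : Set V} (hSv : S ⊆ T.verts) {p q r : V} (hpq : p ≠ q) (hpr : p ≠ r) (hqr : q ≠ r)
    (hSpqr : S = {p, q, r})
    (hn2 : {e ∈ T.edgeSet | ∃ x ∈ e, x ∈ S}.ncard ≤ 2)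
    (he : s(p, q) ∈ {e ∈ T.edgeSet | ∃ x ∈ e, x ∈ S})
    {er : Sym2 V} (her : er ∈ {e ∈ T.edgeSet | ∃ x ∈ e, x ∈ S}) (hrer : r ∈ er) :
    {e ∈ T.edgeSet | ∃ x ∈ e, x ∈ S} ⊆ {s(p,q), s(p,r), s(q,r)} := by
  have hpS : p ∈ S := by simp [hSpqr]
  have hqS : q ∈ S := by simp [hSpqr]
  have hrS : r ∈ S := by simp [hSpqr]
  set F := {e ∈ T.edgeSet | ∃ x ∈ e, x ∈ S} with hFdef
  have hner : s(p, q) ≠ er := by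
    intro h
    rw [← h] at hrer
    rw [Sym2.mem_iff] at hrer
    rcases hrer with h1 | h1
    · exact hpr h1.symm
    · exact hqr h1.symm
  have hsub : ({s(p,q), er} : Set (Sym2 V)) ⊆ F := by
    intro e he'
    rcases he' with rfl | h
    · exact he
    · rw [Set.mem_singleton_iff] at h; exact h ▸ her
  have hF : F = {s(p,q), er} := by
    refine (Set.eq_of_subset_of_ncard_le hsub ?_ (Set.toFinite _)).symm
    rwa [Set.ncard_pair hner]
  obtain ⟨x, hx⟩ := Sym2.mem_iff_exists.mp hrer
  have hTrx : T.Adj r x := SimpleGraph.Subgraph.mem_edgeSet.mp (hx ▸ her.1)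
  have hrx : r ≠ x := (T.adj_sub hTrx).ne
  by_cases hxS : x ∈ S
  · -- both edges lie inside the triangle
    rw [hSpqr] at hxS
    rw [hF]
    rcases hxS with rfl | rfl | rfl
    · intro e he'
      rcases he' with rfl | h
      · simp
      · rw [Set.mem_singleton_iff] at h; subst h
        rw [hx, Sym2.eq_swap]; simp
    · intro e he'
      rcases he' with rfl | h
      · simp
      · rw [Set.mem_singleton_iff] at h; subst h
        rw [hx, Sym2.eq_swap]; simp
    · exact absurd rfl hrx
  · -- contradiction: p and q are mutually exclusive neighbors
    exfalso
    have hnp : ∀ y, T.Adj p y → y = q := by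
      intro y hy
      have hyF : s(p, y) ∈ F := ⟨SimpleGraph.Subgraph.mem_edgeSet.mpr hy, ⟨p, by simp, hpS⟩⟩
      rw [hF] at hyF
      rcases hyF with h | h
      · rcases Sym2.eq_iff.mp h with ⟨_, h2⟩ | ⟨h1, h2⟩
        · exact h2
        · exact absurd h1 hpq
      · rw [Set.mem_singleton_iff, hx] at h
        rcases Sym2.eq_iff.mp h with ⟨h1, h2⟩ | ⟨h1, h2⟩
        · exact absurd h1 hpr
        · exact absurd (h1 ▸ hpS) hxS
    have hnq : ∀ y, T.Adj q y → y = p := by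
      intro y hy
      have hyF : s(q, y) ∈ F := ⟨SimpleGraph.Subgraph.mem_edgeSet.mpr hy, ⟨q, by simp, hqS⟩⟩
      rw [hF] at hyF
      rcases hyF with h | h
      · rcases Sym2.eq_iff.mp h with ⟨h1, h2⟩ | ⟨h1, h2⟩
        · exact absurd h1.symm hpq
        · exact h2
      · rw [Set.mem_singleton_iff, hx] at h
        rcases Sym2.eq_iff.mp h with ⟨h1, h2⟩ | ⟨h1, h2⟩
        · exact absurd h1 hqr
        · exact absurd (h1 ▸ hqS) hxS
    obtain ⟨W⟩ := htree.isConnected.preconnected ⟨p, hSv hpS⟩ ⟨r, hSv hrS⟩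
    have hp' : ∀ y : T.verts, T.coe.Adj ⟨p, hSv hpS⟩ y → y = ⟨q, hSv hqS⟩ := by
      intro y hy
      exact Subtype.ext (hnp y (by simpa using hy))
    have hq' : ∀ y : T.verts, T.coe.Adj ⟨q, hSv hqS⟩ y → y = ⟨p, hSv hpS⟩ := by
      intro y hy
      exact Subtype.ext (hnq y (by simpa using hy))
    rcases walk_closed hp' hq' W (Or.inl rfl) with h | h
    · exact hpr (congrArg Subtype.val h).symm
    · exact hqr (congrArg Subtype.val h).symm


lemma exists_nbr {G : SimpleGraph V} {T : G.Subgraph} (hT : T.coe.IsTree)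
    {u v : V} (hu : u ∈ T.verts) (hv : v ∈ T.verts) (huv : u ≠ v) :
    ∃ y, T.Adj u y := by
  obtain ⟨W⟩ := hT.isConnected.preconnected ⟨u, hu⟩ ⟨v, hv⟩
  have hnil : ¬ W.Nil := SimpleGraph.Walk.not_nil_of_ne (by simp [Subtype.ext_iff, huv])
  have := SimpleGraph.Walk.adj_snd hnil
  exact ⟨(W.snd : T.verts), by simpa using this⟩

lemma tree_dichotomy [Finite V] {G : SimpleGraph V} {S : Set V} {T : G.Subgraph}
    (htree : T.coe.IsTree) (hSv : S ⊆ T.verts)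
    {u v w : V} (huv : u ≠ v) (huw : u ≠ w) (hvw : v ≠ w)
    (hSuvw : S = {u, v, w}) :
    2 ≤ {e ∈ T.edgeSet | ∃ x ∈ e, x ∈ S}.ncard ∧
    (3 ≤ {e ∈ T.edgeSet | ∃ x ∈ e, x ∈ S}.ncard ∨
      {e ∈ T.edgeSet | ∃ x ∈ e, x ∈ S} ⊆ {s(u,v), s(u,w), s(v,w)}) := by
  have huS : u ∈ S := by simp [hSuvw]
  have hvS : v ∈ S := by simp [hSuvw]
  have hwS : w ∈ S := by simp [hSuvw]
  set F := {e ∈ T.edgeSet | ∃ x ∈ e, x ∈ S} with hFdef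
  obtain ⟨yu, hyu⟩ := exists_nbr htree (hSv huS) (hSv hvS) huv
  obtain ⟨yv, hyv⟩ := exists_nbr htree (hSv hvS) (hSv huS) huv.symm
  obtain ⟨yw, hyw⟩ := exists_nbr htree (hSv hwS) (hSv huS) huw.symm
  have hEu : s(u, yu) ∈ F := ⟨Subgraph.mem_edgeSet.mpr hyu, ⟨u, by simp, huS⟩⟩
  have hEv : s(v, yv) ∈ F := ⟨Subgraph.mem_edgeSet.mpr hyv, ⟨v, by simp, hvS⟩⟩
  have hEw : s(w, yw) ∈ F := ⟨Subgraph.mem_edgeSet.mpr hyw, ⟨w, by simp, hwS⟩⟩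
  have hcard2 : 2 ≤ F.ncard := by
    by_contra hcon
    push_neg at hcon
    have hle1 : F.ncard ≤ 1 := by omega
    have hall : ∀ {a b : Sym2 V}, a ∈ F → b ∈ F → a = b := fun ha hb => (Set.ncard_le_one_iff (Set.toFinite _)).mp hle1 ha hb
    have h1 : s(u, yu) = s(v, yv) := hall hEu hEv
    have h2 : s(u, yu) = s(w, yw) := hall hEu hEw
    have hvin : v ∈ s(u, yu) := h1 ▸ (by simp : v ∈ s(v, yv))
    have hwin : w ∈ s(u, yu) := h2 ▸ (by simp : w ∈ s(w, yw))
    have heq : s(u, yu) = s(u, v) := (Sym2.mem_and_mem_iff huv).mp ⟨by simp, hvin⟩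
    rw [heq, Sym2.mem_iff] at hwin
    rcases hwin with h | h
    · exact huw h.symm
    · exact hvw h.symm
  refine ⟨hcard2, ?_⟩
  by_cases h3 : 3 ≤ F.ncard
  · exact Or.inl h3
  push_neg at h3
  have hn2 : F.ncard ≤ 2 := by omega
  right
  -- two of the three chosen edges coincide
  have hshare : s(u, yu) = s(v, yv) ∨ s(u, yu) = s(w, yw) ∨ s(v, yv) = s(w, yw) := by
    by_contra hcon
    push_neg at hcon
    obtain ⟨d1, d2, d3⟩ := hcon
    have hsub : ({s(u,yu), s(v,yv), s(w,yw)} : Set (Sym2 V)) ⊆ F := by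
      intro e he'
      rcases he' with rfl | h
      · exact hEu
      rcases h with rfl | h
      · exact hEv
      · rw [Set.mem_singleton_iff] at h; exact h ▸ hEw
    have : ({s(u,yu), s(v,yv), s(w,yw)} : Set (Sym2 V)).ncard = 3 := by
      rw [Set.ncard_insert_of_notMem (by simp [d1, d2]) (Set.toFinite _),
        Set.ncard_pair d3]
    have := Set.ncard_le_ncard hsub (Set.toFinite _)
    omega
  rcases hshare with h | h | h
  · -- u,v share an edge; it must be s(u,v)
    have hvin : v ∈ s(u, yu) := h ▸ (by simp : v ∈ s(v, yv))
    have heq : s(u, yu) = s(u, v) := (Sym2.mem_and_mem_iff huv).mp ⟨by simp, hvin⟩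
    exact core htree hSv huv huw hvw hSuvw hn2 (heq ▸ hEu) hEw (by simp)
  · -- u,w share an edge s(u,w); use (p,q,r) = (u,w,v)
    have hwin : w ∈ s(u, yu) := h ▸ (by simp : w ∈ s(w, yw))
    have heq : s(u, yu) = s(u, w) := (Sym2.mem_and_mem_iff huw).mp ⟨by simp, hwin⟩
    have hS' : S = {u, w, v} := by rw [hSuvw]; ext x; simp; tauto
    have := core htree hSv huw huv hvw.symm hS' hn2 (heq ▸ hEu) hEv (by simp)
    intro e he'
    rcases this he' with h' | h' | h'
    · exact Or.inr (Or.inl h')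
    · exact Or.inl h'
    · rw [Set.mem_singleton_iff, Sym2.eq_swap] at h'
      exact Or.inr (Or.inr h')
  · -- v,w share an edge s(v,w); use (p,q,r) = (v,w,u)
    have hwin : w ∈ s(v, yv) := h ▸ (by simp : w ∈ s(w, yw))
    have heq : s(v, yv) = s(v, w) := (Sym2.mem_and_mem_iff hvw).mp ⟨by simp, hwin⟩
    have hS' : S = {v, w, u} := by rw [hSuvw]; ext x; simp; tauto
    have := core htree hSv hvw huv.symm huw.symm hS' hn2 (heq ▸ hEv) hEu (by simp)
    intro e he'
    rcases this he' with h' | h' | h'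
    · exact Or.inr (Or.inr h')
    · rw [Sym2.eq_swap] at h'
      exact Or.inl h'
    · rw [Set.mem_singleton_iff, Sym2.eq_swap] at h'
      exact Or.inr (Or.inl h')

end ThreeConnAux

theorem lambda_three_upper_bound_clique_case {V : Type*} [Fintype V]
    (G : SimpleGraph V) (n ℓ : ℕ) (hn : Fintype.card V = n) (h3 : 3 ≤ n)
    (hl : 1 ≤ ℓ) (hG : G.Connected) (S : Set V) (hS : S.ncard = 3)
    (hclique : ∀ u ∈ S, ∀ v ∈ S, u ≠ v → G.Adj u v)
    (hcnt : 3 * ℓ - 7 ≤ {e ∈ Gᶜ.edgeSet | ∃ v ∈ e, v ∈ S}.ncard) :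
    G.genEdgeConn 3 ≤ n - ℓ := by
  classical
  obtain ⟨u, v, w, huv, huw, hvw, hSuvw⟩ := Set.ncard_eq_three.mp hS
  set A := {e ∈ G.edgeSet | ∃ x ∈ e, x ∈ S} with hAdef
  set A' := {e ∈ Gᶜ.edgeSet | ∃ x ∈ e, x ∈ S} with hA'def
  set Tri : Set (Sym2 V) := {s(u,v), s(u,w), s(v,w)} with hTridef
  set O : Set (Sym2 V) := (fun p : V × V => s(p.1, p.2)) '' (S ×ˢ Sᶜ) with hOdef
  have hTri3 : Tri.ncard ≤ 3 := by
    calc Tri.ncard ≤ ({s(u,w), s(v,w)} : Set (Sym2 V)).ncard + 1 :=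
          Set.ncard_insert_le _ _
      _ ≤ (({s(v,w)} : Set (Sym2 V)).ncard + 1) + 1 := by
          exact Nat.add_le_add_right (Set.ncard_insert_le _ _) 1
      _ ≤ 3 := by rw [Set.ncard_singleton]
  have hdisjAA : Disjoint A A' := by
    rw [Set.disjoint_left]
    rintro e ⟨he1, -⟩ ⟨he2, -⟩
    induction e using Sym2.ind with
    | _ a b =>
      rw [mem_edgeSet] at he1 he2
      exact he2.2 he1
  have hcompl : Sᶜ.ncard = n - 3 := by
    have := Set.ncard_add_ncard_compl S
    rw [hS, Nat.card_eq_fintype_card, hn] at this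
    omega
  have hOcard : O.ncard ≤ 3 * (n - 3) := by
    have h1 : O.ncard ≤ (S ×ˢ Sᶜ).ncard := Set.ncard_image_le (Set.toFinite _)
    have h2 : (S ×ˢ Sᶜ).ncard = S.ncard * Sᶜ.ncard := by
      rw [Set.ncard_eq_toFinset_card', Set.ncard_eq_toFinset_card',
        Set.ncard_eq_toFinset_card', Set.toFinset_prod, Finset.card_product]
    rw [h2, hS, hcompl] at h1
    exact h1
  have hcover : A ∪ A' ⊆ Tri ∪ O := by
    rintro e (⟨he, hx⟩ | ⟨he, hx⟩) <;>
    · obtain ⟨x, hxe, hxS⟩ := hx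
      obtain ⟨y, rfl⟩ := Sym2.mem_iff_exists.mp hxe
      rw [mem_edgeSet] at he
      have hxy : x ≠ y := he.ne
      by_cases hyS : y ∈ S
      · left
        rw [hSuvw] at hxS hyS
        rcases hxS with rfl | rfl | rfl <;> rcases hyS with rfl | rfl | rfl <;>
          first
            | exact absurd rfl hxy
            | simp [hTridef]
            | (rw [Sym2.eq_swap]; simp [hTridef])
      · exact Or.inr ⟨(x, y), ⟨hxS, hyS⟩, rfl⟩
  have hAA' : A.ncard + A'.ncard ≤ 3 + 3 * (n - 3) := by
    rw [← Set.ncard_union_eq hdisjAA (Set.toFinite _) (Set.toFinite _)]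
    calc (A ∪ A').ncard ≤ (Tri ∪ O).ncard :=
          Set.ncard_le_ncard hcover (Set.toFinite _)
      _ ≤ Tri.ncard + O.ncard := Set.ncard_union_le _ _
      _ ≤ 3 + 3 * (n - 3) := Nat.add_le_add hTri3 hOcard
  have main : G.steinerLambda S ≤ n - ℓ := by
    rw [SimpleGraph.steinerLambda]
    refine csSup_le ?_ ?_
    · exact ⟨0, Fin.elim0, fun i => i.elim0, fun i j _ => i.elim0⟩
    rintro t ⟨T, hSt, hDisj⟩
    set F : Fin t → Set (Sym2 V) := fun i => {e ∈ (T i).edgeSet | ∃ x ∈ e, x ∈ S}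
      with hFdef
    have hdich : ∀ i, 2 ≤ (F i).ncard ∧ (3 ≤ (F i).ncard ∨ F i ⊆ Tri) :=
      fun i => ThreeConnAux.tree_dichotomy (hSt i).2 (hSt i).1 huv huw hvw hSuvw
    have hFdisj : ∀ i j, i ≠ j → Disjoint (F i) (F j) := fun i j hij =>
      Disjoint.mono (Set.sep_subset _ _) (Set.sep_subset _ _) (hDisj i j hij)
    set Ft : Fin t → Finset (Sym2 V) := fun i => (Set.toFinite (F i)).toFinset
      with hFtdef
    have hFtcard : ∀ i, (Ft i).card = (F i).ncard := fun i =>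
      (Set.ncard_eq_toFinset_card _ _).symm
    have hsum : ∑ i, (Ft i).card = (Finset.univ.biUnion Ft).card := by
      refine (Finset.card_biUnion ?_).symm
      intro i _ j _ hij
      rw [Function.onFun, Finset.disjoint_left]
      intro e he1 he2
      rw [hFtdef, Set.Finite.mem_toFinset] at he1 he2
      exact (Set.disjoint_left.mp (hFdisj i j hij)) he1 he2
    have hsumA : ∑ i, (Ft i).card ≤ A.ncard := by
      rw [hsum, Set.ncard_eq_toFinset_card A (Set.toFinite _)]
      apply Finset.card_le_card
      intro e he
      rw [Finset.mem_biUnion] at he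
      obtain ⟨i, -, hi⟩ := he
      rw [hFtdef, Set.Finite.mem_toFinset] at hi
      rw [Set.Finite.mem_toFinset]
      exact ⟨(T i).edgeSet_subset hi.1, hi.2⟩
    have hlb : 3 * t ≤ (∑ i, (Ft i).card) + 1 := by
      by_cases hex : ∃ i0, (Ft i0).card < 3
      · obtain ⟨i0, hi0⟩ := hex
        have h2 : 2 ≤ (Ft i0).card := by rw [hFtcard]; exact (hdich i0).1
        have hTi0 : F i0 ⊆ Tri := by
          rcases (hdich i0).2 with h | h
          · rw [← hFtcard] at h; omega
          · exact h
        have hrest : ∀ j ∈ Finset.univ.erase i0, 3 ≤ (Ft j).card := by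
          intro j hj
          rw [Finset.mem_erase] at hj
          rcases (hdich j).2 with h | h
          · rw [hFtcard]; exact h
          · exfalso
            have hd := hFdisj j i0 hj.1
            have hun : (F j ∪ F i0).ncard = (F j).ncard + (F i0).ncard :=
              Set.ncard_union_eq hd (Set.toFinite _) (Set.toFinite _)
            have hsubT : F j ∪ F i0 ⊆ Tri := Set.union_subset h hTi0
            have := Set.ncard_le_ncard hsubT (Set.toFinite _)
            rw [hun] at this
            have hj2 := (hdich j).1
            have hi2 := (hdich i0).1
            omega
        have hsplit : ∑ i, (Ft i).card
            = (Ft i0).card + ∑ j ∈ Finset.univ.erase i0, (Ft j).card :=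
          (Finset.add_sum_erase _ _ (Finset.mem_univ i0)).symm
        have hge : (Finset.univ.erase i0).card • 3
            ≤ ∑ j ∈ Finset.univ.erase i0, (Ft j).card :=
          Finset.card_nsmul_le_sum _ _ _ hrest
        rw [Finset.card_erase_of_mem (Finset.mem_univ i0), Finset.card_univ,
          Fintype.card_fin, smul_eq_mul] at hge
        have ht1 : 1 ≤ t := Nat.pos_of_ne_zero (by rintro rfl; exact i0.elim0)
        omega
      · push_neg at hex
        have hge : (Finset.univ : Finset (Fin t)).card • 3 ≤ ∑ i, (Ft i).card :=
          Finset.card_nsmul_le_sum _ _ _ fun i _ => hex i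
        rw [Finset.card_univ, Fintype.card_fin, smul_eq_mul] at hge
        omega
    omega
  exact le_trans (Nat.sInf_le ⟨S, hS, rfl⟩) main
end

section
/- If λ_3(G) = n − 3 for a connected graph G of order n, then the complement of G has maximum degree at most 2, i.e., every component of the complement of G is a path or a cycle. -/
open SimpleGraph

/-- In a connected subgraph containing two distinct vertices, the first has a neighbor. -/
lemma Subgraph.exists_adj_of_connected {V : Type*} {G : SimpleGraph V}
    (T : G.Subgraph) (hconn : T.coe.Connected) {v u : V}
    (hv : v ∈ T.verts) (hu : u ∈ T.verts) (hne : v ≠ u) : ∃ w, T.Adj v w := by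
  obtain ⟨p⟩ := hconn ⟨v, hv⟩ ⟨u, hu⟩
  cases p with
  | nil => exact absurd rfl hne
  | cons hadj p => exact ⟨_, hadj⟩

theorem compl_maxDegree_le_two_of_lambda_three {V : Type*} [Fintype V]
    (G : SimpleGraph V) (n : ℕ) (hn : Fintype.card V = n) (hG : G.Connected)
    (h : G.genEdgeConn 3 = n - 3) :
    ∀ v : V, (Gᶜ.neighborSet v).ncard ≤ 2 := by
  classical
  intro v
  by_contra hv
  push_neg at hv
  -- `hv : 3 ≤ (Gᶜ.neighborSet v).ncard`
  have hfin : (Gᶜ.neighborSet v).Finite := Set.toFinite _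
  have hncard : (Gᶜ.neighborSet v).ncard = Gᶜ.degree v := by
    rw [Set.ncard_eq_toFinset_card' , ← card_neighborSet_eq_degree]
    simp
  -- n ≥ 4
  have hvnot : v ∉ Gᶜ.neighborSet v := fun hc => (Gᶜ.irrefl hc)
  have h4 : 4 ≤ n := by
    have : (insert v (Gᶜ.neighborSet v)).ncard ≤ n := by
      rw [← hn, ← Nat.card_eq_fintype_card, ← Set.ncard_univ V]
      exact Set.ncard_le_ncard (Set.subset_univ _) (Set.toFinite _)
    rw [Set.ncard_insert_of_notMem hvnot hfin] at this
    omega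
  -- degree bound
  have hdeg : G.degree v ≤ n - 4 := by
    have hc := degree_compl (G := G) (v := v)
    have hsum : G.degree v + Gᶜ.degree v ≤ n - 1 := by
      rw [hc, hn]
      have : G.degree v ≤ n - 1 := by
        rw [← hn]; exact Nat.le_sub_one_of_lt (G.degree_lt_card_verts v)
      omega
    omega
  -- build a 3-set containing v
  obtain ⟨a, ha, b, hb, hab⟩ : ∃ a ∈ Gᶜ.neighborSet v, ∃ b ∈ Gᶜ.neighborSet v, a ≠ b := by
    have : 1 < (Gᶜ.neighborSet v).ncard := by omega
    rw [Set.one_lt_ncard_iff hfin] at this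
    obtain ⟨a, b, ha, hb, hab⟩ := this
    exact ⟨a, ha, b, hb, hab⟩
  have hav : a ≠ v := fun hc => hvnot (hc ▸ ha)
  have hbv : b ≠ v := fun hc => hvnot (hc ▸ hb)
  set S : Set V := {v, a, b} with hS
  have hScard : S.ncard = 3 := by
    rw [hS, Set.ncard_insert_of_notMem (by simp [hav.symm, hbv.symm]) (Set.toFinite _),
      Set.ncard_insert_of_notMem (by simp [hab]) (Set.toFinite _), Set.ncard_singleton]
  -- steinerLambda S ≤ degree v
  have hlam : G.steinerLambda S ≤ G.degree v := by
    apply csSup_le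
    · exact ⟨0, Fin.elim0, fun i => i.elim0, fun i => i.elim0⟩
    rintro m ⟨T, hT, hdisj⟩
    -- for each i, T i has an edge at v
    have hW : ∀ i : Fin m, ∃ w, (T i).Adj v w := by
      intro i
      obtain ⟨hsub, htree⟩ := hT i
      refine Subgraph.exists_adj_of_connected (T i) htree.isConnected
        (hsub (by simp [hS])) (hsub (by simp [hS])) hav.symm
    choose w hw using hW
    have hinj : Function.Injective w := by
      intro i j hij
      by_contra hne
      have h1 : s(v, w i) ∈ (T i).edgeSet := hw i
      have h2 : s(v, w i) ∈ (T j).edgeSet := by rw [hij]; exact hw j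
      exact (Set.disjoint_left.mp (hdisj i j hne) h1) h2
    have : Function.Injective (fun i => (⟨w i, (T i).adj_sub (hw i)⟩ : G.neighborSet v)) := by
      intro i j hij
      exact hinj (congrArg Subtype.val hij)
    calc m = Fintype.card (Fin m) := (Fintype.card_fin m).symm
      _ ≤ Fintype.card (G.neighborSet v) := Fintype.card_le_of_injective _ this
      _ = G.degree v := G.card_neighborSet_eq_degree v
  have hge : G.genEdgeConn 3 ≤ G.steinerLambda S :=
    Nat.sInf_le ⟨S, hScard, rfl⟩
  omega
end

section
/- If G is a connected graph of order n with λ_3(G) = n − 3, then the complement of G has at most one connected component with more than 2 vertices. -/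
open SimpleGraph

private lemma first_step {α : Type*} {H : SimpleGraph α} {a b : α}
    (p : H.Walk a b) (hab : a ≠ b) (hp : p.IsPath) :
    ∃ (x : α) (_ : H.Adj a x) (q : H.Walk x b),
      q.IsPath ∧ a ∉ q.support ∧ p.support = a :: q.support := by
  cases p with
  | nil => exact absurd rfl hab
  | cons h q =>
    rw [SimpleGraph.Walk.cons_isPath_iff] at hp
    exact ⟨_, h, q, hp.1, hp.2, SimpleGraph.Walk.support_cons h q⟩

/-- In a connected component with more than two vertices, some vertex has two
distinct neighbours. -/
private lemma exists_two_nbrs {V : Type*} {H : SimpleGraph V}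
    (c : H.ConnectedComponent) (hc : 2 < c.supp.ncard) :
    ∃ u a b, u ∈ c.supp ∧ a ≠ b ∧ H.Adj u a ∧ H.Adj u b := by
  classical
  have hfin : c.supp.Finite := Set.finite_of_ncard_ne_zero (by omega)
  obtain ⟨x, hx, y, hy, z, hz, hxy, hxz, hyz⟩ := (Set.two_lt_ncard hfin).mp hc
  rw [ConnectedComponent.mem_supp_iff] at hx hy hz
  have hrxy : H.Reachable x y := ConnectedComponent.exact (hx.trans hy.symm)
  have hrxz : H.Reachable x z := ConnectedComponent.exact (hx.trans hz.symm)
  have hxsupp : x ∈ c.supp := by rw [ConnectedComponent.mem_supp_iff]; exact hx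
  obtain ⟨p0⟩ := hrxy
  obtain ⟨s, hxs, q, hq, hxq, _⟩ := first_step p0.toPath.1 hxy p0.toPath.2
  by_cases hsy : s = y
  · subst hsy
    obtain ⟨p1⟩ := hrxz
    obtain ⟨s', hxs', q', hq', hxq', _⟩ := first_step p1.toPath.1 hxz p1.toPath.2
    by_cases hs'z : s' = z
    · refine ⟨x, s, s', hxsupp, ?_, hxs, hxs'⟩
      rw [hs'z]; exact hyz
    · obtain ⟨t, hs't, r, _, _, hsupr⟩ := first_step q' hs'z hq'
      have htq' : t ∈ q'.support := by rw [hsupr]; exact List.mem_cons_of_mem _ r.start_mem_support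
      have hs'supp : s' ∈ c.supp := by
        rw [ConnectedComponent.mem_supp_iff, ConnectedComponent.sound hxs'.symm.reachable]
        exact hx
      exact ⟨s', x, t, hs'supp, fun hxt => hxq' (hxt ▸ htq'), hxs'.symm, hs't⟩
  · obtain ⟨t, hst, r, _, _, hsupr⟩ := first_step q hsy hq
    have htq : t ∈ q.support := by rw [hsupr]; exact List.mem_cons_of_mem _ r.start_mem_support
    have hssupp : s ∈ c.supp := by
      rw [ConnectedComponent.mem_supp_iff, ConnectedComponent.sound hxs.symm.reachable]
      exact hx
    exact ⟨s, x, t, hssupp, fun hxt => hxq (hxt ▸ htq), hxs.symm, hst⟩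

/-- A connected subgraph containing three distinct vertices `u, v, w` has two
distinct edges, each incident with `u` or `v`. -/
private lemma exists_two_edges {V : Type*} {G : SimpleGraph V} (T : G.Subgraph)
    (hT : T.coe.Connected) {u v w : V} (hu : u ∈ T.verts) (hv : v ∈ T.verts)
    (hw : w ∈ T.verts) (huv : u ≠ v) (huw : u ≠ w) (hvw : v ≠ w) :
    ∃ e1 e2 : Sym2 V, e1 ∈ T.edgeSet ∧ e2 ∈ T.edgeSet ∧ e1 ≠ e2 ∧
      (u ∈ e1 ∨ v ∈ e1) ∧ (u ∈ e2 ∨ v ∈ e2) := by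
  classical
  set u' : T.verts := ⟨u, hu⟩
  set v' : T.verts := ⟨v, hv⟩
  set w' : T.verts := ⟨w, hw⟩
  have hu'w' : u' ≠ w' := fun hh => huw (congrArg Subtype.val hh)
  have hv'w' : v' ≠ w' := fun hh => hvw (congrArg Subtype.val hh)
  obtain ⟨p0⟩ := hT.preconnected u' w'
  obtain ⟨x, hux, q, hq, huq, _⟩ := first_step p0.toPath.1 hu'w' p0.toPath.2
  obtain ⟨p1⟩ := hT.preconnected v' w'
  obtain ⟨y, hvy, _, _, _, _⟩ := first_step p1.toPath.1 hv'w' p1.toPath.2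
  have hadjux : T.Adj u x.1 := by
    have := hux; rw [Subgraph.coe_adj] at this; exact this
  have hadjvy : T.Adj v y.1 := by
    have := hvy; rw [Subgraph.coe_adj] at this; exact this
  by_cases hcase : (s(u, x.1) : Sym2 V) = s(v, y.1)
  · -- then x.1 = v
    have hxv : x.1 = v := by
      rw [Sym2.eq_iff] at hcase
      rcases hcase with ⟨h1, _⟩ | ⟨_, h2⟩
      · exact absurd h1 huv
      · exact h2
    have hxw' : x ≠ w' := fun hh => hvw (hxv ▸ congrArg Subtype.val hh)
    obtain ⟨t, hxt, r, _, _, hsupr⟩ := first_step q hxw' hq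
    have htq : t ∈ q.support := by rw [hsupr]; exact List.mem_cons_of_mem _ r.start_mem_support
    have htu : t.1 ≠ u := by
      intro hh
      exact huq (by rwa [show u' = t from Subtype.ext hh.symm])
    have hadjxt : T.Adj x.1 t.1 := by
      have := hxt; rw [Subgraph.coe_adj] at this; exact this
    refine ⟨s(u, v), s(v, t.1), ?_, ?_, ?_, Or.inl (Sym2.mem_mk_left _ _),
      Or.inr (Sym2.mem_mk_left _ _)⟩
    · exact Subgraph.mem_edgeSet.mpr (hxv ▸ hadjux)
    · exact Subgraph.mem_edgeSet.mpr (hxv ▸ hadjxt)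
    · intro hcase2
      rw [Sym2.eq_iff] at hcase2
      rcases hcase2 with ⟨h1, _⟩ | ⟨h1, _⟩
      · exact huv h1
      · exact htu h1.symm
  · exact ⟨s(u, x.1), s(v, y.1), Subgraph.mem_edgeSet.mpr hadjux,
      Subgraph.mem_edgeSet.mpr hadjvy, hcase, Or.inl (Sym2.mem_mk_left _ _),
      Or.inr (Sym2.mem_mk_left _ _)⟩

theorem compl_at_most_one_big_component {V : Type*} [Fintype V]
    (G : SimpleGraph V) (n : ℕ) (hn : Fintype.card V = n) (hG : G.Connected)
    (h : G.genEdgeConn 3 = n - 3) :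
    ∀ c d : Gᶜ.ConnectedComponent,
      2 < c.supp.ncard → 2 < d.supp.ncard → c = d := by
  classical
  intro c d hc hd
  by_contra hcd
  obtain ⟨u, a1, a2, hu, ha12, hua1, hua2⟩ := exists_two_nbrs c hc
  obtain ⟨v, b1, b2, hv, hb12, hvb1, hvb2⟩ := exists_two_nbrs d hd
  -- supports are disjoint
  have hdisj : ∀ x, x ∈ c.supp → x ∈ d.supp → False := by
    intro x h1 h2
    rw [ConnectedComponent.mem_supp_iff] at h1 h2
    exact hcd (h1 ▸ h2 ▸ rfl)
  have memc : ∀ x y, x ∈ c.supp → Gᶜ.Adj x y → y ∈ c.supp := by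
    intro x y hx hxy
    rw [ConnectedComponent.mem_supp_iff] at hx ⊢
    rw [ConnectedComponent.sound hxy.symm.reachable]; exact hx
  have memd : ∀ x y, x ∈ d.supp → Gᶜ.Adj x y → y ∈ d.supp := by
    intro x y hx hxy
    rw [ConnectedComponent.mem_supp_iff] at hx ⊢
    rw [ConnectedComponent.sound hxy.symm.reachable]; exact hx
  have ha1c : a1 ∈ c.supp := memc u a1 hu hua1
  have ha2c : a2 ∈ c.supp := memc u a2 hu hua2
  have hb1d : b1 ∈ d.supp := memd v b1 hv hvb1
  have hb2d : b2 ∈ d.supp := memd v b2 hv hvb2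
  have huv : u ≠ v := fun hh => hdisj u hu (hh ▸ hv)
  have hub1 : u ≠ b1 := fun hh => hdisj u hu (hh ▸ hb1d)
  have hub2 : u ≠ b2 := fun hh => hdisj u hu (hh ▸ hb2d)
  have hvb1' : v ≠ b1 := hvb1.ne
  have hvb2' : v ≠ b2 := hvb2.ne
  have hua1' : u ≠ a1 := hua1.ne
  have hua2' : u ≠ a2 := hua2.ne
  -- n ≥ 6
  have hn6 : 6 ≤ n := by
    have hdj : Disjoint c.supp d.supp := Set.disjoint_left.mpr
      (fun x h1 h2 => hdisj x h1 h2)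
    have h1 : (c.supp ∪ d.supp).ncard = c.supp.ncard + d.supp.ncard :=
      Set.ncard_union_eq hdj (Set.toFinite _) (Set.toFinite _)
    have h2 : (c.supp ∪ d.supp).ncard ≤ (Set.univ : Set V).ncard :=
      Set.ncard_le_ncard (Set.subset_univ _) (Set.toFinite _)
    rw [Set.ncard_univ, Nat.card_eq_fintype_card, hn] at h2
    omega
  -- the chosen 3-set
  set S : Set V := {u, v, b1} with hS
  have hS3 : S.ncard = 3 := by
    rw [hS, Set.ncard_insert_of_notMem (by simp [huv, hub1]) (Set.toFinite _),
      Set.ncard_insert_of_notMem (by simp [hvb1']) (Set.toFinite _),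
      Set.ncard_singleton]
  -- every number of edge-disjoint S-Steiner trees is at most n - 4
  have key : ∀ m ∈ {m | ∃ T : Fin m → G.Subgraph, (∀ i, G.IsSteinerTree S (T i)) ∧
      ∀ i j, i ≠ j → Disjoint (T i).edgeSet (T j).edgeSet}, m ≤ n - 4 := by
    rintro m ⟨T, hT, hTdisj⟩
    -- the incident-edge finsets
    set F : Fin m → Finset (Sym2 V) := fun i =>
      (Set.toFinite ((T i).edgeSet ∩ {e | u ∈ e ∨ v ∈ e})).toFinset with hF
    have hFmem : ∀ i e, e ∈ F i ↔ e ∈ (T i).edgeSet ∧ (u ∈ e ∨ v ∈ e) := by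
      intro i e; rw [hF]; exact (Set.Finite.mem_toFinset _).trans Iff.rfl
    have hF2 : ∀ i, 2 ≤ (F i).card := by
      intro i
      obtain ⟨hSsub, htree⟩ := hT i
      have hu' : u ∈ (T i).verts := hSsub (by simp [hS])
      have hv' : v ∈ (T i).verts := hSsub (by simp [hS])
      have hw' : b1 ∈ (T i).verts := hSsub (by simp [hS])
      obtain ⟨e1, e2, he1, he2, hne, hi1, hi2⟩ :=
        exists_two_edges (T i) htree.isConnected hu' hv' hw' huv hub1 hvb1'
      have hsub : ({e1, e2} : Finset (Sym2 V)) ⊆ F i := by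
        intro e he
        rcases Finset.mem_insert.mp he with rfl | he
        · exact (hFmem i e).mpr ⟨he1, hi1⟩
        · rw [Finset.mem_singleton] at he; subst he
          exact (hFmem i e).mpr ⟨he2, hi2⟩
      calc 2 = ({e1, e2} : Finset (Sym2 V)).card := (Finset.card_pair hne).symm
        _ ≤ (F i).card := Finset.card_le_card hsub
    -- incident edges of G
    set E' : Finset (Sym2 V) :=
      (Set.toFinite {e | e ∈ G.edgeSet ∧ (u ∈ e ∨ v ∈ e)}).toFinset with hE'
    have hE'mem : ∀ e, e ∈ E' ↔ e ∈ G.edgeSet ∧ (u ∈ e ∨ v ∈ e) := by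
      intro e; rw [hE']; exact (Set.Finite.mem_toFinset _).trans Iff.rfl
    -- union bound
    have hdisjF : ∀ i ∈ (Finset.univ : Finset (Fin m)), ∀ j ∈ Finset.univ,
        i ≠ j → Disjoint (F i) (F j) := by
      intro i _ j _ hij
      rw [Finset.disjoint_left]
      intro e hei hej
      exact Set.disjoint_left.mp (hTdisj i j hij) ((hFmem i e).mp hei).1
        ((hFmem j e).mp hej).1
    have hsum : 2 * m ≤ (Finset.univ.biUnion F).card := by
      rw [Finset.card_biUnion hdisjF]
      calc 2 * m = ∑ _i : Fin m, 2 := by simp [mul_comm]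
        _ ≤ ∑ i, (F i).card := Finset.sum_le_sum (fun i _ => hF2 i)
    have hUsub : Finset.univ.biUnion F ⊆ E' := by
      intro e he
      obtain ⟨i, _, hei⟩ := Finset.mem_biUnion.mp he
      obtain ⟨h1, h2⟩ := (hFmem i e).mp hei
      exact (hE'mem e).mpr ⟨Subgraph.edgeSet_subset (T i) h1, h2⟩
    -- bound on E' via an injection
    set A : Finset V := Finset.univ \ {u, a1, a2} with hA
    set B : Finset V := Finset.univ \ {u, v, b1, b2} with hB
    have hcardA : A.card = n - 3 := by
      rw [hA, Finset.card_sdiff_of_subset (Finset.subset_univ _), Finset.card_univ, hn]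
      congr 1
      rw [Finset.card_insert_of_notMem (by simp [hua1', hua2']),
        Finset.card_insert_of_notMem (by simp [ha12]), Finset.card_singleton]
    have hcardB : B.card = n - 4 := by
      rw [hB, Finset.card_sdiff_of_subset (Finset.subset_univ _), Finset.card_univ, hn]
      congr 1
      rw [Finset.card_insert_of_notMem (by simp [huv, hub1, hub2]),
        Finset.card_insert_of_notMem (by simp [hvb1', hvb2']),
        Finset.card_insert_of_notMem (by simp [hb12]), Finset.card_singleton]
    set f : Sym2 V → V ⊕ V := fun e =>
      if h : u ∈ e then Sum.inl (Sym2.Mem.other h)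
      else if h : v ∈ e then Sum.inr (Sym2.Mem.other h) else Sum.inr v with hf
    have hmaps : ∀ e ∈ E', f e ∈ A.disjSum B := by
      intro e he
      obtain ⟨heG, hei⟩ := (hE'mem e).mp he
      by_cases h1 : u ∈ e
      · rw [hf]; simp only [dif_pos h1]
        rw [Finset.inl_mem_disjSum, hA, Finset.mem_sdiff]
        have hadj : G.Adj u (Sym2.Mem.other h1) := by
          rw [← SimpleGraph.mem_edgeSet, Sym2.other_spec h1]; exact heG
        refine ⟨Finset.mem_univ _, ?_⟩
        simp only [Finset.mem_insert, Finset.mem_singleton]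
        push_neg
        refine ⟨hadj.ne', ?_, ?_⟩
        · intro hh; exact (((compl_adj G u a1).mp hua1).2) (hh ▸ hadj)
        · intro hh; exact (((compl_adj G u a2).mp hua2).2) (hh ▸ hadj)
      · have h2 : v ∈ e := hei.resolve_left h1
        rw [hf]; simp only [dif_neg h1, dif_pos h2]
        rw [Finset.inr_mem_disjSum, hB, Finset.mem_sdiff]
        have hadj : G.Adj v (Sym2.Mem.other h2) := by
          rw [← SimpleGraph.mem_edgeSet, Sym2.other_spec h2]; exact heG
        refine ⟨Finset.mem_univ _, ?_⟩
        simp only [Finset.mem_insert, Finset.mem_singleton]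
        push_neg
        refine ⟨?_, hadj.ne', ?_, ?_⟩
        · intro hh; exact h1 (hh ▸ Sym2.other_mem h2)
        · intro hh; exact (((compl_adj G v b1).mp hvb1).2) (hh ▸ hadj)
        · intro hh; exact (((compl_adj G v b2).mp hvb2).2) (hh ▸ hadj)
    have hinj : Set.InjOn f (E' : Set (Sym2 V)) := by
      intro e he e' he' heq
      rw [Finset.mem_coe] at he he'
      obtain ⟨_, hei⟩ := (hE'mem e).mp he
      obtain ⟨_, hei'⟩ := (hE'mem e').mp he'
      by_cases h1 : u ∈ e <;> by_cases h2 : u ∈ e'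
      · rw [hf] at heq; simp only [dif_pos h1, dif_pos h2, Sum.inl.injEq] at heq
        rw [← Sym2.other_spec h1, ← Sym2.other_spec h2, heq]
      · have h2' : v ∈ e' := hei'.resolve_left h2
        rw [hf] at heq
        simp only [dif_pos h1, dif_neg h2, dif_pos h2'] at heq
        exact absurd heq (by simp)
      · have h1' : v ∈ e := hei.resolve_left h1
        rw [hf] at heq
        simp only [dif_neg h1, dif_pos h1', dif_pos h2] at heq
        exact absurd heq (by simp)
      · have h1' : v ∈ e := hei.resolve_left h1
        have h2' : v ∈ e' := hei'.resolve_left h2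
        rw [hf] at heq
        simp only [dif_neg h1, dif_pos h1', dif_neg h2, dif_pos h2',
          Sum.inr.injEq] at heq
        rw [← Sym2.other_spec h1', ← Sym2.other_spec h2', heq]
    have hE'card : E'.card ≤ (n - 3) + (n - 4) := by
      calc E'.card ≤ (A.disjSum B).card := Finset.card_le_card_of_injOn f hmaps hinj
        _ = A.card + B.card := Finset.card_disjSum _ _
        _ = (n - 3) + (n - 4) := by rw [hcardA, hcardB]
    have := Finset.card_le_card hUsub
    omega
  -- conclude
  have hne : (0 : ℕ) ∈ {m | ∃ T : Fin m → G.Subgraph,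
      (∀ i, G.IsSteinerTree S (T i)) ∧
      ∀ i j, i ≠ j → Disjoint (T i).edgeSet (T j).edgeSet} :=
    ⟨fun i => i.elim0, fun i => i.elim0, fun i => i.elim0⟩
  have hlam : G.steinerLambda S ≤ n - 4 :=
    csSup_le ⟨0, hne⟩ key
  have hgen : G.genEdgeConn 3 ≤ n - 4 :=
    le_trans (Nat.sInf_le ⟨S, hS3, rfl⟩) hlam
  omega
end

section
/- If G is a connected graph of order n with λ_3(G) = n − 3, then no component of the complement of G is a path on 5 or more vertices, nor a cycle on 4 or more vertices. -/
open SimpleGraph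

section Aux

variable {V : Type*}

lemma aux_exists_nbr {G : SimpleGraph V} {T : G.Subgraph} (hc : T.coe.Connected)
    {u v : V} (hu : u ∈ T.verts) (hv : v ∈ T.verts) (huv : u ≠ v) :
    ∃ w, T.Adj u w := by
  obtain ⟨p⟩ := hc ⟨u, hu⟩ ⟨v, hv⟩
  cases p with
  | nil => exact absurd rfl huv
  | cons h q => exact ⟨_, (Subgraph.coe_adj _ _ _).mp h⟩

lemma aux_closed {G : SimpleGraph V} {T : G.Subgraph} {s : Set V}
    (hs : ∀ ⦃x y : V⦄, x ∈ s → T.Adj x y → y ∈ s) :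
    ∀ {u v : T.verts}, T.coe.Reachable u v → ↑u ∈ s → ↑v ∈ s := by
  intro u v h hu
  obtain ⟨p⟩ := h
  induction p with
  | nil => exact hu
  | cons h q ih => exact ih (hs hu ((Subgraph.coe_adj _ _ _).mp h))

lemma aux_supp_closed {H : SimpleGraph V} {c : H.ConnectedComponent} {v w : V}
    (hv : v ∈ c.supp) (h : H.Adj v w) : w ∈ c.supp := by
  rw [ConnectedComponent.mem_supp_iff] at hv ⊢
  rw [← hv]
  exact ConnectedComponent.sound h.symm.reachable

lemma aux_nbhd_iso {H : SimpleGraph V} {c : H.ConnectedComponent} {W : Type*}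
    {K : SimpleGraph W} (φ : H.induce c.supp ≃g K) (p : W) :
    H.neighborSet ↑(φ.symm p) = (fun q => (↑(φ.symm q) : V)) '' K.neighborSet p := by
  ext w
  constructor
  · intro hw
    have hws : w ∈ c.supp := aux_supp_closed (φ.symm p).2 hw
    refine ⟨φ ⟨w, hws⟩, ?_, by simp⟩
    have : (H.induce c.supp).Adj (φ.symm p) ⟨w, hws⟩ := hw
    have := φ.map_adj_iff.mpr this
    rwa [RelIso.apply_symm_apply] at this
  · rintro ⟨q, hq, rfl⟩
    exact φ.symm.map_adj_iff.mpr hq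

lemma aux_adj_iso {H : SimpleGraph V} {c : H.ConnectedComponent} {W : Type*}
    {K : SimpleGraph W} (φ : H.induce c.supp ≃g K) (p q : W) :
    H.Adj ↑(φ.symm p) ↑(φ.symm q) ↔ K.Adj p q := by
  have : (H.induce c.supp).Adj (φ.symm p) (φ.symm q) ↔ K.Adj p q := φ.symm.map_adj_iff
  exact this

lemma aux_deg_pair [Fintype V] (G : SimpleGraph V) [DecidableRel G.Adj] {v x y : V}
    (hxy : x ≠ y) (h : Gᶜ.neighborSet v = {x, y}) :
    G.degree v = Fintype.card V - 3 := by
  classical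
  have hvx : v ≠ x := by
    intro hv; subst hv
    have : v ∈ Gᶜ.neighborSet v := by rw [h]; exact Or.inl rfl
    exact Gᶜ.loopless.irrefl v this
  have hvy : v ≠ y := by
    intro hv; subst hv
    have : v ∈ Gᶜ.neighborSet v := by rw [h]; exact Or.inr rfl
    exact Gᶜ.loopless.irrefl v this
  have hset := neighborSet_compl Gᶜ v
  rw [compl_compl, h] at hset
  have hdeg : G.degree v = (G.neighborSet v).ncard := by
    rw [← card_neighborSet_eq_degree, ← Nat.card_eq_fintype_card, Nat.card_coe_set_eq]
  have hcompl : (({x, y} : Set V)ᶜ).ncard = Fintype.card V - 2 := by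
    have := Set.ncard_add_ncard_compl ({x, y} : Set V) (Set.toFinite _) (Set.toFinite _)
    rw [Set.ncard_pair hxy, Nat.card_eq_fintype_card] at this
    omega
  have hvmem : v ∈ (({x, y} : Set V)ᶜ) := by simp [hvx, hvy]
  have hcard2 : 2 ≤ Fintype.card V := by
    have := Set.ncard_le_ncard (Set.subset_univ ({x, y} : Set V)) (Set.toFinite _)
    rwa [Set.ncard_pair hxy, Set.ncard_univ, Nat.card_eq_fintype_card] at this
  rw [hdeg, hset, Set.ncard_diff_singleton_of_mem hvmem, hcompl]
  omega

lemma aux_key [Fintype V] (G : SimpleGraph V) [DecidableRel G.Adj] (a b c : V)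
    (hnab : a ≠ b) (hnbc : b ≠ c) (hnac : a ≠ c)
    (hac : G.Adj a c)
    (hda : G.degree a = Fintype.card V - 3)
    (hdb : G.degree b = Fintype.card V - 3)
    (hdc : G.degree c = Fintype.card V - 3) :
    G.steinerLambda {a, b, c} ≤ Fintype.card V - 4 := by
  classical
  unfold SimpleGraph.steinerLambda
  refine csSup_le ⟨0, ?_⟩ ?_
  · exact ⟨fun i => i.elim0, fun i => i.elim0, fun i j _ => i.elim0⟩
  rintro N ⟨T, hT, hdisj⟩
  have hmem : ∀ i, a ∈ (T i).verts ∧ b ∈ (T i).verts ∧ c ∈ (T i).verts := fun i =>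
    ⟨(hT i).1 (by simp), (hT i).1 (by simp), (hT i).1 (by simp)⟩
  have hconn : ∀ i, (T i).coe.Connected := fun i => (hT i).2.isConnected
  set D : V → Fin N → Finset V := fun v i => (Set.toFinite ((T i).neighborSet v)).toFinset with hD
  have hmemD : ∀ v i w, w ∈ D v i ↔ (T i).Adj v w := by
    intro v i w; simp [hD, Set.Finite.mem_toFinset]
  have hDsub : ∀ v i, D v i ⊆ G.neighborFinset v := by
    intro v i w hw
    rw [mem_neighborFinset]
    exact ((hmemD v i w).mp hw).adj_sub
  have hDdisj : ∀ v, ∀ i j : Fin N, i ≠ j → Disjoint (D v i) (D v j) := by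
    intro v i j hij
    rw [Finset.disjoint_left]
    intro w hwi hwj
    have h1 : s(v, w) ∈ (T i).edgeSet := Subgraph.mem_edgeSet.mpr ((hmemD v i w).mp hwi)
    have h2 : s(v, w) ∈ (T j).edgeSet := Subgraph.mem_edgeSet.mpr ((hmemD v j w).mp hwj)
    exact Set.disjoint_left.mp (hdisj i j hij) h1 h2
  have hsum : ∀ v, (∑ i, (D v i).card) ≤ G.degree v := by
    intro v
    rw [← Finset.card_biUnion (fun i _ j _ hij => hDdisj v i j hij)]
    exact Finset.card_le_card (Finset.biUnion_subset.mpr fun i _ => hDsub v i)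
  have hne_a : ∀ i, (D a i).Nonempty := by
    intro i
    obtain ⟨w, hw⟩ := aux_exists_nbr (hconn i) (hmem i).1 (hmem i).2.1 hnab
    exact ⟨w, (hmemD a i w).mpr hw⟩
  have hne_b : ∀ i, (D b i).Nonempty := by
    intro i
    obtain ⟨w, hw⟩ := aux_exists_nbr (hconn i) (hmem i).2.1 (hmem i).1 hnab.symm
    exact ⟨w, (hmemD b i w).mpr hw⟩
  have hne_c : ∀ i, (D c i).Nonempty := by
    intro i
    obtain ⟨w, hw⟩ := aux_exists_nbr (hconn i) (hmem i).2.2 (hmem i).1 (Ne.symm hnac)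
    exact ⟨w, (hmemD c i w).mpr hw⟩
  by_cases he : ∃ j, s(a, c) ∈ (T j).edgeSet
  · obtain ⟨j, hj⟩ := he
    have hjadj : (T j).Adj a c := Subgraph.mem_edgeSet.mp hj
    have h4 : 4 ≤ (D a j).card + (D b j).card + (D c j).card := by
      by_contra h3
      push_neg at h3
      have ha1 : (D a j).card = 1 := by
        have := (hne_a j).card_pos; have := (hne_b j).card_pos; have := (hne_c j).card_pos
        omega
      have hc1 : (D c j).card = 1 := by
        have := (hne_a j).card_pos; have := (hne_b j).card_pos; have := (hne_c j).card_pos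
        omega
      have hDa : ∀ w ∈ D a j, w = c := by
        intro w hw
        exact Finset.card_le_one.mp ha1.le w hw c ((hmemD a j c).mpr hjadj)
      have hDc : ∀ w ∈ D c j, w = a := by
        intro w hw
        exact Finset.card_le_one.mp hc1.le w hw a ((hmemD c j a).mpr hjadj.symm)
      have hclosed : ∀ ⦃x y : V⦄, x ∈ ({a, c} : Set V) → (T j).Adj x y → y ∈ ({a, c} : Set V) := by
        intro x y hx hxy
        rcases hx with h | h
        · rw [h] at hxy
          exact Or.inr (hDa y ((hmemD a j y).mpr hxy))
        · rw [Set.mem_singleton_iff] at h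
          rw [h] at hxy
          exact Or.inl (hDc y ((hmemD c j y).mpr hxy))
      have hreach : (T j).coe.Reachable ⟨a, (hmem j).1⟩ ⟨b, (hmem j).2.1⟩ := (hconn j) _ _
      have : b ∈ ({a, c} : Set V) := aux_closed hclosed hreach (Or.inl rfl)
      rcases this with h | h
      · exact hnab h.symm
      · exact hnbc (Set.mem_singleton_iff.mp h)
    have hlow : 4 + (N - 1) * 3 ≤ ∑ i, ((D a i).card + (D b i).card + (D c i).card) := by
      rw [← Finset.add_sum_erase _ _ (Finset.mem_univ j)]
      have : (Finset.univ.erase j).card • 3 ≤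
          ∑ i ∈ Finset.univ.erase j, ((D a i).card + (D b i).card + (D c i).card) := by
        apply Finset.card_nsmul_le_sum
        intro i _
        have := (hne_a i).card_pos; have := (hne_b i).card_pos; have := (hne_c i).card_pos
        omega
      rw [smul_eq_mul] at this
      rw [Finset.card_erase_of_mem (Finset.mem_univ j), Finset.card_univ, Fintype.card_fin] at this
      omega
    have hhigh : ∑ i, ((D a i).card + (D b i).card + (D c i).card)
        ≤ G.degree a + G.degree b + G.degree c := by
      rw [Finset.sum_add_distrib, Finset.sum_add_distrib]
      exact Nat.add_le_add (Nat.add_le_add (hsum a) (hsum b)) (hsum c)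
    have hN1 : 1 ≤ N := j.pos
    rw [hda, hdb, hdc] at hhigh
    omega
  · push_neg at he
    have hgin : ∀ i : Fin N, (hne_a i).choose ∈ (G.neighborFinset a).erase c := by
      intro i
      have hmemi := (hne_a i).choose_spec
      rw [Finset.mem_erase]
      refine ⟨?_, hDsub a i hmemi⟩
      intro hcc
      apply he i
      rw [Subgraph.mem_edgeSet]
      exact (hmemD a i _).mp (hcc ▸ hmemi)
    have hinj : Set.InjOn (fun i : Fin N => (hne_a i).choose)
        ↑(Finset.univ : Finset (Fin N)) := by
      intro i _ j _ hij
      by_contra hne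
      simp only at hij
      have h2 := (hne_a j).choose_spec
      rw [← hij] at h2
      exact Finset.disjoint_left.mp (hDdisj a i j hne) ((hne_a i).choose_spec) h2
    have := Finset.card_le_card_of_injOn _ (fun i _ => hgin i) hinj
    rw [Finset.card_univ, Fintype.card_fin,
      Finset.card_erase_of_mem (by rwa [mem_neighborFinset]), ← degree] at this
    omega

lemma aux_path_nbhd {m : ℕ} (k : ℕ) (h1 : 1 ≤ k) (h2 : k + 1 < m) :
    (pathGraph m).neighborSet ⟨k, by omega⟩ =
      {⟨k - 1, by omega⟩, ⟨k + 1, h2⟩} := by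
  ext q
  obtain ⟨qv, hq⟩ := q
  simp only [mem_neighborSet, pathGraph_adj, Set.mem_insert_iff, Set.mem_singleton_iff,
    Fin.mk.injEq]
  omega

lemma aux_contra {V : Type*} [Fintype V] (G : SimpleGraph V) [DecidableRel G.Adj]
    (h : G.genEdgeConn 3 = Fintype.card V - 3)
    (a b c : V) (hnab : a ≠ b) (hnbc : b ≠ c) (hnac : a ≠ c)
    (hcab : Gᶜ.Adj a b) (hcbc : Gᶜ.Adj b c) (hncac : ¬Gᶜ.Adj a c)
    (hda : G.degree a = Fintype.card V - 3)
    (hdb : G.degree b = Fintype.card V - 3)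
    (hdc : G.degree c = Fintype.card V - 3) : False := by
  have hac : G.Adj a c := by
    by_contra hx
    exact hncac ((G.compl_adj a c).mpr ⟨hnac, hx⟩)
  have hn4 : 4 ≤ Fintype.card V := by
    have hpos : 0 < G.degree a := (degree_pos_iff_exists_adj G a).mpr ⟨c, hac⟩
    have hlt := G.degree_lt_card_verts a
    omega
  have hkey := aux_key G a b c hnab hnbc hnac hac hda hdb hdc
  have h3 : ({a, b, c} : Set V).ncard = 3 :=
    Set.ncard_eq_three.mpr ⟨a, b, c, hnab, hnac, hnbc, rfl⟩
  have hle : G.genEdgeConn 3 ≤ G.steinerLambda {a, b, c} :=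
    Nat.sInf_le ⟨{a, b, c}, h3, rfl⟩
  rw [h] at hle
  omega

end Aux

theorem compl_no_long_path_or_cycle_component {V : Type*} [Fintype V]
    (G : SimpleGraph V) (n : ℕ) (hn : Fintype.card V = n) (hG : G.Connected)
    (h : G.genEdgeConn 3 = n - 3) :
    ∀ c : Gᶜ.ConnectedComponent, ∀ m : ℕ,
      (5 ≤ m → IsEmpty (Gᶜ.induce c.supp ≃g SimpleGraph.pathGraph m)) ∧
      (4 ≤ m → IsEmpty (Gᶜ.induce c.supp ≃g SimpleGraph.cycleGraph m)) := by
  classical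
  subst hn
  intro c m
  constructor
  · -- path case
    intro hm
    constructor
    intro φ
    set ι : Fin m → V := fun q => ↑(φ.symm q) with hι
    have hinj : ∀ p q : Fin m, p ≠ q → ι p ≠ ι q := by
      intro p q hpq hcon
      exact hpq (φ.symm.injective (Subtype.val_injective hcon))
    have hnb : ∀ (k : ℕ) (h1 : 1 ≤ k) (h2 : k + 1 < m),
        Gᶜ.neighborSet (ι ⟨k, by omega⟩) =
          {ι ⟨k - 1, by omega⟩, ι ⟨k + 1, h2⟩} := by
      intro k h1 h2
      rw [hι]
      rw [aux_nbhd_iso φ, aux_path_nbhd k h1 h2, Set.image_pair]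
    have hd : ∀ (k : ℕ) (h1 : 1 ≤ k) (h2 : k + 1 < m),
        G.degree (ι ⟨k, by omega⟩) = Fintype.card V - 3 := by
      intro k h1 h2
      refine aux_deg_pair G ?_ (hnb k h1 h2)
      exact hinj _ _ (by simp only [ne_eq, Fin.mk.injEq]; omega)
    have hadj : ∀ p q : Fin m, Gᶜ.Adj (ι p) (ι q) ↔ (pathGraph m).Adj p q := fun p q =>
      aux_adj_iso φ p q
    exact aux_contra G h (ι ⟨1, by omega⟩) (ι ⟨2, by omega⟩) (ι ⟨3, by omega⟩)
      (hinj _ _ (by simp [Fin.ext_iff])) (hinj _ _ (by simp [Fin.ext_iff]))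
      (hinj _ _ (by simp [Fin.ext_iff]))
      ((hadj _ _).mpr (by simp [pathGraph_adj]))
      ((hadj _ _).mpr (by simp [pathGraph_adj]))
      (fun hx => by simpa [pathGraph_adj] using (hadj _ _).mp hx)
      (hd 1 (by omega) (by omega)) (hd 2 (by omega) (by omega)) (hd 3 (by omega) (by omega))
  · -- cycle case
    intro hm
    constructor
    intro φ
    obtain ⟨k, rfl⟩ : ∃ k, m = k + 2 := ⟨m - 2, by omega⟩
    have hk : 2 ≤ k := by omega
    set ι : Fin (k + 2) → V := fun q => ↑(φ.symm q) with hι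
    have hinj : ∀ p q : Fin (k + 2), p ≠ q → ι p ≠ ι q := by
      intro p q hpq hcon
      exact hpq (φ.symm.injective (Subtype.val_injective hcon))
    have hv2 : ((2 : Fin (k+2)) : ℕ) = 2 := by
      open Fin.NatCast in rw [show (2 : Fin (k+2)) = ((2:ℕ) : Fin (k+2)) by norm_cast]
      exact Fin.val_cast_of_lt (by omega)
    have hv3 : ((3 : Fin (k+2)) : ℕ) = 3 := by
      open Fin.NatCast in rw [show (3 : Fin (k+2)) = ((3:ℕ) : Fin (k+2)) by norm_cast]
      exact Fin.val_cast_of_lt (by omega)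
    have hv1 : ((1 : Fin (k+2)) : ℕ) = 1 := by
      rw [Fin.val_one']
      exact Nat.mod_eq_of_lt (by omega)
    have h20 : (2 : Fin (k+2)) ≠ 0 := by
      intro hx
      rw [Fin.ext_iff, hv2] at hx
      simp at hx
    have hsubne : ∀ v : Fin (k + 2), v - 1 ≠ v + 1 := by
      intro v hx
      have h2 : (2 : Fin (k+2)) = 0 := by open Fin.CommRing in linear_combination -hx
      exact h20 h2
    have hnb : ∀ v : Fin (k + 2),
        Gᶜ.neighborSet (ι v) = {ι (v - 1), ι (v + 1)} := by
      intro v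
      rw [hι]
      rw [aux_nbhd_iso φ, cycleGraph_neighborSet, Set.image_pair]
    have hd : ∀ v : Fin (k + 2), G.degree (ι v) = Fintype.card V - 3 := by
      intro v
      exact aux_deg_pair G (hinj _ _ (hsubne v)) (hnb v)
    have hadj : ∀ p q : Fin (k + 2), Gᶜ.Adj (ι p) (ι q) ↔ (cycleGraph (k+2)).Adj p q :=
      fun p q => aux_adj_iso φ p q
    have h01 : (0 : Fin (k+2)) ≠ 1 := by
      intro hx; rw [Fin.ext_iff, hv1] at hx; simp at hx
    have h12 : (1 : Fin (k+2)) ≠ 2 := by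
      intro hx; rw [Fin.ext_iff, hv1, hv2] at hx; omega
    have h02 : (0 : Fin (k+2)) ≠ 2 := Ne.symm h20
    refine aux_contra G h (ι 0) (ι 1) (ι 2) (hinj _ _ h01) (hinj _ _ h12) (hinj _ _ h02)
      ((hadj _ _).mpr ?_) ((hadj _ _).mpr ?_) (fun hx => ?_)
      (hd 0) (hd 1) (hd 2)
    · exact cycleGraph_adj.mpr (Or.inr (by open Fin.CommRing in ring))
    · exact cycleGraph_adj.mpr (Or.inr (by open Fin.CommRing in ring))
    · rcases cycleGraph_adj.mp ((hadj _ _).mp hx) with hy | hy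
      · have : (0 : Fin (k+2)) = 1 + 2 := by open Fin.CommRing in linear_combination hy
        rw [Fin.ext_iff] at this
        rw [show (1 : Fin (k+2)) + 2 = 3 by open Fin.CommRing in ring] at this
        rw [hv3] at this
        simp at this
      · rw [sub_zero] at hy
        rw [Fin.ext_iff, hv2, hv1] at hy
        omega
end
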